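/- arXiv:2509.22953 — 7 statements merged into one kernel-verified Lean document; each statement's English description precedes it below -/
import Mathlib

section
/- Under consistency, unconfoundedness, and strong overlap, for every a ∈ {0,1} the conditional distribution (regular conditional probability) of the potential outcome Y_a given X under P agrees, for (P ∘ X⁻¹)-almost every x, with the conditional distribution of the observed outcome Y given X computed under the conditional probability measure P(· | A = a). In symbols: condDistrib(Y_a ∣ X; P)(x) = condDistrib(Y ∣ X; P(· | A = a))(x) for (P ∘ X⁻¹)-a.e. x. -/
open MeasureTheory ProbabilityTheory

/-- Under consistency, unconfoundedness and strong overlap, for every `a ∈ {0,1}`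
(encoded as `a : Bool`), the conditional distribution of the potential outcome `Y_a` given `X`
under `P` agrees, for `(P ∘ X⁻¹)`-almost every `x`, with the conditional distribution of the
observed outcome `Y` given `X` computed under the conditional measure `P(· | A = a)`:
`condDistrib (Y_a ∣ X; P) (x) = condDistrib (Y ∣ X; P(· | A = a)) (x)`. -/
theorem cdpo_identification
    {Ω : Type*} [MeasurableSpace Ω] [StandardBorelSpace Ω] [Nonempty Ω]
    (P : Measure Ω) [IsProbabilityMeasure P]
    {𝒳 : Type*} [MeasurableSpace 𝒳] [StandardBorelSpace 𝒳]
    {𝒴 : Type*} [MeasurableSpace 𝒴] [StandardBorelSpace 𝒴] [Nonempty 𝒴]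
    (X : Ω → 𝒳) (hX : Measurable X)
    (A : Ω → Bool) (hA : Measurable A)
    (Y₀ Y₁ : Ω → 𝒴) (hY₀ : Measurable Y₀) (hY₁ : Measurable Y₁)
    -- observed outcome (consistency)
    (Y : Ω → 𝒴) (hYdef : ∀ ω, Y ω = if A ω then Y₁ ω else Y₀ ω)
    -- propensity scores: σ(X)-measurable versions of E[𝟙{A = a} | σ(X)]
    (π : Bool → 𝒳 → ℝ) (hπmeas : ∀ a, Measurable (π a))
    (hπver : ∀ a : Bool,
      P[fun ω => (if A ω = a then (1 : ℝ) else 0) | MeasurableSpace.comap X inferInstance]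
        =ᵐ[P] fun ω => π a (X ω))
    -- strong overlap
    (ε : ℝ) (hε : 0 < ε)
    (hoverlap : ∀ a : Bool, ∀ᵐ ω ∂P, ε ≤ π a (X ω) ∧ π a (X ω) ≤ 1 - ε)
    -- unconfoundedness: (Y₀, Y₁) ⫫ A ∣ σ(X)
    (hunconf : CondIndepFun (MeasurableSpace.comap X inferInstance) hX.comap_le
      (fun ω => (Y₀ ω, Y₁ ω)) A P) :
    ∀ a : Bool,
      ∀ᵐ x ∂(P.map X),
        condDistrib (fun ω => if a then Y₁ ω else Y₀ ω) X P x
          = condDistrib Y X (P[|{ω | A ω = a}]) x := by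
  intro a
  have hm := hX.comap_le
  set Ya : Ω → 𝒴 := fun ω => if a then Y₁ ω else Y₀ ω with hYa_def
  have hYa : Measurable Ya := by
    cases a
    · simpa [hYa_def] using hY₀
    · simpa [hYa_def] using hY₁
  have hY : Measurable Y := by
    have hYeq : Y = fun ω => if A ω then Y₁ ω else Y₀ ω := funext hYdef
    rw [hYeq]
    exact Measurable.ite (hA (measurableSet_singleton true)) hY₁ hY₀
  set s : Set Ω := {ω | A ω = a} with hs_def
  have hsm : MeasurableSet s := hA (measurableSet_singleton a)
  -- indicator of s as a real function
  set ind : Ω → ℝ := s.indicator (fun _ => (1 : ℝ)) with hind_def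
  have hind_int : Integrable ind P := (integrable_const 1).indicator hsm
  have hif_eq : (fun ω => (if A ω = a then (1 : ℝ) else 0)) = ind := by
    funext ω
    by_cases h : A ω = a <;> simp [hind_def, Set.indicator_apply, hs_def, h]
  have hπ : P[ind | MeasurableSpace.comap X inferInstance] =ᵐ[P] fun ω => π a (X ω) := by
    have := hπver a
    rwa [hif_eq] at this
  -- integrability of π a ∘ X
  have hint_pi : Integrable (fun ω => π a (X ω)) P := by
    refine (integrable_const (1 : ℝ)).mono' ((hπmeas a).comp hX).aestronglyMeasurable ?_
    filter_upwards [hoverlap a] with ω h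
    rw [Real.norm_eq_abs, abs_le]
    constructor <;> nlinarith [h.1, h.2, hε.le]
  -- ∫ π a (X ω) dP = (P s).toReal
  have hPs_eq : ∫ ω, π a (X ω) ∂P = (P s).toReal := by
    rw [← integral_congr_ae hπ, integral_condExp hm, hind_def,
      integral_indicator_const (1 : ℝ) hsm, smul_eq_mul, mul_one, measureReal_def]
  have hε_le : ε ≤ (P s).toReal := by
    rw [← hPs_eq]
    have hb : (fun _ : Ω => ε) ≤ᵐ[P] fun ω => π a (X ω) := by
      filter_upwards [hoverlap a] with ω h using h.1
    have := integral_mono_ae (integrable_const ε) hint_pi hb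
    simpa using this
  have hs_ne : P s ≠ 0 := by
    intro h0
    rw [h0] at hε_le
    simp at hε_le
    linarith
  set μ : Measure Ω := P[|s] with hμ_def
  haveI : IsProbabilityMeasure μ := cond_isProbabilityMeasure hs_ne
  set κ := condDistrib Ya X P with hκ_def
  -- s ∩ (anything) with Y can be replaced by Ya
  have hYs : ∀ ω ∈ s, Y ω = Ya ω := by
    intro ω hω
    have hω' : A ω = a := hω
    rw [hYdef ω, hω']
  -- key real-valued identity
  have key : ∀ S : Set 𝒳, MeasurableSet S → ∀ T : Set 𝒴, MeasurableSet T →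
      (P (X ⁻¹' S ∩ s ∩ Ya ⁻¹' T)).toReal
        = ∫ ω in X ⁻¹' S ∩ s, (κ (X ω) T).toReal ∂P := by
    intro S hS T hT
    have hXS : MeasurableSet (X ⁻¹' S) := hX hS
    have hXSm : MeasurableSet[MeasurableSpace.comap X inferInstance] (X ⁻¹' S) := ⟨S, hS, rfl⟩
    set g : Ω → ℝ := fun ω => (κ (X ω) T).toReal with hg_def
    have hg_meas : Measurable g := ((Kernel.measurable_coe κ hT).comp hX).ennreal_toReal
    have hg_m : Measurable[MeasurableSpace.comap X inferInstance] g := by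
      have : Measurable[MeasurableSpace.comap X inferInstance] fun ω => κ (X ω) T := measurable_condDistrib hT
      exact this.ennreal_toReal
    have hg_bd : ∀ ω, ‖g ω‖ ≤ 1 := by
      intro ω
      rw [hg_def, Real.norm_eq_abs, abs_of_nonneg ENNReal.toReal_nonneg]
      exact ENNReal.toReal_le_of_le_ofReal one_pos.le (by simpa using prob_le_one)
    have hind_bd : ∀ (u : Set Ω) (ω : Ω), ‖u.indicator g ω‖ ≤ 1 := by
      intro u ω
      by_cases h : ω ∈ u
      · rw [Set.indicator_of_mem h]; exact hg_bd ω
      · rw [Set.indicator_of_notMem h]; simp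
    set G : Ω → ℝ := (X ⁻¹' S).indicator g with hG_def
    have hG_sm : StronglyMeasurable[MeasurableSpace.comap X inferInstance] G :=
      (hg_m.indicator hXSm).stronglyMeasurable
    have hG_int : Integrable G P :=
      (integrable_const (1 : ℝ)).mono'
        ((hg_meas.indicator hXS).aestronglyMeasurable)
        (Filter.Eventually.of_forall (hind_bd _))
    have hGind_int : Integrable (G * ind) P := by
      refine (integrable_const (1 : ℝ)).mono'
        ((hg_meas.indicator hXS).mul
          ((measurable_const.indicator hsm : Measurable ind))).aestronglyMeasurable ?_
      refine Filter.Eventually.of_forall fun ω => ?_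
      have h1 : ‖G ω‖ ≤ 1 := hind_bd _ ω
      have h2 : ‖ind ω‖ ≤ 1 := by
        by_cases h : ω ∈ s <;>
          simp [hind_def, Set.indicator_apply, h]
      calc ‖(G * ind) ω‖ = ‖G ω‖ * ‖ind ω‖ := norm_mul _ _
        _ ≤ 1 * 1 := mul_le_mul h1 h2 (norm_nonneg _) zero_le_one
        _ = 1 := mul_one 1
    -- pull-out property
    have hpull : P[G * ind | MeasurableSpace.comap X inferInstance] =ᵐ[P] G * P[ind | MeasurableSpace.comap X inferInstance] :=
      condExp_mul_of_stronglyMeasurable_left hG_sm hGind_int hind_int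
    -- conditional distribution as conditional expectation
    have h_cd : (fun ω => (κ (X ω) T).toReal) =ᵐ[P] (P⟦Ya ⁻¹' T | MeasurableSpace.comap X inferInstance⟧) :=
      condDistrib_ae_eq_condExp hX hYa hT
    -- conditional independence
    have hT' : MeasurableSet {p : 𝒴 × 𝒴 | (if a then p.2 else p.1) ∈ T} := by
      cases a
      · exact measurable_fst hT
      · exact measurable_snd hT
    have h_ci := (condIndepFun_iff_condExp_inter_preimage_eq_mul
        (hY₀.prodMk hY₁) hA).mp hunconf
        {p : 𝒴 × 𝒴 | (if a then p.2 else p.1) ∈ T} {a} hT'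
        (measurableSet_singleton a)
    have hpre1 : (fun ω => (Y₀ ω, Y₁ ω)) ⁻¹' {p : 𝒴 × 𝒴 | (if a then p.2 else p.1) ∈ T}
        = Ya ⁻¹' T := by
      ext ω; simp [hYa_def, Set.mem_preimage]
    have hpre2 : A ⁻¹' ({a} : Set Bool) = s := by
      ext ω; simp [hs_def]
    rw [hpre1, hpre2] at h_ci
    -- chain of equalities
    have step0 : ∫ ω in X ⁻¹' S ∩ s, g ω ∂P = ∫ ω, (G * ind) ω ∂P := by
      rw [← integral_indicator (hXS.inter hsm)]
      refine integral_congr_ae (Filter.Eventually.of_forall fun ω => ?_)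
      by_cases h1 : ω ∈ X ⁻¹' S <;> by_cases h2 : ω ∈ s <;>
        simp [hG_def, hind_def, Set.indicator_apply, h1, h2]
    have step1 : ∫ ω, (G * ind) ω ∂P = ∫ ω, (G * P[ind | MeasurableSpace.comap X inferInstance]) ω ∂P := by
      rw [← integral_condExp hm (f := G * ind)]
      exact integral_congr_ae hpull
    have step2 : (G * P[ind | MeasurableSpace.comap X inferInstance]) =ᵐ[P]
        (X ⁻¹' S).indicator (fun ω => (P⟦Ya ⁻¹' T | MeasurableSpace.comap X inferInstance⟧) ω * (P⟦s | MeasurableSpace.comap X inferInstance⟧) ω) := by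
      filter_upwards [h_cd] with ω hω
      by_cases h : ω ∈ X ⁻¹' S
      · simp only [Pi.mul_apply, hG_def, Set.indicator_of_mem h, hg_def, hind_def, hω]
      · simp [hG_def, Set.indicator_of_notMem h]
    have step3 : (X ⁻¹' S).indicator (fun ω => (P⟦Ya ⁻¹' T | MeasurableSpace.comap X inferInstance⟧) ω * (P⟦s | MeasurableSpace.comap X inferInstance⟧) ω)
        =ᵐ[P] (X ⁻¹' S).indicator (P⟦Ya ⁻¹' T ∩ s | MeasurableSpace.comap X inferInstance⟧) := by
      filter_upwards [h_ci] with ω hω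
      by_cases h : ω ∈ X ⁻¹' S
      · rw [Set.indicator_of_mem h, Set.indicator_of_mem h, hω]
      · rw [Set.indicator_of_notMem h, Set.indicator_of_notMem h]
    have hint2 : Integrable ((Ya ⁻¹' T ∩ s).indicator fun _ => (1 : ℝ)) P :=
      (integrable_const 1).indicator ((hYa hT).inter hsm)
    have step4 : ∫ ω, (X ⁻¹' S).indicator (P⟦Ya ⁻¹' T ∩ s | MeasurableSpace.comap X inferInstance⟧) ω ∂P
        = (P (X ⁻¹' S ∩ s ∩ Ya ⁻¹' T)).toReal := by
      rw [integral_indicator hXS, setIntegral_condExp hm hint2 hXSm,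
        ← integral_indicator hXS, Set.indicator_indicator,
        integral_indicator_const (1 : ℝ) (hXS.inter ((hYa hT).inter hsm)),
        smul_eq_mul, mul_one, measureReal_def]
      congr 2
      ext ω
      simp only [Set.mem_inter_iff, Set.mem_preimage]
      tauto
    calc (P (X ⁻¹' S ∩ s ∩ Ya ⁻¹' T)).toReal
        = ∫ ω, (X ⁻¹' S).indicator (P⟦Ya ⁻¹' T ∩ s | MeasurableSpace.comap X inferInstance⟧) ω ∂P := step4.symm
      _ = ∫ ω, (X ⁻¹' S).indicator (fun ω => (P⟦Ya ⁻¹' T | MeasurableSpace.comap X inferInstance⟧) ω * (P⟦s | MeasurableSpace.comap X inferInstance⟧) ω) ω ∂P :=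
          (integral_congr_ae step3).symm
      _ = ∫ ω, (G * P[ind | MeasurableSpace.comap X inferInstance]) ω ∂P := (integral_congr_ae step2).symm
      _ = ∫ ω, (G * ind) ω ∂P := step1.symm
      _ = ∫ ω in X ⁻¹' S ∩ s, g ω ∂P := step0.symm
  -- ENNReal version of key
  have keyE : ∀ S : Set 𝒳, MeasurableSet S → ∀ T : Set 𝒴, MeasurableSet T →
      P (X ⁻¹' S ∩ s ∩ Ya ⁻¹' T) = ∫⁻ ω in X ⁻¹' S ∩ s, κ (X ω) T ∂P := by
    intro S hS T hT
    have hmeas : Measurable (fun ω => κ (X ω) T) := (Kernel.measurable_coe κ hT).comp hX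
    have h_lt : ∀ᵐ ω ∂(P.restrict (X ⁻¹' S ∩ s)), κ (X ω) T < ⊤ :=
      Filter.Eventually.of_forall fun ω => measure_lt_top _ _
    have h_toReal : ∫ ω in X ⁻¹' S ∩ s, (κ (X ω) T).toReal ∂P
        = (∫⁻ ω in X ⁻¹' S ∩ s, κ (X ω) T ∂P).toReal :=
      integral_toReal hmeas.aemeasurable h_lt
    have h_fin : ∫⁻ ω in X ⁻¹' S ∩ s, κ (X ω) T ∂P ≠ ⊤ := by
      refine ne_of_lt (lt_of_le_of_lt ?_ (measure_lt_top P Set.univ))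
      calc ∫⁻ ω in X ⁻¹' S ∩ s, κ (X ω) T ∂P
          ≤ ∫⁻ _ in X ⁻¹' S ∩ s, 1 ∂P := lintegral_mono fun ω => prob_le_one
        _ = P (X ⁻¹' S ∩ s) := by simp
        _ ≤ P Set.univ := measure_mono (Set.subset_univ _)
    have := key S hS T hT
    rw [h_toReal] at this
    have := congrArg ENNReal.ofReal this
    rwa [ENNReal.ofReal_toReal (measure_ne_top P _), ENNReal.ofReal_toReal h_fin] at this
  -- the compProd identity
  have hcomp : μ.map (fun ω => (X ω, Y ω)) = μ.map X ⊗ₘ κ := by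
    refine ext_of_generate_finite _ generateFrom_prod.symm isPiSystem_prod ?_ ?_
    · rintro u ⟨S, hS, T, hT, rfl⟩
      simp only [Set.mem_setOf_eq] at hS hT
      rw [Measure.map_apply (hX.prodMk hY) (hS.prod hT),
        Measure.compProd_apply_prod hS hT,
        setLIntegral_map hS (Kernel.measurable_coe κ hT) hX]
      have hpre : (fun ω => (X ω, Y ω)) ⁻¹' (S ×ˢ T) = X ⁻¹' S ∩ Y ⁻¹' T := by
        ext ω; simp [Set.mem_prod]
      rw [hpre]
      -- both sides under μ = (P s)⁻¹ • P.restrict s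
      have hL : μ (X ⁻¹' S ∩ Y ⁻¹' T) = (P s)⁻¹ * P (X ⁻¹' S ∩ s ∩ Ya ⁻¹' T) := by
        rw [hμ_def, cond_apply hsm]
        congr 1
        have : s ∩ (X ⁻¹' S ∩ Y ⁻¹' T) = X ⁻¹' S ∩ s ∩ Ya ⁻¹' T := by
          ext ω
          simp only [Set.mem_inter_iff, Set.mem_preimage]
          constructor
          · rintro ⟨h1, h2, h3⟩
            exact ⟨⟨h2, h1⟩, by rwa [← hYs ω h1]⟩
          · rintro ⟨⟨h2, h1⟩, h3⟩
            exact ⟨h1, h2, by rwa [hYs ω h1]⟩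
        rw [this]
      have hR : ∫⁻ ω in X ⁻¹' S, κ (X ω) T ∂μ
          = (P s)⁻¹ * ∫⁻ ω in X ⁻¹' S ∩ s, κ (X ω) T ∂P := by
        rw [hμ_def]
        show ∫⁻ ω in X ⁻¹' S, κ (X ω) T ∂((P s)⁻¹ • P.restrict s) = _
        rw [Measure.restrict_smul, lintegral_smul_measure,
          Measure.restrict_restrict (hX hS), smul_eq_mul]
      rw [hL, hR, keyE S hS T hT]
    · rw [Measure.map_apply (hX.prodMk hY) MeasurableSet.univ,
        Measure.compProd_apply_univ, Measure.map_apply hX MeasurableSet.univ]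
      simp
  -- uniqueness of conditional kernels
  have hmain : ∀ᵐ x ∂μ.map X, κ x = condDistrib Y X μ x :=
    (condDistrib_ae_eq_of_measure_eq_compProd X hY.aemeasurable hcomp).mono fun x hx => hx.symm
  -- absolute continuity: P.map X ≪ μ.map X
  have hAC : P.map X ≪ μ.map X := by
    refine Measure.AbsolutelyContinuous.mk fun S hS h0 => ?_
    rw [Measure.map_apply hX hS] at h0 ⊢
    rw [hμ_def, cond_apply hsm] at h0
    have hinv_ne : (P s)⁻¹ ≠ 0 := ENNReal.inv_ne_zero.mpr (measure_ne_top P s)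
    have hPs0 : P (s ∩ X ⁻¹' S) = 0 := by
      rcases mul_eq_zero.mp h0 with h | h
      · exact absurd h hinv_ne
      · exact h
    -- use overlap: ε * P(X⁻¹S) ≤ ∫_{X⁻¹S} π = (P (s ∩ X⁻¹S)).toReal = 0
    have hXS : MeasurableSet (X ⁻¹' S) := hX hS
    have hXSm : MeasurableSet[MeasurableSpace.comap X inferInstance] (X ⁻¹' S) := ⟨S, hS, rfl⟩
    have h1 : ∫ ω in X ⁻¹' S, π a (X ω) ∂P = (P (s ∩ X ⁻¹' S)).toReal := by
      rw [← setIntegral_congr_ae hXS (by filter_upwards [hπ] with ω h using fun _ => h),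
        setIntegral_condExp hm hind_int hXSm, hind_def,
        ← integral_indicator hXS, Set.indicator_indicator,
        integral_indicator_const (1 : ℝ) (hXS.inter hsm), smul_eq_mul, mul_one,
        Set.inter_comm, measureReal_def]
    have h2 : ε * (P (X ⁻¹' S)).toReal ≤ ∫ ω in X ⁻¹' S, π a (X ω) ∂P := by
      have hεint : ∫ _ω in X ⁻¹' S, ε ∂P = (P (X ⁻¹' S)).toReal * ε := by
        rw [setIntegral_const, smul_eq_mul, measureReal_def]
      rw [mul_comm, ← hεint]
      refine integral_mono_ae (integrable_const ε) hint_pi.integrableOn ?_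
      exact ae_restrict_of_ae (by filter_upwards [hoverlap a] with ω h using h.1)
    rw [h1, hPs0] at h2
    simp only [ENNReal.toReal_zero] at h2
    have h3 : (P (X ⁻¹' S)).toReal = 0 := by nlinarith [ENNReal.toReal_nonneg (a := P (X ⁻¹' S))]
    exact (ENNReal.toReal_eq_zero_iff _).mp h3 |>.resolve_right (measure_ne_top P _)
  have : ∀ᵐ x ∂P.map X, κ x = condDistrib Y X μ x := hAC.ae_le hmain
  filter_upwards [this] with x hx
  exact hx
end

section
/- Conditional bias of the pseudo-density: for every fixed y ∈ 𝒴, a version of the conditional expectation of ξ̃(X, A, y) given σ(X) is ξ(y | X) + ((π_a(X) − π̂(X))/π̂(X)) · (ξ(y | X) − ξ̂(y | X)); in particular the conditional bias E[ξ̃(X, A, y) | σ(X)] − ξ(y | X) equals the product ((π_a(X) − π̂(X))/π̂(X)) (ξ(y | X) − ξ̂(y | X)) of the two nuisance errors, P-almost surely. -/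
open MeasureTheory ProbabilityTheory

/-- Conditional bias of the pseudo-density: for every fixed `y ∈ 𝒴`, a version of
the conditional expectation of `ξ̃(X, A, y)` given σ(X) is
`ξ(y | X) + ((π_a(X) − π̂(X))/π̂(X)) · (ξ(y | X) − ξ̂(y | X))`; in particular the conditional
bias `E[ξ̃(X, A, y) | σ(X)] − ξ(y | X)` equals the product
`((π_a(X) − π̂(X))/π̂(X)) (ξ(y | X) − ξ̂(y | X))` of the two nuisance errors, P-a.s. -/
theorem gdr_pseudo_density_conditional_bias
    {Ω : Type*} [MeasurableSpace Ω]
    (P : Measure Ω) [IsProbabilityMeasure P]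
    {𝒳 : Type*} [MeasurableSpace 𝒳] [StandardBorelSpace 𝒳]
    {𝒴 : Type*} [MeasurableSpace 𝒴] [StandardBorelSpace 𝒴]
    (X : Ω → 𝒳) (hX : Measurable X)
    (A : Ω → Bool) (hA : Measurable A)
    (Y : Ω → 𝒴) (hY : Measurable Y)
    (a : Bool)
    -- propensity score: σ(X)-measurable version of E[𝟙{A = a} | σ(X)]
    (π : 𝒳 → ℝ) (hπmeas : Measurable π)
    (hπver : P[fun ω => (if A ω = a then (1 : ℝ) else 0) |
        MeasurableSpace.comap X inferInstance] =ᵐ[P] fun ω => π (X ω))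
    -- strong overlap
    (ε : ℝ) (hε : 0 < ε)
    (hoverlap : ∀ᵐ ω ∂P, ε ≤ π (X ω) ∧ π (X ω) ≤ 1 - ε)
    -- density setup
    (ν : Measure 𝒴) [IsFiniteMeasure ν]
    (c C : ℝ) (hc : 0 < c) (hcC : c ≤ C)
    (ξ : 𝒴 × 𝒳 → ℝ) (hξmeas : Measurable ξ)
    (hξmem : ∀ q, ξ q ∈ Set.Icc c C)
    (hξnorm : ∀ x, ∫ y, ξ (y, x) ∂ν = 1)
    -- nuisance estimates
    (πh : 𝒳 → ℝ) (hπhmeas : Measurable πh) (hπhmem : ∀ x, πh x ∈ Set.Icc ε 1)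
    (ξh : 𝒴 × 𝒳 → ℝ) (hξhmeas : Measurable ξh)
    (hξhmem : ∀ q, ξh q ∈ Set.Icc c C)
    (hξhnorm : ∀ x, ∫ y, ξh (y, x) ∂ν = 1) :
    ∀ y : 𝒴,
      (P[fun ω => ((if A ω = a then (1 : ℝ) else 0) / πh (X ω))
            * (ξ (y, X ω) - ξh (y, X ω)) + ξh (y, X ω) |
          MeasurableSpace.comap X inferInstance]
        =ᵐ[P] fun ω =>
          ξ (y, X ω) + ((π (X ω) - πh (X ω)) / πh (X ω)) * (ξ (y, X ω) - ξh (y, X ω)))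
      ∧
      ((fun ω =>
          (P[fun ω' => ((if A ω' = a then (1 : ℝ) else 0) / πh (X ω'))
              * (ξ (y, X ω') - ξh (y, X ω')) + ξh (y, X ω') |
            MeasurableSpace.comap X inferInstance]) ω - ξ (y, X ω))
        =ᵐ[P] fun ω =>
          ((π (X ω) - πh (X ω)) / πh (X ω)) * (ξ (y, X ω) - ξh (y, X ω))) := by
  intro y
  have hm : MeasurableSpace.comap X inferInstance ≤ ‹MeasurableSpace Ω› := hX.comap_le
  have hXm : Measurable[MeasurableSpace.comap X inferInstance] X := fun s hs => ⟨s, hs, rfl⟩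
  set f : Ω → ℝ := fun ω => if A ω = a then (1 : ℝ) else 0 with hf_def
  set g : Ω → ℝ := fun ω => (ξ (y, X ω) - ξh (y, X ω)) / πh (X ω) with hg_def
  set h : Ω → ℝ := fun ω => ξh (y, X ω) with hh_def
  have hεph : ∀ x, 0 < πh x := fun x => lt_of_lt_of_le hε (hπhmem x).1
  -- measurability
  have hf_meas : Measurable f := by
    apply Measurable.ite (by exact hA (MeasurableSet.singleton a)) <;> exact measurable_const
  have hg_measX : Measurable fun x : 𝒳 => (ξ (y, x) - ξh (y, x)) / πh x := by
    exact ((hξmeas.comp (measurable_prodMk_left)).sub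
      (hξhmeas.comp (measurable_prodMk_left))).div hπhmeas
  have hg_sm : StronglyMeasurable[MeasurableSpace.comap X inferInstance] g :=
    (hg_measX.comp hXm).stronglyMeasurable
  have hh_sm : StronglyMeasurable[MeasurableSpace.comap X inferInstance] h :=
    ((hξhmeas.comp (measurable_prodMk_left)).comp hXm).stronglyMeasurable
  -- integrability of bounded measurable functions
  have intb : ∀ (u : Ω → ℝ), Measurable u → ∀ B : ℝ, (∀ ω, |u ω| ≤ B) → Integrable u P := by
    intro u hu B hB
    exact ⟨hu.aestronglyMeasurable,
      HasFiniteIntegral.of_bounded (C := B) (ae_of_all _ fun ω => by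
        simpa [Real.norm_eq_abs] using hB ω)⟩
  have hΔbd : ∀ ω, |ξ (y, X ω) - ξh (y, X ω)| ≤ C - c := by
    intro ω
    have h1 := hξmem (y, X ω); have h2 := hξhmem (y, X ω)
    rw [abs_sub_le_iff]
    constructor <;> [skip; skip] <;> simp only [Set.mem_Icc] at h1 h2 <;> linarith
  have hgbd : ∀ ω, |g ω| ≤ (C - c) / ε := by
    intro ω
    rw [hg_def, abs_div, abs_of_pos (hεph (X ω))]
    exact div_le_div₀ (by linarith) (hΔbd ω) hε (hπhmem (X ω)).1
  have hfbd : ∀ ω, |f ω| ≤ 1 := by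
    intro ω; rw [hf_def]; dsimp only; split <;> simp
  have int_f : Integrable f P := intb f hf_meas 1 hfbd
  have int_g : Integrable g P := intb g (hg_measX.comp hX) _ hgbd
  have int_h : Integrable h P :=
    intb h ((hξhmeas.comp (measurable_prodMk_left)).comp hX) C fun ω => by
      have h2 := hξhmem (y, X ω); simp only [Set.mem_Icc] at h2
      rw [hh_def, abs_le]; constructor <;> dsimp only <;> linarith
  have int_gf : Integrable (g * f) P := by
    refine intb _ ((hg_measX.comp hX).mul hf_meas) ((C - c) / ε) fun ω => ?_
    calc |(g * f) ω| = |g ω| * |f ω| := abs_mul _ _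
      _ ≤ ((C - c) / ε) * 1 := mul_le_mul (hgbd ω) (hfbd ω) (abs_nonneg _)
          (div_nonneg (by linarith) hε.le)
      _ = (C - c) / ε := mul_one _
  -- the pseudo-density rewritten
  have hrw : (fun ω => ((if A ω = a then (1 : ℝ) else 0) / πh (X ω))
      * (ξ (y, X ω) - ξh (y, X ω)) + ξh (y, X ω)) = (g * f + h) := by
    funext ω
    simp only [hf_def, hg_def, hh_def, Pi.add_apply, Pi.mul_apply]
    ring
  -- compute the conditional expectation
  have key : P[fun ω => ((if A ω = a then (1 : ℝ) else 0) / πh (X ω))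
        * (ξ (y, X ω) - ξh (y, X ω)) + ξh (y, X ω) | MeasurableSpace.comap X inferInstance]
      =ᵐ[P] fun ω => g ω * π (X ω) + h ω := by
    rw [hrw]
    refine (condExp_add int_gf int_h _).trans ?_
    have h1 : P[g * f | MeasurableSpace.comap X inferInstance]
        =ᵐ[P] g * P[f | MeasurableSpace.comap X inferInstance] :=
      condExp_mul_of_stronglyMeasurable_left hg_sm int_gf int_f
    have h2 : P[h | MeasurableSpace.comap X inferInstance] = h :=
      condExp_of_stronglyMeasurable hm hh_sm int_h
    filter_upwards [h1, hπver] with ω e1 e3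
    simp only [Pi.add_apply, Pi.mul_apply, h2] at *
    rw [e1, e3]
  have main : P[fun ω => ((if A ω = a then (1 : ℝ) else 0) / πh (X ω))
        * (ξ (y, X ω) - ξh (y, X ω)) + ξh (y, X ω) | MeasurableSpace.comap X inferInstance]
      =ᵐ[P] fun ω =>
        ξ (y, X ω) + ((π (X ω) - πh (X ω)) / πh (X ω)) * (ξ (y, X ω) - ξh (y, X ω)) := by
    refine key.trans (ae_of_all _ fun ω => ?_)
    have hne : πh (X ω) ≠ 0 := (hεph (X ω)).ne'
    simp only [hg_def, hh_def]
    field_simp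
    ring
  refine ⟨main, ?_⟩
  filter_upwards [main] with ω e
  rw [e]; ring
end

section
/- Second-order remainder identity: for every bounded measurable ℓ : 𝒴 × 𝒳 → ℝ, the difference between the doubly-robust risk and the target risk equals a product of nuisance errors: L_GDR(ℓ; π̂, ξ̂) − E[∫ ℓ(y, X) ξ(y | X) dν(y)] = E[((π_a(X) − π̂(X))/π̂(X)) · ∫ ℓ(y, X) (ξ(y | X) − ξ̂(y | X)) dν(y)]. -/
open MeasureTheory ProbabilityTheory

private lemma aux_meas_integral {𝒳 𝒴 : Type*} [MeasurableSpace 𝒳] [MeasurableSpace 𝒴]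
    (ν : Measure 𝒴) [SFinite ν] {F : 𝒴 × 𝒳 → ℝ} (hF : Measurable F) :
    Measurable fun x => ∫ y, F (y, x) ∂ν := by
  have h : Measurable fun p : 𝒳 × 𝒴 => F (p.2, p.1) :=
    hF.comp (measurable_snd.prodMk measurable_fst)
  exact h.stronglyMeasurable.integral_prod_right'.measurable

private lemma aux_bound_integral {𝒳 𝒴 : Type*} [MeasurableSpace 𝒴]
    (ν : Measure 𝒴) [IsFiniteMeasure ν] {F : 𝒴 × 𝒳 → ℝ} {M : ℝ}
    (hM : ∀ q, |F q| ≤ M) :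
    ∀ x : 𝒳, |∫ y, F (y, x) ∂ν| ≤ M * (ν Set.univ).toReal := fun x => by
  simpa [Real.norm_eq_abs, measureReal_def] using
    norm_integral_le_of_norm_le_const (μ := ν) (f := fun y => F (y, x)) (C := M)
      (ae_of_all _ fun y => by simpa [Real.norm_eq_abs] using hM (y, x))

private lemma aux_integrable {α : Type*} [MeasurableSpace α] {μ : Measure α}
    [IsFiniteMeasure μ] {f : α → ℝ} (hf : Measurable f) {M : ℝ}
    (hM : ∀ x, |f x| ≤ M) : Integrable f μ :=
  ⟨hf.aestronglyMeasurable,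
    HasFiniteIntegral.of_bounded (C := M) (ae_of_all _ fun x => by
      simpa [Real.norm_eq_abs] using hM x)⟩

/-- Second-order remainder identity: for every bounded measurable
`ℓ : 𝒴 × 𝒳 → ℝ`, the difference between the doubly-robust risk and the target risk equals a
product of nuisance errors:
`L_GDR(ℓ; π̂, ξ̂) − E[∫ ℓ(y, X) ξ(y | X) dν(y)]
   = E[((π_a(X) − π̂(X))/π̂(X)) · ∫ ℓ(y, X) (ξ(y | X) − ξ̂(y | X)) dν(y)]`. -/
theorem gdr_second_order_remainder
    {Ω : Type*} [MeasurableSpace Ω]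
    (P : Measure Ω) [IsProbabilityMeasure P]
    {𝒳 : Type*} [MeasurableSpace 𝒳] [StandardBorelSpace 𝒳]
    {𝒴 : Type*} [MeasurableSpace 𝒴] [StandardBorelSpace 𝒴]
    (X : Ω → 𝒳) (hX : Measurable X)
    (A : Ω → Bool) (hA : Measurable A)
    (Y : Ω → 𝒴) (hY : Measurable Y)
    (a : Bool)
    -- propensity score: σ(X)-measurable version of E[𝟙{A = a} | σ(X)]
    (π : 𝒳 → ℝ) (hπmeas : Measurable π)
    (hπver : P[fun ω => (if A ω = a then (1 : ℝ) else 0) |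
        MeasurableSpace.comap X inferInstance] =ᵐ[P] fun ω => π (X ω))
    -- strong overlap
    (ε : ℝ) (hε : 0 < ε)
    (hoverlap : ∀ᵐ ω ∂P, ε ≤ π (X ω) ∧ π (X ω) ≤ 1 - ε)
    -- density setup
    (ν : Measure 𝒴) [IsFiniteMeasure ν]
    (c C : ℝ) (hc : 0 < c) (hcC : c ≤ C)
    (ξ : 𝒴 × 𝒳 → ℝ) (hξmeas : Measurable ξ)
    (hξmem : ∀ q, ξ q ∈ Set.Icc c C)
    (hξnorm : ∀ x, ∫ y, ξ (y, x) ∂ν = 1)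
    -- ξ is the conditional outcome density
    (hξdens : ∀ f : 𝒴 × 𝒳 → ℝ, Measurable f → (∃ B : ℝ, ∀ q, |f q| ≤ B) →
      ∫ ω, (if A ω = a then (1 : ℝ) else 0) * f (Y ω, X ω) ∂P
        = ∫ ω, π (X ω) * ∫ y, f (y, X ω) * ξ (y, X ω) ∂ν ∂P)
    -- nuisance estimates
    (πh : 𝒳 → ℝ) (hπhmeas : Measurable πh) (hπhmem : ∀ x, πh x ∈ Set.Icc ε 1)
    (ξh : 𝒴 × 𝒳 → ℝ) (hξhmeas : Measurable ξh)
    (hξhmem : ∀ q, ξh q ∈ Set.Icc c C)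
    (hξhnorm : ∀ x, ∫ y, ξh (y, x) ∂ν = 1) :
    ∀ (ℓ : 𝒴 × 𝒳 → ℝ), Measurable ℓ → (∃ B : ℝ, ∀ q, |ℓ q| ≤ B) →
      (∫ ω, ((if A ω = a then (1 : ℝ) else 0) / πh (X ω)) * ℓ (Y ω, X ω)
          + (1 - (if A ω = a then (1 : ℝ) else 0) / πh (X ω))
            * ∫ y, ℓ (y, X ω) * ξh (y, X ω) ∂ν ∂P)
        - ∫ ω, ∫ y, ℓ (y, X ω) * ξ (y, X ω) ∂ν ∂P
      = ∫ ω, ((π (X ω) - πh (X ω)) / πh (X ω))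
          * ∫ y, ℓ (y, X ω) * (ξ (y, X ω) - ξh (y, X ω)) ∂ν ∂P := by
  intro ℓ hℓmeas hℓbdd
  obtain ⟨B0, hB0⟩ := hℓbdd
  set B : ℝ := max B0 0 with hBdef
  have hB : ∀ q, |ℓ q| ≤ B := fun q => (hB0 q).trans (le_max_left _ _)
  have hBpos : 0 ≤ B := le_max_right _ _
  have hCpos : 0 ≤ C := le_of_lt (lt_of_lt_of_le hc hcC)
  -- bounds on |ξ|, |ξh|
  have hξabs : ∀ q, |ξ q| ≤ C := fun q =>
    abs_le.2 ⟨le_trans (by linarith) (hξmem q).1, (hξmem q).2⟩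
  have hξhabs : ∀ q, |ξh q| ≤ C := fun q =>
    abs_le.2 ⟨le_trans (by linarith) (hξhmem q).1, (hξhmem q).2⟩
  -- the two conditional means
  set g : 𝒳 → ℝ := fun x => ∫ y, ℓ (y, x) * ξh (y, x) ∂ν with hgdef
  set h : 𝒳 → ℝ := fun x => ∫ y, ℓ (y, x) * ξ (y, x) ∂ν with hhdef
  have hℓξ : Measurable fun q : 𝒴 × 𝒳 => ℓ q * ξ q := hℓmeas.mul hξmeas
  have hℓξh : Measurable fun q : 𝒴 × 𝒳 => ℓ q * ξh q := hℓmeas.mul hξhmeas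
  have hℓξb : ∀ q : 𝒴 × 𝒳, |ℓ q * ξ q| ≤ B * C := fun q => by
    rw [abs_mul]; exact mul_le_mul (hB q) (hξabs q) (abs_nonneg _) hBpos
  have hℓξhb : ∀ q : 𝒴 × 𝒳, |ℓ q * ξh q| ≤ B * C := fun q => by
    rw [abs_mul]; exact mul_le_mul (hB q) (hξhabs q) (abs_nonneg _) hBpos
  have hgmeas : Measurable g := aux_meas_integral ν hℓξh
  have hhmeas : Measurable h := aux_meas_integral ν hℓξ
  set M : ℝ := B * C * (ν Set.univ).toReal with hMdef
  have hgbd : ∀ x, |g x| ≤ M := aux_bound_integral ν hℓξhb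
  have hhbd : ∀ x, |h x| ≤ M := aux_bound_integral ν hℓξb
  have hM0 : 0 ≤ M := by
    rw [hMdef]; positivity
  -- integrability over ν
  have hintξ : ∀ x, Integrable (fun y => ℓ (y, x) * ξ (y, x)) ν := fun x =>
    aux_integrable (hℓξ.comp (measurable_id.prodMk measurable_const))
      (fun y => hℓξb (y, x))
  have hintξh : ∀ x, Integrable (fun y => ℓ (y, x) * ξh (y, x)) ν := fun x =>
    aux_integrable (hℓξh.comp (measurable_id.prodMk measurable_const))
      (fun y => hℓξhb (y, x))
  have hintcξ : ∀ x, Integrable (fun y => g x * ξ (y, x)) ν := fun x =>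
    aux_integrable ((measurable_const.mul
        (hξmeas.comp (measurable_id.prodMk measurable_const))))
      (M := M * C) (fun y => by
        rw [abs_mul]
        exact mul_le_mul (hgbd x) (hξabs (y, x)) (abs_nonneg _) hM0)
  -- the difference of inner integrals
  have hdiff : ∀ x, ∫ y, ℓ (y, x) * (ξ (y, x) - ξh (y, x)) ∂ν = h x - g x := by
    intro x
    simp only [mul_sub]
    exact integral_sub (hintξ x) (hintξh x)
  -- positivity of πh
  have hπhpos : ∀ x, 0 < πh x := fun x => lt_of_lt_of_le hε (hπhmem x).1
  -- the key function for the density identity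
  set f : 𝒴 × 𝒳 → ℝ := fun q => (ℓ q - g q.2) / πh q.2 with hfdef
  have hfmeas : Measurable f :=
    (hℓmeas.sub (hgmeas.comp measurable_snd)).div (hπhmeas.comp measurable_snd)
  have hfbdd : ∀ q, |f q| ≤ (B + M) / ε := by
    intro q
    have h1 : |ℓ q - g q.2| ≤ B + M :=
      (abs_sub _ _).trans (add_le_add (hB q) (hgbd q.2))
    rw [hfdef]
    simp only [abs_div, abs_of_pos (hπhpos q.2)]
    exact div_le_div₀ (by linarith) h1 hε (hπhmem q.2).1
  -- inner integral computation
  have hinner : ∀ x, (∫ y, f (y, x) * ξ (y, x) ∂ν) = (πh x)⁻¹ * (h x - g x) := by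
    intro x
    have heq : ∀ y, f (y, x) * ξ (y, x)
        = (πh x)⁻¹ * (ℓ (y, x) * ξ (y, x) - g x * ξ (y, x)) := by
      intro y; rw [hfdef]; simp only [div_eq_mul_inv]; ring
    rw [integral_congr_ae (ae_of_all _ heq), integral_const_mul,
      integral_sub (hintξ x) (hintcξ x), integral_const_mul, hξnorm, mul_one]
  -- pointwise rewrite of the GDR integrand
  have hpt1 : ∀ ω, ((if A ω = a then (1 : ℝ) else 0) / πh (X ω)) * ℓ (Y ω, X ω)
      + (1 - (if A ω = a then (1 : ℝ) else 0) / πh (X ω)) * g (X ω)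
      = (if A ω = a then (1 : ℝ) else 0) * f (Y ω, X ω) + g (X ω) := by
    intro ω; rw [hfdef]; simp only [div_eq_mul_inv]; ring
  -- measurability of the indicator
  have hindmeas : Measurable fun ω => (if A ω = a then (1 : ℝ) else 0) :=
    Measurable.ite (hA (measurableSet_singleton a)) measurable_const measurable_const
  have hindbd : ∀ ω, |(if A ω = a then (1 : ℝ) else 0)| ≤ 1 := by
    intro ω; split <;> simp
  -- integrability over P
  have hint_f : Integrable (fun ω => (if A ω = a then (1 : ℝ) else 0)
      * f (Y ω, X ω)) P :=
    aux_integrable (hindmeas.mul (hfmeas.comp (hY.prodMk hX)))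
      (M := (B + M) / ε) (fun ω => by
        rw [abs_mul]
        calc |if A ω = a then (1 : ℝ) else 0| * |f (Y ω, X ω)|
            ≤ 1 * ((B + M) / ε) :=
              mul_le_mul (hindbd ω) (hfbdd _) (abs_nonneg _) zero_le_one
          _ = (B + M) / ε := one_mul _)
  have hint_g : Integrable (fun ω => g (X ω)) P :=
    aux_integrable (hgmeas.comp hX) (fun ω => hgbd (X ω))
  have hint_h : Integrable (fun ω => h (X ω)) P :=
    aux_integrable (hhmeas.comp hX) (fun ω => hhbd (X ω))
  have hint_main : Integrable (fun ω => π (X ω)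
      * ((πh (X ω))⁻¹ * (h (X ω) - g (X ω)))) P := by
    refine ⟨((hπmeas.comp hX).mul (((hπhmeas.comp hX).inv).mul
      ((hhmeas.comp hX).sub (hgmeas.comp hX)))).aestronglyMeasurable,
      HasFiniteIntegral.of_bounded (C := 1 * (ε⁻¹ * (M + M))) ?_⟩
    filter_upwards [hoverlap] with ω hω
    rw [Real.norm_eq_abs, abs_mul, abs_mul]
    have h1 : |π (X ω)| ≤ 1 := abs_le.2 ⟨by linarith [hω.1], by linarith [hω.2]⟩
    have h2 : |(πh (X ω))⁻¹| ≤ ε⁻¹ := by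
      rw [abs_inv, abs_of_pos (hπhpos _)]
      exact inv_anti₀ hε (hπhmem _).1
    have h3 : |h (X ω) - g (X ω)| ≤ M + M :=
      (abs_sub _ _).trans (add_le_add (hhbd _) (hgbd _))
    exact mul_le_mul h1 (mul_le_mul h2 h3 (abs_nonneg _) (by positivity))
      (mul_nonneg (abs_nonneg _) (abs_nonneg _)) zero_le_one
  -- apply the density identity
  have hdens := hξdens f hfmeas ⟨(B + M) / ε, hfbdd⟩
  -- main calculation
  calc (∫ ω, ((if A ω = a then (1 : ℝ) else 0) / πh (X ω)) * ℓ (Y ω, X ω)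
          + (1 - (if A ω = a then (1 : ℝ) else 0) / πh (X ω))
            * ∫ y, ℓ (y, X ω) * ξh (y, X ω) ∂ν ∂P)
        - ∫ ω, ∫ y, ℓ (y, X ω) * ξ (y, X ω) ∂ν ∂P
      = (∫ ω, (if A ω = a then (1 : ℝ) else 0) * f (Y ω, X ω) + g (X ω) ∂P)
          - ∫ ω, h (X ω) ∂P := by
        rw [integral_congr_ae (ae_of_all _ hpt1)]
    _ = ((∫ ω, (if A ω = a then (1 : ℝ) else 0) * f (Y ω, X ω) ∂P)
          + ∫ ω, g (X ω) ∂P) - ∫ ω, h (X ω) ∂P := by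
        rw [integral_add hint_f hint_g]
    _ = ((∫ ω, π (X ω) * ((πh (X ω))⁻¹ * (h (X ω) - g (X ω))) ∂P)
          + ∫ ω, g (X ω) ∂P) - ∫ ω, h (X ω) ∂P := by
        rw [hdens]
        congr 2
        exact integral_congr_ae (ae_of_all _ fun ω => by
          simp only [hinner (X ω)])
    _ = ∫ ω, π (X ω) * ((πh (X ω))⁻¹ * (h (X ω) - g (X ω))) + g (X ω)
          - h (X ω) ∂P := by
        have hint_mg : Integrable (fun ω => π (X ω)
            * ((πh (X ω))⁻¹ * (h (X ω) - g (X ω))) + g (X ω)) P := hint_main.add hint_g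
        rw [integral_sub hint_mg hint_h, integral_add hint_main hint_g]
    _ = ∫ ω, ((π (X ω) - πh (X ω)) / πh (X ω))
          * ∫ y, ℓ (y, X ω) * (ξ (y, X ω) - ξh (y, X ω)) ∂ν ∂P := by
        refine integral_congr_ae (ae_of_all _ fun ω => ?_)
        simp only [hdiff (X ω)]
        have hp : πh (X ω) ≠ 0 := ne_of_gt (hπhpos (X ω))
        field_simp
        ring
end

section
/- Double robustness of the GDR risk: if either π̂ = π_a holds P-almost surely, or ξ̂(y | X) = ξ(y | X) holds (P ⊗ ν)-almost everywhere, then for every bounded measurable ℓ : 𝒴 × 𝒳 → ℝ the doubly-robust risk recovers the target risk exactly: L_GDR(ℓ; π̂, ξ̂) = E[∫ ℓ(y, X) ξ(y | X) dν(y)]. -/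
open MeasureTheory ProbabilityTheory

/-- Double robustness of the GDR risk: if either `π̂ = π_a` holds P-a.s., or
`ξ̂(y | X) = ξ(y | X)` holds (P ⊗ ν)-a.e., then for every bounded measurable
`ℓ : 𝒴 × 𝒳 → ℝ` the doubly-robust risk recovers the target risk exactly:
`L_GDR(ℓ; π̂, ξ̂) = E[∫ ℓ(y, X) ξ(y | X) dν(y)]`. -/
theorem gdr_double_robustness
    {Ω : Type*} [MeasurableSpace Ω]
    (P : Measure Ω) [IsProbabilityMeasure P]
    {𝒳 : Type*} [MeasurableSpace 𝒳] [StandardBorelSpace 𝒳]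
    {𝒴 : Type*} [MeasurableSpace 𝒴] [StandardBorelSpace 𝒴]
    (X : Ω → 𝒳) (hX : Measurable X)
    (A : Ω → Bool) (hA : Measurable A)
    (Y : Ω → 𝒴) (hY : Measurable Y)
    (a : Bool)
    -- propensity score: σ(X)-measurable version of E[𝟙{A = a} | σ(X)]
    (π : 𝒳 → ℝ) (hπmeas : Measurable π)
    (hπver : P[fun ω => (if A ω = a then (1 : ℝ) else 0) |
        MeasurableSpace.comap X inferInstance] =ᵐ[P] fun ω => π (X ω))
    -- strong overlap
    (ε : ℝ) (hε : 0 < ε)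
    (hoverlap : ∀ᵐ ω ∂P, ε ≤ π (X ω) ∧ π (X ω) ≤ 1 - ε)
    -- density setup
    (ν : Measure 𝒴) [IsFiniteMeasure ν]
    (c C : ℝ) (hc : 0 < c) (hcC : c ≤ C)
    (ξ : 𝒴 × 𝒳 → ℝ) (hξmeas : Measurable ξ)
    (hξmem : ∀ q, ξ q ∈ Set.Icc c C)
    (hξnorm : ∀ x, ∫ y, ξ (y, x) ∂ν = 1)
    -- ξ is the conditional outcome density
    (hξdens : ∀ f : 𝒴 × 𝒳 → ℝ, Measurable f → (∃ B : ℝ, ∀ q, |f q| ≤ B) →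
      ∫ ω, (if A ω = a then (1 : ℝ) else 0) * f (Y ω, X ω) ∂P
        = ∫ ω, π (X ω) * ∫ y, f (y, X ω) * ξ (y, X ω) ∂ν ∂P)
    -- nuisance estimates
    (πh : 𝒳 → ℝ) (hπhmeas : Measurable πh) (hπhmem : ∀ x, πh x ∈ Set.Icc ε 1)
    (ξh : 𝒴 × 𝒳 → ℝ) (hξhmeas : Measurable ξh)
    (hξhmem : ∀ q, ξh q ∈ Set.Icc c C)
    (hξhnorm : ∀ x, ∫ y, ξh (y, x) ∂ν = 1) :
    ((∀ᵐ ω ∂P, πh (X ω) = π (X ω)) ∨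
      (∀ᵐ q ∂(P.prod ν), ξh (q.2, X q.1) = ξ (q.2, X q.1))) →
    ∀ (ℓ : 𝒴 × 𝒳 → ℝ), Measurable ℓ → (∃ B : ℝ, ∀ q, |ℓ q| ≤ B) →
      ∫ ω, ((if A ω = a then (1 : ℝ) else 0) / πh (X ω)) * ℓ (Y ω, X ω)
          + (1 - (if A ω = a then (1 : ℝ) else 0) / πh (X ω))
            * ∫ y, ℓ (y, X ω) * ξh (y, X ω) ∂ν ∂P
        = ∫ ω, ∫ y, ℓ (y, X ω) * ξ (y, X ω) ∂ν ∂P := by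
  intro hrob ℓ hℓmeas hℓbd
  classical
  obtain ⟨B₀, hB₀⟩ := hℓbd
  have hC0 : (0:ℝ) < C := lt_of_lt_of_le hc hcC
  set B : ℝ := max B₀ 0 with hB_def
  have hB : ∀ q, |ℓ q| ≤ B := fun q => (hB₀ q).trans (le_max_left _ _)
  have hB0 : (0:ℝ) ≤ B := le_max_right _ _
  set K : ℝ := B * C * (ν Set.univ).toReal with hK_def
  have hK0 : (0:ℝ) ≤ K := by positivity
  have hξabs : ∀ q, |ξ q| ≤ C := fun q =>
    abs_le.2 ⟨by nlinarith [(hξmem q).1], (hξmem q).2⟩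
  have hξhabs : ∀ q, |ξh q| ≤ C := fun q =>
    abs_le.2 ⟨by nlinarith [(hξhmem q).1], (hξhmem q).2⟩
  -- target and plug-in conditional risks
  set g : 𝒳 → ℝ := fun x => ∫ y, ℓ (y, x) * ξ (y, x) ∂ν with hg_def
  set gh : 𝒳 → ℝ := fun x => ∫ y, ℓ (y, x) * ξh (y, x) ∂ν with hgh_def
  have hgmeas : Measurable g := by
    have h : Measurable fun p : 𝒳 × 𝒴 => ℓ (p.2, p.1) * ξ (p.2, p.1) :=
      (hℓmeas.comp measurable_swap).mul (hξmeas.comp measurable_swap)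
    exact (h.stronglyMeasurable.integral_prod_right').measurable
  have hghmeas : Measurable gh := by
    have h : Measurable fun p : 𝒳 × 𝒴 => ℓ (p.2, p.1) * ξh (p.2, p.1) :=
      (hℓmeas.comp measurable_swap).mul (hξhmeas.comp measurable_swap)
    exact (h.stronglyMeasurable.integral_prod_right').measurable
  have hbd : ∀ (ζ : 𝒴 × 𝒳 → ℝ), (∀ q, |ζ q| ≤ C) →
      ∀ x, |∫ y, ℓ (y, x) * ζ (y, x) ∂ν| ≤ K := by
    intro ζ hζ x
    calc |∫ y, ℓ (y, x) * ζ (y, x) ∂ν| = ‖∫ y, ℓ (y, x) * ζ (y, x) ∂ν‖ := rfl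
      _ ≤ (B * C) * (ν Set.univ).toReal := by
        refine norm_integral_le_of_norm_le_const (Filter.Eventually.of_forall fun y => ?_)
        rw [norm_mul, Real.norm_eq_abs, Real.norm_eq_abs]
        exact mul_le_mul (hB _) (hζ _) (abs_nonneg _) hB0
  have hgbd : ∀ x, |g x| ≤ K := hbd ξ hξabs
  have hghbd : ∀ x, |gh x| ≤ K := hbd ξh hξhabs
  -- integrability of bounded a.e.-strongly-measurable functions
  have hintP : ∀ (u : Ω → ℝ), AEStronglyMeasurable u P → (∃ M : ℝ, ∀ᵐ ω ∂P, |u ω| ≤ M) →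
      Integrable u P := by
    rintro u hu ⟨M, hM⟩
    exact memLp_one_iff_integrable.1 (MemLp.of_bound hu M (hM.mono fun ω h => by
      simpa [Real.norm_eq_abs] using h))
  have hintν : ∀ (u : 𝒴 → ℝ), AEStronglyMeasurable u ν → (∃ M : ℝ, ∀ y, |u y| ≤ M) →
      Integrable u ν := by
    rintro u hu ⟨M, hM⟩
    exact memLp_one_iff_integrable.1 (MemLp.of_bound hu M (Filter.Eventually.of_forall
      fun y => by simpa [Real.norm_eq_abs] using hM y))
  -- key pointwise-in-x identity
  have hkey : ∀ x, (∫ y, ((ℓ (y, x) - gh x) / πh x) * ξ (y, x) ∂ν) = (g x - gh x) / πh x := by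
    intro x
    have hI1 : Integrable (fun y => ℓ (y, x) * ξ (y, x)) ν := by
      refine hintν _ (((hℓmeas.comp (measurable_id.prodMk measurable_const)).mul
        (hξmeas.comp (measurable_id.prodMk measurable_const))).aestronglyMeasurable) ⟨B * C, fun y => ?_⟩
      rw [abs_mul]
      exact mul_le_mul (hB _) (hξabs _) (abs_nonneg _) hB0
    have hIξ : Integrable (fun y => ξ (y, x)) ν := by
      refine hintν _ ((hξmeas.comp (measurable_id.prodMk measurable_const)).aestronglyMeasurable)
        ⟨C, fun y => hξabs _⟩
    have h1 : ∀ y, ((ℓ (y, x) - gh x) / πh x) * ξ (y, x)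
        = (πh x)⁻¹ * (ℓ (y, x) * ξ (y, x) - gh x * ξ (y, x)) := by intro y; ring
    simp_rw [h1]
    rw [integral_const_mul, integral_sub hI1 (hIξ.const_mul (gh x)), integral_const_mul,
      hξnorm x, mul_one, div_eq_inv_mul]
  -- measurability/boundedness of the correction term
  have hfmeas : Measurable (fun q : 𝒴 × 𝒳 => (ℓ q - gh q.2) / πh q.2) :=
    (hℓmeas.sub (hghmeas.comp measurable_snd)).div (hπhmeas.comp measurable_snd)
  have hfbd : ∀ q : 𝒴 × 𝒳, |(ℓ q - gh q.2) / πh q.2| ≤ (B + K) / ε := by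
    intro q
    rw [abs_div]
    refine div_le_div₀ (by positivity) ((abs_sub _ _).trans (add_le_add (hB q) (hghbd q.2)))
      hε ?_
    have h1 := (hπhmem q.2).1
    rw [abs_of_pos (lt_of_lt_of_le hε h1)]
    exact h1
  have hmain := hξdens (fun q => (ℓ q - gh q.2) / πh q.2) hfmeas ⟨(B + K) / ε, hfbd⟩
  simp only at hmain
  -- indicator measurability and integrabilities over P
  have hindmeas : Measurable (fun ω => if A ω = a then (1:ℝ) else 0) :=
    Measurable.ite (hA (measurableSet_singleton a)) measurable_const measurable_const
  have hI1 : Integrable (fun ω =>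
      (if A ω = a then (1:ℝ) else 0) * ((ℓ (Y ω, X ω) - gh (X ω)) / πh (X ω))) P := by
    refine hintP _ ((hindmeas.mul (hfmeas.comp (hY.prodMk hX))).aestronglyMeasurable)
      ⟨(B + K) / ε, Filter.Eventually.of_forall fun ω => ?_⟩
    rw [abs_mul]
    calc |if A ω = a then (1:ℝ) else 0| * |(ℓ (Y ω, X ω) - gh (X ω)) / πh (X ω)|
        ≤ 1 * ((B + K) / ε) := by
          refine mul_le_mul ?_ (hfbd _) (abs_nonneg _) zero_le_one
          split <;> simp
      _ = (B + K) / ε := one_mul _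
  have hIg : Integrable (fun ω => g (X ω)) P :=
    hintP _ ((hgmeas.comp hX).aestronglyMeasurable)
      ⟨K, Filter.Eventually.of_forall fun ω => hgbd _⟩
  have hIgh : Integrable (fun ω => gh (X ω)) P :=
    hintP _ ((hghmeas.comp hX).aestronglyMeasurable)
      ⟨K, Filter.Eventually.of_forall fun ω => hghbd _⟩
  -- main computation
  calc ∫ ω, ((if A ω = a then (1 : ℝ) else 0) / πh (X ω)) * ℓ (Y ω, X ω)
          + (1 - (if A ω = a then (1 : ℝ) else 0) / πh (X ω))
            * ∫ y, ℓ (y, X ω) * ξh (y, X ω) ∂ν ∂P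
      = ∫ ω, (if A ω = a then (1:ℝ) else 0) * ((ℓ (Y ω, X ω) - gh (X ω)) / πh (X ω))
          + gh (X ω) ∂P := by
        refine integral_congr_ae (Filter.Eventually.of_forall fun ω => ?_)
        show ((if A ω = a then (1 : ℝ) else 0) / πh (X ω)) * ℓ (Y ω, X ω)
          + (1 - (if A ω = a then (1 : ℝ) else 0) / πh (X ω)) * gh (X ω)
          = (if A ω = a then (1:ℝ) else 0) * ((ℓ (Y ω, X ω) - gh (X ω)) / πh (X ω)) + gh (X ω)
        ring
    _ = (∫ ω, (if A ω = a then (1:ℝ) else 0) * ((ℓ (Y ω, X ω) - gh (X ω)) / πh (X ω)) ∂P)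
          + ∫ ω, gh (X ω) ∂P := integral_add hI1 hIgh
    _ = (∫ ω, π (X ω) * ((g (X ω) - gh (X ω)) / πh (X ω)) ∂P) + ∫ ω, gh (X ω) ∂P := by
        rw [hmain]
        congr 1
        exact integral_congr_ae (Filter.Eventually.of_forall fun ω => by dsimp only; rw [hkey])
    _ = ∫ ω, g (X ω) ∂P := by
        rcases hrob with hπeq | hξeq
        · have h1 : ∀ᵐ ω ∂P, π (X ω) * ((g (X ω) - gh (X ω)) / πh (X ω))
              = g (X ω) - gh (X ω) := by
            filter_upwards [hπeq, hoverlap] with ω h h2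
            rw [h]
            have hne : π (X ω) ≠ 0 := by linarith [h2.1]
            field_simp
          rw [integral_congr_ae h1, integral_sub hIg hIgh]
          ring
        · have h2 : ∀ᵐ ω ∂P, gh (X ω) = g (X ω) := by
            filter_upwards [Measure.ae_ae_of_ae_prod hξeq] with ω hω
            exact integral_congr_ae (hω.mono fun y hy => by dsimp only; rw [hy])
          have e1 : ∫ ω, π (X ω) * ((g (X ω) - gh (X ω)) / πh (X ω)) ∂P = ∫ ω, (0:ℝ) ∂P :=
            integral_congr_ae (by filter_upwards [h2] with ω h; rw [h]; simp)
          rw [e1, integral_zero, zero_add, integral_congr_ae h2]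
end

section
/- Rate double robustness bound: for every measurable ℓ : 𝒴 × 𝒳 → ℝ with |ℓ| ≤ B, the error of the doubly-robust risk is bounded by a product of nuisance L²-errors: |L_GDR(ℓ; π̂, ξ̂) − E[∫ ℓ(y, X) ξ(y | X) dν(y)]| ≤ (B √(ν(𝒴)) / ε) · ‖π_a − π̂‖_{L²(P)} · ‖ξ − ξ̂‖_{L²(P⊗ν)}, where ‖h‖_{L²(P)}² := E[h(X)²] and ‖k‖_{L²(P⊗ν)}² := E[∫ k(y, X)² dν(y)]. -/
open MeasureTheory ProbabilityTheory

private lemma intg_of_bdd {α : Type*} [MeasurableSpace α] {μ : Measure α} [IsFiniteMeasure μ]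
    {h : α → ℝ} (hm : AEStronglyMeasurable h μ) {M : ℝ} (hb : ∀ᵐ x ∂μ, |h x| ≤ M) :
    Integrable h μ :=
  Integrable.mono' (integrable_const M) hm (by simpa [Real.norm_eq_abs] using hb)

private lemma cs_aux {α : Type*} [MeasurableSpace α] (μ : Measure α) [IsFiniteMeasure μ]
    (f g : α → ℝ) (hf : AEStronglyMeasurable f μ) (hg : AEStronglyMeasurable g μ)
    (Cf Cg : ℝ) (hbf : ∀ᵐ x ∂μ, |f x| ≤ Cf) (hbg : ∀ᵐ x ∂μ, |g x| ≤ Cg) :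
    ∫ x, |f x| * |g x| ∂μ
      ≤ Real.sqrt (∫ x, f x ^ 2 ∂μ) * Real.sqrt (∫ x, g x ^ 2 ∂μ) := by
  have hf2 : MemLp f 2 μ := MemLp.of_bound hf Cf (by simpa [Real.norm_eq_abs] using hbf)
  have hg2 : MemLp g 2 μ := MemLp.of_bound hg Cg (by simpa [Real.norm_eq_abs] using hbg)
  have hpq : (2 : ℝ).HolderConjugate 2 := ⟨by norm_num, by norm_num, by norm_num⟩
  have h2 : ENNReal.ofReal (2 : ℝ) = 2 := by norm_num
  have := integral_mul_le_Lp_mul_Lq_of_nonneg (μ := μ) hpq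
    (f := fun x => |f x|) (g := fun x => |g x|)
    (Filter.Eventually.of_forall fun x => abs_nonneg _)
    (Filter.Eventually.of_forall fun x => abs_nonneg _)
    (by rw [h2]; exact hf2.abs) (by rw [h2]; exact hg2.abs)
  calc ∫ x, |f x| * |g x| ∂μ
      ≤ (∫ x, |f x| ^ (2:ℝ) ∂μ) ^ (1/(2:ℝ)) * (∫ x, |g x| ^ (2:ℝ) ∂μ) ^ (1/(2:ℝ)) := this
    _ = Real.sqrt (∫ x, f x ^ 2 ∂μ) * Real.sqrt (∫ x, g x ^ 2 ∂μ) := by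
        rw [← Real.sqrt_eq_rpow, ← Real.sqrt_eq_rpow]
        congr 1 <;> congr 1 <;> apply integral_congr_ae <;>
          exact Filter.Eventually.of_forall fun x => by
            show |_| ^ (2:ℝ) = _ ^ 2
            rw [show ((2:ℝ) = ((2:ℕ):ℝ)) by norm_num, Real.rpow_natCast]
            simp [sq_abs]

/-- Rate double robustness bound: for every measurable `ℓ : 𝒴 × 𝒳 → ℝ` with
`|ℓ| ≤ B`, the error of the doubly-robust risk is bounded by a product of nuisance L²-errors:
`|L_GDR(ℓ; π̂, ξ̂) − E[∫ ℓ(y, X) ξ(y | X) dν(y)]|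
   ≤ (B √(ν(𝒴)) / ε) · ‖π_a − π̂‖_{L²(P)} · ‖ξ − ξ̂‖_{L²(P⊗ν)}`. -/
theorem gdr_rate_double_robustness
    {Ω : Type*} [MeasurableSpace Ω]
    (P : Measure Ω) [IsProbabilityMeasure P]
    {𝒳 : Type*} [MeasurableSpace 𝒳] [StandardBorelSpace 𝒳]
    {𝒴 : Type*} [MeasurableSpace 𝒴] [StandardBorelSpace 𝒴]
    (X : Ω → 𝒳) (hX : Measurable X)
    (A : Ω → Bool) (hA : Measurable A)
    (Y : Ω → 𝒴) (hY : Measurable Y)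
    (a : Bool)
    -- propensity score: σ(X)-measurable version of E[𝟙{A = a} | σ(X)]
    (π : 𝒳 → ℝ) (hπmeas : Measurable π)
    (hπver : P[fun ω => (if A ω = a then (1 : ℝ) else 0) |
        MeasurableSpace.comap X inferInstance] =ᵐ[P] fun ω => π (X ω))
    -- strong overlap
    (ε : ℝ) (hε : 0 < ε)
    (hoverlap : ∀ᵐ ω ∂P, ε ≤ π (X ω) ∧ π (X ω) ≤ 1 - ε)
    -- density setup
    (ν : Measure 𝒴) [IsFiniteMeasure ν]
    (c C : ℝ) (hc : 0 < c) (hcC : c ≤ C)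
    (ξ : 𝒴 × 𝒳 → ℝ) (hξmeas : Measurable ξ)
    (hξmem : ∀ q, ξ q ∈ Set.Icc c C)
    (hξnorm : ∀ x, ∫ y, ξ (y, x) ∂ν = 1)
    -- ξ is the conditional outcome density
    (hξdens : ∀ f : 𝒴 × 𝒳 → ℝ, Measurable f → (∃ B : ℝ, ∀ q, |f q| ≤ B) →
      ∫ ω, (if A ω = a then (1 : ℝ) else 0) * f (Y ω, X ω) ∂P
        = ∫ ω, π (X ω) * ∫ y, f (y, X ω) * ξ (y, X ω) ∂ν ∂P)
    -- nuisance estimates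
    (πh : 𝒳 → ℝ) (hπhmeas : Measurable πh) (hπhmem : ∀ x, πh x ∈ Set.Icc ε 1)
    (ξh : 𝒴 × 𝒳 → ℝ) (hξhmeas : Measurable ξh)
    (hξhmem : ∀ q, ξh q ∈ Set.Icc c C)
    (hξhnorm : ∀ x, ∫ y, ξh (y, x) ∂ν = 1) :
    ∀ (B : ℝ) (ℓ : 𝒴 × 𝒳 → ℝ), Measurable ℓ → (∀ q, |ℓ q| ≤ B) →
      |(∫ ω, ((if A ω = a then (1 : ℝ) else 0) / πh (X ω)) * ℓ (Y ω, X ω)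
          + (1 - (if A ω = a then (1 : ℝ) else 0) / πh (X ω))
            * ∫ y, ℓ (y, X ω) * ξh (y, X ω) ∂ν ∂P)
        - ∫ ω, ∫ y, ℓ (y, X ω) * ξ (y, X ω) ∂ν ∂P|
      ≤ (B * Real.sqrt ((ν Set.univ).toReal) / ε)
          * Real.sqrt (∫ ω, (π (X ω) - πh (X ω)) ^ 2 ∂P)
          * Real.sqrt (∫ ω, ∫ y, (ξ (y, X ω) - ξh (y, X ω)) ^ 2 ∂ν ∂P) := by
  intro B ℓ hℓmeas hℓB
  have hPuniv : P Set.univ = 1 := measure_univ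
  have hΩ : Nonempty Ω := by
    by_contra h
    rw [not_nonempty_iff] at h
    rw [Set.univ_eq_empty_iff.mpr h, measure_empty] at hPuniv
    exact zero_ne_one hPuniv
  obtain ⟨ω0⟩ := hΩ
  have hB0 : 0 ≤ B := le_trans (abs_nonneg _) (hℓB (Y ω0, X ω0))
  set νU : ℝ := (ν Set.univ).toReal with hνUdef
  have hνU0 : 0 ≤ νU := ENNReal.toReal_nonneg
  have hπh_pos : ∀ x, 0 < πh x := fun x => lt_of_lt_of_le hε (hπhmem x).1
  have hπh_ne : ∀ x, πh x ≠ 0 := fun x => (hπh_pos x).ne'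
  set I : Ω → ℝ := fun ω => if A ω = a then (1 : ℝ) else 0 with hIdef
  have hImeas : Measurable I := Measurable.ite (hA (measurableSet_singleton a))
    measurable_const measurable_const
  have hIbd : ∀ ω, |I ω| ≤ 1 := by
    intro ω; simp only [hIdef]; split <;> norm_num
  set g : 𝒳 → ℝ := fun x => ∫ y, ℓ (y, x) * ξ (y, x) ∂ν with hgdef
  set gh : 𝒳 → ℝ := fun x => ∫ y, ℓ (y, x) * ξh (y, x) ∂ν with hghdef
  have hgmeas : Measurable g :=
    (StronglyMeasurable.integral_prod_left' (μ := ν)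
      ((hℓmeas.mul hξmeas).stronglyMeasurable)).measurable
  have hghmeas : Measurable gh :=
    (StronglyMeasurable.integral_prod_left' (μ := ν)
      ((hℓmeas.mul hξhmeas).stronglyMeasurable)).measurable
  have hsec : ∀ (k : 𝒴 × 𝒳 → ℝ), Measurable k → ∀ (M : ℝ), (∀ q, |k q| ≤ M) →
      ∀ x, Integrable (fun y => k (y, x)) ν := by
    intro k hk M hM x
    exact intg_of_bdd (hk.comp measurable_prodMk_right).aestronglyMeasurable
      (Filter.Eventually.of_forall fun y => hM (y, x))
  have hξd_bd : ∀ q, |ξ q - ξh q| ≤ C - c := by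
    intro q
    have h1 := hξmem q; have h2 := hξhmem q
    simp only [Set.mem_Icc] at h1 h2
    rw [abs_sub_le_iff]; constructor <;> linarith
  have hCc0 : 0 ≤ C - c := by linarith
  have hℓξ_int : ∀ x, Integrable (fun y => ℓ (y, x) * ξ (y, x)) ν :=
    hsec _ (hℓmeas.mul hξmeas) (B * C) (fun q => by
      rw [Pi.mul_apply, abs_mul]
      exact mul_le_mul (hℓB q) (by
        rw [abs_of_nonneg (le_trans hc.le (hξmem q).1)]; exact (hξmem q).2)
        (abs_nonneg _) hB0)
  have hℓξh_int : ∀ x, Integrable (fun y => ℓ (y, x) * ξh (y, x)) ν :=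
    hsec _ (hℓmeas.mul hξhmeas) (B * C) (fun q => by
      rw [Pi.mul_apply, abs_mul]
      exact mul_le_mul (hℓB q) (by
        rw [abs_of_nonneg (le_trans hc.le (hξhmem q).1)]; exact (hξhmem q).2)
        (abs_nonneg _) hB0)
  have hgen_bd : ∀ (ζ : 𝒴 × 𝒳 → ℝ), (∀ q, ζ q ∈ Set.Icc c C) →
      (∀ x, ∫ y, ζ (y, x) ∂ν = 1) → (∀ x, Integrable (fun y => ℓ (y, x) * ζ (y, x)) ν) →
      Measurable ζ → ∀ x, |∫ y, ℓ (y, x) * ζ (y, x) ∂ν| ≤ B := by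
    intro ζ hζmem hζnorm hint hζmeas x
    have h1 : |∫ y, ℓ (y, x) * ζ (y, x) ∂ν| ≤ ∫ y, |ℓ (y, x) * ζ (y, x)| ∂ν := by
      have := norm_integral_le_integral_norm (fun y => ℓ (y, x) * ζ (y, x)) (μ := ν)
      simpa only [Real.norm_eq_abs] using this
    have h2 : ∫ y, |ℓ (y, x) * ζ (y, x)| ∂ν ≤ ∫ y, B * ζ (y, x) ∂ν := by
      apply integral_mono (hint x).abs
      · exact (hsec _ hζmeas C (fun q => by
          rw [abs_of_nonneg (le_trans hc.le (hζmem q).1)]; exact (hζmem q).2) x).const_mul B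
      · intro y
        show |ℓ (y, x) * ζ (y, x)| ≤ B * ζ (y, x)
        rw [abs_mul, abs_of_nonneg (le_trans hc.le (hζmem (y, x)).1)]
        exact mul_le_mul_of_nonneg_right (hℓB _) (le_trans hc.le (hζmem (y, x)).1)
    have h3 : ∫ y, B * ζ (y, x) ∂ν = B := by
      rw [integral_const_mul, hζnorm x, mul_one]
    linarith
  have hg_bd : ∀ x, |g x| ≤ B := hgen_bd ξ hξmem hξnorm hℓξ_int hξmeas
  have hgh_bd : ∀ x, |gh x| ≤ B := hgen_bd ξh hξhmem hξhnorm hℓξh_int hξhmeas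
  have hgdiff_bd : ∀ x, |g x - gh x| ≤ B + B := fun x =>
    le_trans (abs_sub _ _) (add_le_add (hg_bd x) (hgh_bd x))
  -- Claim A
  have claimA : ∫ ω, (I ω / πh (X ω)) * ℓ (Y ω, X ω) ∂P
      = ∫ ω, (π (X ω) / πh (X ω)) * g (X ω) ∂P := by
    have e1 : ∫ ω, (I ω / πh (X ω)) * ℓ (Y ω, X ω) ∂P
        = ∫ ω, I ω * ((fun q : 𝒴 × 𝒳 => ℓ q / πh q.2) (Y ω, X ω)) ∂P := by
      apply integral_congr_ae; filter_upwards with ω; ring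
    rw [e1, hξdens (fun q : 𝒴 × 𝒳 => ℓ q / πh q.2)
      (by exact hℓmeas.div (hπhmeas.comp measurable_snd))
      ⟨B / ε, fun q => by
        rw [abs_div, abs_of_pos (hπh_pos q.2)]
        exact div_le_div₀ hB0 (hℓB q) hε (hπhmem q.2).1⟩]
    apply integral_congr_ae; filter_upwards with ω
    have : ∫ y, (ℓ (y, X ω) / πh (X ω)) * ξ (y, X ω) ∂ν = g (X ω) / πh (X ω) := by
      rw [hgdef]; simp only
      rw [← integral_div]
      apply integral_congr_ae; filter_upwards with y; ring
    rw [this]; ring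
  -- Claim B
  have claimB : ∫ ω, (I ω / πh (X ω)) * gh (X ω) ∂P
      = ∫ ω, (π (X ω) / πh (X ω)) * gh (X ω) ∂P := by
    have e1 : ∫ ω, (I ω / πh (X ω)) * gh (X ω) ∂P
        = ∫ ω, I ω * ((fun q : 𝒴 × 𝒳 => gh q.2 / πh q.2) (Y ω, X ω)) ∂P := by
      apply integral_congr_ae; filter_upwards with ω; ring
    rw [e1, hξdens (fun q : 𝒴 × 𝒳 => gh q.2 / πh q.2)
      (by exact (hghmeas.comp measurable_snd).div (hπhmeas.comp measurable_snd))
      ⟨B / ε, fun q => by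
        rw [abs_div, abs_of_pos (hπh_pos q.2)]
        exact div_le_div₀ hB0 (hgh_bd q.2) hε (hπhmem q.2).1⟩]
    apply integral_congr_ae; filter_upwards with ω
    have : ∫ y, (gh (X ω) / πh (X ω)) * ξ (y, X ω) ∂ν = gh (X ω) / πh (X ω) := by
      rw [integral_const_mul, hξnorm, mul_one]
    rw [this]; ring
  -- integrability over P
  have hπabd : ∀ᵐ ω ∂P, |π (X ω)| ≤ 1 := by
    filter_upwards [hoverlap] with ω hω
    rw [abs_of_nonneg (le_trans hε.le hω.1)]; linarith [hω.2]
  have hπdiff_bd : ∀ᵐ ω ∂P, |π (X ω) - πh (X ω)| ≤ 2 := by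
    filter_upwards [hπabd] with ω hω
    calc |π (X ω) - πh (X ω)| ≤ |π (X ω)| + |πh (X ω)| := abs_sub _ _
      _ ≤ 1 + 1 := add_le_add hω (by
          rw [abs_of_pos (hπh_pos _)]; exact (hπhmem (X ω)).2)
      _ = 2 := by norm_num
  have hIdiv_bd : ∀ ω, |I ω / πh (X ω)| ≤ ε⁻¹ := by
    intro ω
    rw [abs_div, abs_of_pos (hπh_pos (X ω))]
    calc |I ω| / πh (X ω) ≤ 1 / ε :=
          div_le_div₀ zero_le_one (hIbd ω) hε (hπhmem (X ω)).1
      _ = ε⁻¹ := one_div ε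
  have hπdiv_bd : ∀ᵐ ω ∂P, |π (X ω) / πh (X ω)| ≤ ε⁻¹ := by
    filter_upwards [hπabd] with ω hω
    rw [abs_div, abs_of_pos (hπh_pos (X ω))]
    calc |π (X ω)| / πh (X ω) ≤ 1 / ε := div_le_div₀ zero_le_one hω hε (hπhmem (X ω)).1
      _ = ε⁻¹ := one_div ε
  have int1 : Integrable (fun ω => (I ω / πh (X ω)) * ℓ (Y ω, X ω)) P := by
    apply intg_of_bdd (((hImeas.div (hπhmeas.comp hX)).mul
      (hℓmeas.comp ((hY.prodMk hX)))).aestronglyMeasurable) (M := ε⁻¹ * B)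
    filter_upwards with ω
    simp only [Pi.mul_apply, Pi.div_apply, Pi.sub_apply, Function.comp_apply]
    rw [abs_mul]
    exact mul_le_mul (hIdiv_bd ω) (hℓB _) (abs_nonneg _) (inv_nonneg.2 hε.le)
  have int2 : Integrable (fun ω => (1 - I ω / πh (X ω)) * gh (X ω)) P := by
    apply intg_of_bdd (((measurable_const.sub (hImeas.div (hπhmeas.comp hX))).mul
      (hghmeas.comp hX)).aestronglyMeasurable) (M := (1 + ε⁻¹) * B)
    filter_upwards with ω
    simp only [Pi.mul_apply, Pi.div_apply, Pi.sub_apply, Function.comp_apply]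
    rw [abs_mul]
    apply mul_le_mul _ (hgh_bd _) (abs_nonneg _) (by positivity)
    calc |1 - I ω / πh (X ω)| ≤ |(1:ℝ)| + |I ω / πh (X ω)| := abs_sub _ _
      _ ≤ 1 + ε⁻¹ := by rw [abs_one]; linarith [hIdiv_bd ω]
  have int3 : Integrable (fun ω => (I ω / πh (X ω)) * gh (X ω)) P := by
    apply intg_of_bdd (((hImeas.div (hπhmeas.comp hX)).mul
      (hghmeas.comp hX)).aestronglyMeasurable) (M := ε⁻¹ * B)
    filter_upwards with ω
    simp only [Pi.mul_apply, Pi.div_apply, Pi.sub_apply, Function.comp_apply]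
    rw [abs_mul]
    exact mul_le_mul (hIdiv_bd ω) (hgh_bd _) (abs_nonneg _) (inv_nonneg.2 hε.le)
  have intgh : Integrable (fun ω => gh (X ω)) P :=
    intg_of_bdd ((hghmeas.comp hX).aestronglyMeasurable)
      (Filter.Eventually.of_forall fun ω => hgh_bd _)
  have intg : Integrable (fun ω => g (X ω)) P :=
    intg_of_bdd ((hgmeas.comp hX).aestronglyMeasurable)
      (Filter.Eventually.of_forall fun ω => hg_bd _)
  have intπg : Integrable (fun ω => (π (X ω) / πh (X ω)) * g (X ω)) P := by
    apply intg_of_bdd ((((hπmeas.comp hX).div (hπhmeas.comp hX)).mul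
      (hgmeas.comp hX)).aestronglyMeasurable) (M := ε⁻¹ * B)
    filter_upwards [hπdiv_bd] with ω hω
    simp only [Pi.mul_apply, Pi.div_apply, Pi.sub_apply, Function.comp_apply]
    rw [abs_mul]
    exact mul_le_mul hω (hg_bd _) (abs_nonneg _) (inv_nonneg.2 hε.le)
  have intπgh : Integrable (fun ω => (π (X ω) / πh (X ω)) * gh (X ω)) P := by
    apply intg_of_bdd ((((hπmeas.comp hX).div (hπhmeas.comp hX)).mul
      (hghmeas.comp hX)).aestronglyMeasurable) (M := ε⁻¹ * B)
    filter_upwards [hπdiv_bd] with ω hω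
    simp only [Pi.mul_apply, Pi.div_apply, Pi.sub_apply, Function.comp_apply]
    rw [abs_mul]
    exact mul_le_mul hω (hgh_bd _) (abs_nonneg _) (inv_nonneg.2 hε.le)
  -- key identity
  have key : (∫ ω, (I ω / πh (X ω)) * ℓ (Y ω, X ω)
        + (1 - I ω / πh (X ω)) * gh (X ω) ∂P) - ∫ ω, g (X ω) ∂P
      = ∫ ω, ((π (X ω) - πh (X ω)) / πh (X ω)) * (g (X ω) - gh (X ω)) ∂P := by
    have h1 : ∫ ω, (I ω / πh (X ω)) * ℓ (Y ω, X ω)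
        + (1 - I ω / πh (X ω)) * gh (X ω) ∂P
        = (∫ ω, (I ω / πh (X ω)) * ℓ (Y ω, X ω) ∂P)
          + ∫ ω, (1 - I ω / πh (X ω)) * gh (X ω) ∂P := integral_add int1 int2
    have h2 : ∫ ω, (1 - I ω / πh (X ω)) * gh (X ω) ∂P
        = (∫ ω, gh (X ω) ∂P) - ∫ ω, (I ω / πh (X ω)) * gh (X ω) ∂P := by
      calc ∫ ω, (1 - I ω / πh (X ω)) * gh (X ω) ∂P
          = ∫ ω, gh (X ω) - (I ω / πh (X ω)) * gh (X ω) ∂P := by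
            apply integral_congr_ae; filter_upwards with ω; ring
        _ = _ := integral_sub intgh int3
    have comb : ∫ ω, ((π (X ω) - πh (X ω)) / πh (X ω)) * (g (X ω) - gh (X ω)) ∂P
        = ((∫ ω, (π (X ω) / πh (X ω)) * g (X ω) ∂P)
            - ∫ ω, (π (X ω) / πh (X ω)) * gh (X ω) ∂P)
          + ((∫ ω, gh (X ω) ∂P) - ∫ ω, g (X ω) ∂P) := by
      calc ∫ ω, ((π (X ω) - πh (X ω)) / πh (X ω)) * (g (X ω) - gh (X ω)) ∂P
          = ∫ ω, ((π (X ω) / πh (X ω)) * g (X ω) - (π (X ω) / πh (X ω)) * gh (X ω))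
              + (gh (X ω) - g (X ω)) ∂P := by
            apply integral_congr_ae; filter_upwards with ω
            have hne := hπh_ne (X ω)
            field_simp
            ring
        _ = (∫ ω, (π (X ω) / πh (X ω)) * g (X ω) - (π (X ω) / πh (X ω)) * gh (X ω) ∂P)
            + ∫ ω, gh (X ω) - g (X ω) ∂P :=
            integral_add (intπg.sub intπgh) (intgh.sub intg)
        _ = _ := by
            congr 1
            exacts [integral_sub intπg intπgh, integral_sub intgh intg]
    rw [h1, h2, claimA, claimB, comb]
    ring
  -- squared errors
  set Sπ : ℝ := ∫ ω, (π (X ω) - πh (X ω)) ^ 2 ∂P with hSπdef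
  set Sξ : ℝ := ∫ ω, ∫ y, (ξ (y, X ω) - ξh (y, X ω)) ^ 2 ∂ν ∂P with hSξdef
  set Sg : ℝ := ∫ ω, (g (X ω) - gh (X ω)) ^ 2 ∂P with hSgdef
  have hSξ_inner_nonneg : ∀ x, 0 ≤ ∫ y, (ξ (y, x) - ξh (y, x)) ^ 2 ∂ν :=
    fun x => integral_nonneg fun y => sq_nonneg _
  have hksec_meas : Measurable fun x => ∫ y, (ξ (y, x) - ξh (y, x)) ^ 2 ∂ν :=
    (StronglyMeasurable.integral_prod_left' (μ := ν)
      (((hξmeas.sub hξhmeas).pow_const 2).stronglyMeasurable)).measurable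
  have hpt : ∀ x, (g x - gh x) ^ 2 ≤ B ^ 2 * νU * ∫ y, (ξ (y, x) - ξh (y, x)) ^ 2 ∂ν := by
    intro x
    have hdiff : g x - gh x = ∫ y, ℓ (y, x) * (ξ (y, x) - ξh (y, x)) ∂ν := by
      rw [hgdef, hghdef]; simp only
      rw [← integral_sub (hℓξ_int x) (hℓξh_int x)]
      apply integral_congr_ae; filter_upwards with y; ring
    have habs : |g x - gh x| ≤ B * ∫ y, |ξ (y, x) - ξh (y, x)| ∂ν := by
      rw [hdiff]
      have h1 : |∫ y, ℓ (y, x) * (ξ (y, x) - ξh (y, x)) ∂ν|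
          ≤ ∫ y, |ℓ (y, x) * (ξ (y, x) - ξh (y, x))| ∂ν := by
        have := norm_integral_le_integral_norm
          (fun y => ℓ (y, x) * (ξ (y, x) - ξh (y, x))) (μ := ν)
        simpa only [Real.norm_eq_abs] using this
      have h2 : ∫ y, |ℓ (y, x) * (ξ (y, x) - ξh (y, x))| ∂ν
          ≤ ∫ y, B * |ξ (y, x) - ξh (y, x)| ∂ν := by
        apply integral_mono
        · exact (hsec _ (hℓmeas.mul (hξmeas.sub hξhmeas)) (B * (C - c))
            (fun q => by
              rw [Pi.mul_apply, Pi.sub_apply, abs_mul]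
              exact mul_le_mul (hℓB q) (hξd_bd q) (abs_nonneg _) hB0) x).abs
        · exact ((hsec _ (hξmeas.sub hξhmeas) (C - c) hξd_bd x).abs.const_mul B)
        · intro y
          show |ℓ (y, x) * (ξ (y, x) - ξh (y, x))| ≤ B * |ξ (y, x) - ξh (y, x)|
          rw [abs_mul]
          exact mul_le_mul_of_nonneg_right (hℓB _) (abs_nonneg _)
      rw [integral_const_mul] at h2
      linarith
    have hcs : ∫ y, |ξ (y, x) - ξh (y, x)| ∂ν
        ≤ Real.sqrt νU * Real.sqrt (∫ y, (ξ (y, x) - ξh (y, x)) ^ 2 ∂ν) := by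
      have hthis := cs_aux ν (fun _ => (1 : ℝ)) (fun y => ξ (y, x) - ξh (y, x))
        aestronglyMeasurable_const
        (((hξmeas.sub hξhmeas).comp measurable_prodMk_right).aestronglyMeasurable)
        1 (C - c)
        (Filter.Eventually.of_forall fun _ => by norm_num)
        (Filter.Eventually.of_forall fun y => hξd_bd (y, x))
      calc ∫ y, |ξ (y, x) - ξh (y, x)| ∂ν
          = ∫ y, |(1:ℝ)| * |ξ (y, x) - ξh (y, x)| ∂ν := by
            apply integral_congr_ae; filter_upwards with y; rw [abs_one, one_mul]
        _ ≤ Real.sqrt (∫ _, (1:ℝ) ^ 2 ∂ν) * Real.sqrt (∫ y, (ξ (y, x) - ξh (y, x)) ^ 2 ∂ν) :=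
            hthis
        _ = Real.sqrt νU * Real.sqrt (∫ y, (ξ (y, x) - ξh (y, x)) ^ 2 ∂ν) := by
            congr 2
            rw [hνUdef]
            simp [integral_const, Measure.real]
    have hbound : |g x - gh x|
        ≤ B * (Real.sqrt νU * Real.sqrt (∫ y, (ξ (y, x) - ξh (y, x)) ^ 2 ∂ν)) :=
      le_trans habs (mul_le_mul_of_nonneg_left hcs hB0)
    calc (g x - gh x) ^ 2 = |g x - gh x| ^ 2 := (sq_abs _).symm
      _ ≤ (B * (Real.sqrt νU * Real.sqrt (∫ y, (ξ (y, x) - ξh (y, x)) ^ 2 ∂ν))) ^ 2 :=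
          pow_le_pow_left₀ (abs_nonneg _) hbound 2
      _ = B ^ 2 * νU * ∫ y, (ξ (y, x) - ξh (y, x)) ^ 2 ∂ν := by
          rw [mul_pow, mul_pow, Real.sq_sqrt hνU0, Real.sq_sqrt (hSξ_inner_nonneg x)]
          ring
  have hSg_le : Sg ≤ B ^ 2 * νU * Sξ := by
    rw [hSgdef, hSξdef, ← integral_const_mul]
    apply integral_mono
    · apply intg_of_bdd
        ((((hgmeas.comp hX).sub (hghmeas.comp hX)).pow_const 2).aestronglyMeasurable)
        (M := (B + B) ^ 2)
      filter_upwards with ω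
      rw [abs_of_nonneg (sq_nonneg _), ← sq_abs]
      exact pow_le_pow_left₀ (abs_nonneg _) (hgdiff_bd (X ω)) 2
    · apply intg_of_bdd (((hksec_meas.comp hX).const_mul _).aestronglyMeasurable)
        (M := B ^ 2 * νU * ((C - c) ^ 2 * νU))
      filter_upwards with ω
      show |B ^ 2 * νU * ∫ y, (ξ (y, X ω) - ξh (y, X ω)) ^ 2 ∂ν| ≤ _
      rw [abs_of_nonneg (mul_nonneg (by positivity) (hSξ_inner_nonneg _))]
      apply mul_le_mul_of_nonneg_left _ (by positivity)
      calc ∫ y, (ξ (y, X ω) - ξh (y, X ω)) ^ 2 ∂ν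
          ≤ ∫ _, (C - c) ^ 2 ∂ν := by
            apply integral_mono
            · exact hsec _ ((hξmeas.sub hξhmeas).pow_const 2) ((C - c) ^ 2)
                (fun q => by
                  rw [abs_of_nonneg (sq_nonneg _), ← sq_abs]
                  exact pow_le_pow_left₀ (abs_nonneg _) (hξd_bd q) 2) (X ω)
            · exact integrable_const _
            · intro y
              show (ξ (y, X ω) - ξh (y, X ω)) ^ 2 ≤ (C - c) ^ 2
              rw [← sq_abs]
              exact pow_le_pow_left₀ (abs_nonneg _) (hξd_bd (y, X ω)) 2
        _ = (C - c) ^ 2 * νU := by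
            rw [integral_const, hνUdef]; simp [mul_comm, Measure.real]
    · exact fun ω => hpt (X ω)
  have hSξ0 : 0 ≤ Sξ := integral_nonneg fun ω => hSξ_inner_nonneg (X ω)
  have hSg0 : 0 ≤ Sg := integral_nonneg fun ω => sq_nonneg _
  -- final Cauchy-Schwarz over P
  have hfinalCS : ∫ ω, |π (X ω) - πh (X ω)| * |g (X ω) - gh (X ω)| ∂P
      ≤ Real.sqrt Sπ * Real.sqrt Sg := by
    apply cs_aux P _ _ (((hπmeas.comp hX).sub (hπhmeas.comp hX)).aestronglyMeasurable)
      (((hgmeas.comp hX).sub (hghmeas.comp hX)).aestronglyMeasurable) 2 (B + B)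
    · exact hπdiff_bd
    · exact Filter.Eventually.of_forall fun ω => hgdiff_bd (X ω)
  have herr : |∫ ω, ((π (X ω) - πh (X ω)) / πh (X ω)) * (g (X ω) - gh (X ω)) ∂P|
      ≤ ε⁻¹ * (Real.sqrt Sπ * Real.sqrt Sg) := by
    have h1 : |∫ ω, ((π (X ω) - πh (X ω)) / πh (X ω)) * (g (X ω) - gh (X ω)) ∂P|
        ≤ ∫ ω, |((π (X ω) - πh (X ω)) / πh (X ω)) * (g (X ω) - gh (X ω))| ∂P := by
      have := norm_integral_le_integral_norm
        (fun ω => ((π (X ω) - πh (X ω)) / πh (X ω)) * (g (X ω) - gh (X ω))) (μ := P)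
      simpa only [Real.norm_eq_abs] using this
    have h2 : ∫ ω, |((π (X ω) - πh (X ω)) / πh (X ω)) * (g (X ω) - gh (X ω))| ∂P
        ≤ ∫ ω, ε⁻¹ * (|π (X ω) - πh (X ω)| * |g (X ω) - gh (X ω)|) ∂P := by
      apply integral_mono_ae
      · apply intg_of_bdd (((((hπmeas.comp hX).sub (hπhmeas.comp hX)).div
          (hπhmeas.comp hX)).mul
          ((hgmeas.comp hX).sub (hghmeas.comp hX))).abs.aestronglyMeasurable)
          (M := ε⁻¹ * 2 * (B + B))
        filter_upwards [hπdiff_bd] with ω hω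
        show abs (abs (((π (X ω) - πh (X ω)) / πh (X ω)) * (g (X ω) - gh (X ω)))) ≤ _
        rw [abs_abs, abs_mul, abs_div, abs_of_pos (hπh_pos (X ω))]
        apply mul_le_mul _ (hgdiff_bd (X ω)) (abs_nonneg _) (by positivity)
        calc |π (X ω) - πh (X ω)| / πh (X ω) ≤ 2 / ε :=
              div_le_div₀ (by norm_num) hω hε (hπhmem (X ω)).1
          _ = ε⁻¹ * 2 := by rw [div_eq_mul_inv]; ring
      · apply intg_of_bdd ((((((hπmeas.comp hX).sub (hπhmeas.comp hX)).abs.mul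
          ((hgmeas.comp hX).sub (hghmeas.comp hX)).abs)).const_mul ε⁻¹).aestronglyMeasurable)
          (M := ε⁻¹ * (2 * (B + B)))
        filter_upwards [hπdiff_bd] with ω hω
        show |ε⁻¹ * (|π (X ω) - πh (X ω)| * |g (X ω) - gh (X ω)|)| ≤ _
        rw [abs_mul, abs_of_nonneg (inv_nonneg.2 hε.le), abs_mul, abs_abs, abs_abs]
        apply mul_le_mul_of_nonneg_left _ (inv_nonneg.2 hε.le)
        exact mul_le_mul hω (hgdiff_bd (X ω)) (abs_nonneg _) (by norm_num)
      · filter_upwards with ω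
        show |((π (X ω) - πh (X ω)) / πh (X ω)) * (g (X ω) - gh (X ω))|
          ≤ ε⁻¹ * (|π (X ω) - πh (X ω)| * |g (X ω) - gh (X ω)|)
        rw [abs_mul, abs_div, abs_of_pos (hπh_pos (X ω))]
        calc |π (X ω) - πh (X ω)| / πh (X ω) * |g (X ω) - gh (X ω)|
            ≤ (|π (X ω) - πh (X ω)| / ε) * |g (X ω) - gh (X ω)| := by
              apply mul_le_mul_of_nonneg_right _ (abs_nonneg _)
              exact div_le_div_of_nonneg_left (abs_nonneg _) hε (hπhmem (X ω)).1
          _ = ε⁻¹ * (|π (X ω) - πh (X ω)| * |g (X ω) - gh (X ω)|) := by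
              rw [div_eq_mul_inv]; ring
    have h3 : ∫ ω, ε⁻¹ * (|π (X ω) - πh (X ω)| * |g (X ω) - gh (X ω)|) ∂P
        = ε⁻¹ * ∫ ω, |π (X ω) - πh (X ω)| * |g (X ω) - gh (X ω)| ∂P :=
      integral_const_mul _ _
    calc |∫ ω, ((π (X ω) - πh (X ω)) / πh (X ω)) * (g (X ω) - gh (X ω)) ∂P|
        ≤ ∫ ω, ε⁻¹ * (|π (X ω) - πh (X ω)| * |g (X ω) - gh (X ω)|) ∂P := le_trans h1 h2
      _ = ε⁻¹ * ∫ ω, |π (X ω) - πh (X ω)| * |g (X ω) - gh (X ω)| ∂P := h3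
      _ ≤ ε⁻¹ * (Real.sqrt Sπ * Real.sqrt Sg) :=
          mul_le_mul_of_nonneg_left hfinalCS (inv_nonneg.2 hε.le)
  have hsqrtSg : Real.sqrt Sg ≤ B * Real.sqrt νU * Real.sqrt Sξ := by
    calc Real.sqrt Sg ≤ Real.sqrt (B ^ 2 * νU * Sξ) := Real.sqrt_le_sqrt hSg_le
      _ = B * Real.sqrt νU * Real.sqrt Sξ := by
        rw [Real.sqrt_mul (by positivity), Real.sqrt_mul (by positivity),
          Real.sqrt_sq hB0]
  show |(∫ ω, (I ω / πh (X ω)) * ℓ (Y ω, X ω)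
          + (1 - I ω / πh (X ω)) * gh (X ω) ∂P) - ∫ ω, g (X ω) ∂P|
      ≤ B * Real.sqrt νU / ε * Real.sqrt Sπ * Real.sqrt Sξ
  calc |(∫ ω, (I ω / πh (X ω)) * ℓ (Y ω, X ω)
          + (1 - I ω / πh (X ω)) * gh (X ω) ∂P) - ∫ ω, g (X ω) ∂P|
      = |∫ ω, ((π (X ω) - πh (X ω)) / πh (X ω)) * (g (X ω) - gh (X ω)) ∂P| := by rw [key]
    _ ≤ ε⁻¹ * (Real.sqrt Sπ * Real.sqrt Sg) := herr
    _ ≤ ε⁻¹ * (Real.sqrt Sπ * (B * Real.sqrt νU * Real.sqrt Sξ)) := by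
        apply mul_le_mul_of_nonneg_left _ (inv_nonneg.2 hε.le)
        exact mul_le_mul_of_nonneg_left hsqrtSg (Real.sqrt_nonneg _)
    _ = B * Real.sqrt νU / ε * Real.sqrt Sπ * Real.sqrt Sξ := by
        field_simp
end

section
/- Neyman-orthogonality of the GDR risk for conditional normalizing flows: let p*, p : 𝒴 × 𝒳 → [c, C] be measurable candidate conditional densities (∫ p*(y|x) dν(y) = ∫ p(y|x) dν(y) = 1 for all x). For s, t in a neighborhood of 0 define the perturbed nuisances π_s := π_a + s(π̂ − π_a), ξ_s := ξ + s(ξ̂ − ξ), the perturbed target p_t := p* + t(p − p*), and the risk G(s, t) := E[(𝟙{A = a}/π_s(X)) log p_t(Y | X) + (1 − 𝟙{A = a}/π_s(X)) ∫ log p_t(y | X) ξ_s(y | X) dν(y)]. Then there is δ > 0 such that G is well defined for |s|, |t| < δ, for each such s the partial derivative ∂_t G(s, t)|_{t=0} exists, the map s ↦ ∂_t G(s, 0) is differentiable at s = 0, and the mixed pathwise derivative vanishes: (d/ds)|_{s=0} (d/dt)|_{t=0} G(s, t) = 0. -/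
open MeasureTheory ProbabilityTheory

namespace GDRHelpers
open MeasureTheory



lemma integrable_of_bound {α : Type*} [MeasurableSpace α] {μ : Measure α} [IsFiniteMeasure μ]
    {f : α → ℝ} (hf : AEStronglyMeasurable f μ) (B : ℝ) (hB : ∀ x, |f x| ≤ B) :
    Integrable f μ :=
  ⟨hf, HasFiniteIntegral.of_bounded (C := B) (Filter.Eventually.of_forall hB)⟩

lemma sm_param {𝒳 𝒴 : Type*} [MeasurableSpace 𝒳] [MeasurableSpace 𝒴]
    (ν : Measure 𝒴) [SFinite ν] {F : 𝒴 × 𝒳 → ℝ} (hF : Measurable F) :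
    StronglyMeasurable fun x => ∫ y, F (y, x) ∂ν :=
  (hF.comp measurable_swap).stronglyMeasurable.integral_prod_right'

lemma abs_integral_le {𝒴 : Type*} [MeasurableSpace 𝒴] (ν : Measure 𝒴) [IsFiniteMeasure ν]
    (f : 𝒴 → ℝ) (B : ℝ) (hB : ∀ y, |f y| ≤ B) :
    |∫ y, f y ∂ν| ≤ B * (ν Set.univ).toReal := by
  rw [← Real.norm_eq_abs]
  exact norm_integral_le_of_norm_le_const (Filter.Eventually.of_forall
    (fun y => by rw [Real.norm_eq_abs]; exact hB y))

lemma abs_log_le {lo hi x : ℝ} (hlo : 0 < lo) (h1 : lo ≤ x) (h2 : x ≤ hi) :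
    |Real.log x| ≤ max |Real.log lo| |Real.log hi| := by
  rw [abs_le]
  constructor
  · have h := Real.log_le_log hlo h1
    have := neg_abs_le (Real.log lo)
    have := le_max_left |Real.log lo| |Real.log hi|
    linarith
  · have h := Real.log_le_log (hlo.trans_le h1) h2
    have := le_abs_self (Real.log hi)
    have := le_max_right |Real.log lo| |Real.log hi|
    linarith

lemma abs_div_le {n d N lo : ℝ} (hN : |n| ≤ N) (hlo : 0 < lo) (hd : lo ≤ d) :
    |n / d| ≤ N / lo := by
  rw [abs_div, abs_of_nonneg (hlo.le.trans hd)]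
  exact div_le_div₀ (le_trans (abs_nonneg n) hN) hN hlo hd

lemma perturb_mem {c C s v w : ℝ} (hc : 0 < c) (hcC : c ≤ C) (hs : |s| ≤ c / (2 * C))
    (hv : v ∈ Set.Icc c C) (hw : w ∈ Set.Icc c C) :
    c / 2 ≤ v + s * (w - v) ∧ v + s * (w - v) ≤ 2 * C := by
  have hC : 0 < C := hc.trans_le hcC
  obtain ⟨hv1, hv2⟩ := hv
  obtain ⟨hw1, hw2⟩ := hw
  have h1 : |s * (w - v)| ≤ c / 2 := by
    rw [abs_mul]
    have h2 : |w - v| ≤ C - c := by rw [abs_le]; constructor <;> linarith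
    calc |s| * |w - v| ≤ (c / (2 * C)) * (C - c) :=
          mul_le_mul hs h2 (abs_nonneg _) (by positivity)
      _ ≤ c / 2 := by rw [div_mul_eq_mul_div, div_le_div_iff₀ (by positivity) (by norm_num)]; nlinarith
  rw [abs_le] at h1
  constructor <;> nlinarith





lemma hasDerivAt_congr_deriv {f : ℝ → ℝ} {d d' x : ℝ} (h : HasDerivAt f d x) (hd : d = d') :
    HasDerivAt f d' x := hd ▸ h

lemma hasDerivAt_affine (b d t : ℝ) : HasDerivAt (fun u : ℝ => b + u * d) d t := by
  simpa using ((hasDerivAt_id t).mul_const d).const_add b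

lemma hasDerivAt_integral_const_bound {α : Type*} [MeasurableSpace α] {μ : Measure α}
    [IsFiniteMeasure μ] (F F' : ℝ → α → ℝ) (δ B : ℝ) (hδ : 0 < δ)
    (hFmeas : ∀ s, AEStronglyMeasurable (F s) μ)
    (hF0 : Integrable (F 0) μ)
    (hF'meas : AEStronglyMeasurable (F' 0) μ)
    (hbound : ∀ a, ∀ s ∈ Metric.ball (0:ℝ) δ, |F' s a| ≤ B)
    (hdiff : ∀ a, ∀ s ∈ Metric.ball (0:ℝ) δ, HasDerivAt (F · a) (F' s a) s) :
    HasDerivAt (fun s => ∫ a, F s a ∂μ) (∫ a, F' 0 a ∂μ) 0 :=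
  (hasDerivAt_integral_of_dominated_loc_of_deriv_le (Metric.ball_mem_nhds 0 hδ)
    (Filter.Eventually.of_forall hFmeas) hF0 hF'meas
    (Filter.Eventually.of_forall hbound) (integrable_const B)
    (Filter.Eventually.of_forall hdiff)).2

example (a b : ℝ) : |a - b| ≤ |a| + |b| := abs_sub a b

example (t δ : ℝ) : t ∈ Metric.ball (0:ℝ) δ ↔ |t| < δ := by
  rw [Metric.mem_ball, Real.dist_eq, sub_zero]


end GDRHelpers
set_option maxHeartbeats 2000000 in
/-- Neyman-orthogonality of the GDR risk for conditional normalizing flows: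
with perturbed nuisances `π_s := π_a + s(π̂ − π_a)`, `ξ_s := ξ + s(ξ̂ − ξ)` and perturbed
target `p_t := p* + t(p − p*)`, the risk
`G(s, t) := E[(𝟙{A = a}/π_s(X)) log p_t(Y | X)
             + (1 − 𝟙{A = a}/π_s(X)) ∫ log p_t(y | X) ξ_s(y | X) dν(y)]`
is well defined for `|s|, |t| < δ` (some δ > 0), the partial derivative `∂_t G(s, t)|_{t=0}`
exists for each such s, the map `s ↦ ∂_t G(s, 0)` is differentiable at `s = 0`, and the
mixed pathwise derivative vanishes: `(d/ds)|₀ (d/dt)|₀ G(s, t) = 0`. -/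
theorem gdr_neyman_orthogonality_cnf
    {Ω : Type*} [MeasurableSpace Ω]
    (P : Measure Ω) [IsProbabilityMeasure P]
    {𝒳 : Type*} [MeasurableSpace 𝒳] [StandardBorelSpace 𝒳]
    {𝒴 : Type*} [MeasurableSpace 𝒴] [StandardBorelSpace 𝒴]
    (X : Ω → 𝒳) (hX : Measurable X)
    (A : Ω → Bool) (hA : Measurable A)
    (Y : Ω → 𝒴) (hY : Measurable Y)
    (a : Bool)
    -- propensity score: σ(X)-measurable version of E[𝟙{A = a} | σ(X)]
    (π : 𝒳 → ℝ) (hπmeas : Measurable π)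
    (hπver : P[fun ω => (if A ω = a then (1 : ℝ) else 0) |
        MeasurableSpace.comap X inferInstance] =ᵐ[P] fun ω => π (X ω))
    -- strong overlap
    (ε : ℝ) (hε : 0 < ε)
    (hoverlap : ∀ᵐ ω ∂P, ε ≤ π (X ω) ∧ π (X ω) ≤ 1 - ε)
    -- density setup
    (ν : Measure 𝒴) [IsFiniteMeasure ν]
    (c C : ℝ) (hc : 0 < c) (hcC : c ≤ C)
    (ξ : 𝒴 × 𝒳 → ℝ) (hξmeas : Measurable ξ)
    (hξmem : ∀ q, ξ q ∈ Set.Icc c C)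
    (hξnorm : ∀ x, ∫ y, ξ (y, x) ∂ν = 1)
    -- ξ is the conditional outcome density
    (hξdens : ∀ f : 𝒴 × 𝒳 → ℝ, Measurable f → (∃ B : ℝ, ∀ q, |f q| ≤ B) →
      ∫ ω, (if A ω = a then (1 : ℝ) else 0) * f (Y ω, X ω) ∂P
        = ∫ ω, π (X ω) * ∫ y, f (y, X ω) * ξ (y, X ω) ∂ν ∂P)
    -- nuisance estimates
    (πh : 𝒳 → ℝ) (hπhmeas : Measurable πh) (hπhmem : ∀ x, πh x ∈ Set.Icc ε 1)
    (ξh : 𝒴 × 𝒳 → ℝ) (hξhmeas : Measurable ξh)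
    (hξhmem : ∀ q, ξh q ∈ Set.Icc c C)
    (hξhnorm : ∀ x, ∫ y, ξh (y, x) ∂ν = 1)
    -- candidate conditional densities of the target model class
    (pstar p : 𝒴 × 𝒳 → ℝ)
    (hpstarmeas : Measurable pstar) (hpstarmem : ∀ q, pstar q ∈ Set.Icc c C)
    (hpstarnorm : ∀ x, ∫ y, pstar (y, x) ∂ν = 1)
    (hpmeas : Measurable p) (hpmem : ∀ q, p q ∈ Set.Icc c C)
    (hpnorm : ∀ x, ∫ y, p (y, x) ∂ν = 1) :
    ∃ δ > (0 : ℝ),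
      -- G is well defined for |s|, |t| < δ
      (∀ s t : ℝ, |s| < δ → |t| < δ →
        Integrable (fun ω =>
          ((if A ω = a then (1 : ℝ) else 0) / (π (X ω) + s * (πh (X ω) - π (X ω))))
            * Real.log (pstar (Y ω, X ω) + t * (p (Y ω, X ω) - pstar (Y ω, X ω)))
          + (1 - (if A ω = a then (1 : ℝ) else 0) / (π (X ω) + s * (πh (X ω) - π (X ω))))
            * ∫ y, Real.log (pstar (y, X ω) + t * (p (y, X ω) - pstar (y, X ω)))
                * (ξ (y, X ω) + s * (ξh (y, X ω) - ξ (y, X ω))) ∂ν) P)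
      ∧
      ∃ D : ℝ → ℝ,
        -- for each |s| < δ, ∂ₜ G(s, t)|_{t=0} exists and equals D s
        (∀ s : ℝ, |s| < δ →
          HasDerivAt (fun t : ℝ => ∫ ω,
            ((if A ω = a then (1 : ℝ) else 0) / (π (X ω) + s * (πh (X ω) - π (X ω))))
              * Real.log (pstar (Y ω, X ω) + t * (p (Y ω, X ω) - pstar (Y ω, X ω)))
            + (1 - (if A ω = a then (1 : ℝ) else 0) / (π (X ω) + s * (πh (X ω) - π (X ω))))
              * ∫ y, Real.log (pstar (y, X ω) + t * (p (y, X ω) - pstar (y, X ω)))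
                  * (ξ (y, X ω) + s * (ξh (y, X ω) - ξ (y, X ω))) ∂ν ∂P) (D s) 0)
        -- s ↦ ∂ₜ G(s, 0) is differentiable at s = 0 and its derivative there vanishes
        ∧ HasDerivAt D 0 0 := by
  classical
  have hC : 0 < C := hc.trans_le hcC
  have hPne : P ≠ 0 := by
    intro h
    have h1 : P Set.univ = 1 := measure_univ
    rw [h] at h1; simp at h1
  have hne : (MeasureTheory.ae P).NeBot := ae_neBot.mpr hPne
  obtain ⟨ω₀, hω₀⟩ := hoverlap.exists
  have hε2 : ε ≤ 1 - ε := hω₀.1.trans hω₀.2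
  -- indicator
  obtain ⟨ind, hind⟩ : ∃ f : Ω → ℝ, f = fun ω => if A ω = a then (1:ℝ) else 0 := ⟨_, rfl⟩
  have hindmeas : Measurable ind := by
    rw [hind]
    apply Measurable.ite _ measurable_const measurable_const
    exact hA (measurableSet_singleton a)
  have hind01 : ∀ ω, 0 ≤ ind ω ∧ ind ω ≤ 1 := by
    intro ω; simp only [hind]; split <;> norm_num
  -- truncated propensity
  obtain ⟨π', hπ'def⟩ : ∃ f : 𝒳 → ℝ, f = fun x => max ε (min (1 - ε) (π x)) := ⟨_, rfl⟩
  have hπ'meas : Measurable π' := by rw [hπ'def]; exact measurable_const.max (measurable_const.min hπmeas)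
  have hπ'lb : ∀ x, ε ≤ π' x := by rw [hπ'def]; exact fun x => le_max_left _ _
  have hπ'ub : ∀ x, π' x ≤ 1 - ε := by rw [hπ'def]; exact fun x => max_le hε2 (min_le_left _ _)
  have hπ'pos : ∀ x, 0 < π' x := fun x => hε.trans_le (hπ'lb x)
  have hπ'ae : ∀ᵐ ω ∂P, π' (X ω) = π (X ω) := by
    filter_upwards [hoverlap] with ω hω
    simp only [hπ'def]
    rw [min_eq_right hω.2, max_eq_right hω.1]
  -- δ
  obtain ⟨δ, hδdef⟩ : ∃ d : ℝ, d = min (ε/2) (c/(2*C)) := ⟨_, rfl⟩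
  have hδ : 0 < δ := by rw [hδdef]; exact lt_min (by positivity) (by positivity)
  have hδε : δ ≤ ε/2 := by rw [hδdef]; exact min_le_left _ _
  have hδc : δ ≤ c/(2*C) := by rw [hδdef]; exact min_le_right _ _
  -- perturbation families
  obtain ⟨πsf, hπsf⟩ : ∃ f : ℝ → 𝒳 → ℝ, f = fun s x => π' x + s * (πh x - π' x) := ⟨_, rfl⟩
  obtain ⟨ξsf, hξsf⟩ : ∃ f : ℝ → 𝒴 × 𝒳 → ℝ, f = fun s q => ξ q + s * (ξh q - ξ q) := ⟨_, rfl⟩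
  obtain ⟨ptf, hptf⟩ : ∃ f : ℝ → 𝒴 × 𝒳 → ℝ, f = fun t q => pstar q + t * (p q - pstar q) := ⟨_, rfl⟩
  obtain ⟨r, hrdef⟩ : ∃ f : 𝒴 × 𝒳 → ℝ, f = fun q => (p q - pstar q) / pstar q := ⟨_, rfl⟩
  -- range facts
  have hπs_mem : ∀ s : ℝ, |s| < δ → ∀ x, ε/2 ≤ πsf s x ∧ πsf s x ≤ 1 := by
    intro s hs x
    have h1 := hπ'lb x; have h2 := hπ'ub x
    obtain ⟨h3, h4⟩ := hπhmem x
    have habs : |s * (πh x - π' x)| ≤ ε/2 := by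
      rw [abs_mul]
      have hd : |πh x - π' x| ≤ 1 := by rw [abs_le]; constructor <;> linarith
      calc |s| * |πh x - π' x| ≤ (ε/2) * 1 :=
            mul_le_mul (by linarith [hs.le]) hd (abs_nonneg _) (by positivity)
        _ = ε/2 := mul_one _
    rw [abs_le] at habs
    simp only [hπsf]
    constructor <;> linarith
  have hξs_mem : ∀ s : ℝ, |s| < δ → ∀ q, c/2 ≤ ξsf s q ∧ ξsf s q ≤ 2*C :=
    by rw [hξsf]; exact fun s hs q => GDRHelpers.perturb_mem hc hcC (le_trans hs.le hδc) (hξmem q) (hξhmem q)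
  have hpt_mem : ∀ t : ℝ, |t| < δ → ∀ q, c/2 ≤ ptf t q ∧ ptf t q ≤ 2*C :=
    by rw [hptf]; exact fun t ht q => GDRHelpers.perturb_mem hc hcC (le_trans ht.le hδc) (hpstarmem q) (hpmem q)
  -- constants
  obtain ⟨M, hM0, hlogb⟩ :
      ∃ M : ℝ, 0 ≤ M ∧ ∀ x : ℝ, c/2 ≤ x → x ≤ 2*C → |Real.log x| ≤ M :=
    ⟨max |Real.log (c/2)| |Real.log (2*C)|,
      le_trans (abs_nonneg _) (le_max_left _ _),
      fun x h1 h2 => GDRHelpers.abs_log_le (by positivity) h1 h2⟩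
  obtain ⟨νc, hνc0, hνint⟩ :
      ∃ v : ℝ, 0 ≤ v ∧ ∀ (f : 𝒴 → ℝ) (B : ℝ), (∀ y, |f y| ≤ B) → |∫ y, f y ∂ν| ≤ B * v :=
    ⟨(ν Set.univ).toReal, ENNReal.toReal_nonneg,
      fun f B h => GDRHelpers.abs_integral_le ν f B h⟩
  obtain ⟨R, hRdef⟩ : ∃ x : ℝ, x = (C - c)/c := ⟨_, rfl⟩
  have hR0 : 0 ≤ R := by rw [hRdef]; exact div_nonneg (by linarith) hc.le
  have hrabs : ∀ q, |r q| ≤ R := by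
    intro q
    obtain ⟨h1, h2⟩ := hpmem q; obtain ⟨h3, h4⟩ := hpstarmem q
    rw [hrdef, hRdef]
    exact GDRHelpers.abs_div_le (by rw [abs_le]; constructor <;> linarith) hc h3
  have hWabs : ∀ s : ℝ, |s| < δ → ∀ ω, |ind ω / πsf s (X ω)| ≤ 1/(ε/2) := by
    intro s hs ω
    obtain ⟨h1, h2⟩ := hπs_mem s hs (X ω)
    obtain ⟨h3, h4⟩ := hind01 ω
    exact GDRHelpers.abs_div_le (by rw [abs_le]; constructor <;> linarith) (by positivity) h1
  -- measurability package
  have hXq : Measurable (fun z : Ω × 𝒴 => (z.2, X z.1)) :=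
    measurable_snd.prodMk (hX.comp measurable_fst)
  have hπsmeas : ∀ s, Measurable (πsf s) :=
    by rw [hπsf]; exact fun s => hπ'meas.add ((hπhmeas.sub hπ'meas).const_mul s)
  have hξsmeas : ∀ s, Measurable (ξsf s) :=
    by rw [hξsf]; exact fun s => hξmeas.add ((hξhmeas.sub hξmeas).const_mul s)
  have hptmeas : ∀ t, Measurable (ptf t) :=
    by rw [hptf]; exact fun t => hpstarmeas.add ((hpmeas.sub hpstarmeas).const_mul t)
  have hlogpt : ∀ t, Measurable (fun q => Real.log (ptf t q)) :=
    fun t => Real.measurable_log.comp (hptmeas t)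
  have hrmeas : Measurable r := by rw [hrdef]; exact (hpmeas.sub hpstarmeas).div hpstarmeas
  have hWmeas : ∀ s, Measurable (fun ω => ind ω / πsf s (X ω)) :=
    fun s => hindmeas.div ((hπsmeas s).comp hX)
  -- generic integrability helpers
  have hPInt : ∀ (g : Ω → ℝ), AEStronglyMeasurable g P → ∀ B : ℝ, (∀ ω, |g ω| ≤ B) →
      Integrable g P := fun g hg B hB => GDRHelpers.integrable_of_bound hg B hB
  have hμInt : ∀ (g : Ω × 𝒴 → ℝ), AEStronglyMeasurable g (P.prod ν) → ∀ B : ℝ,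
      (∀ z, |g z| ≤ B) → Integrable g (P.prod ν) :=
    fun g hg B hB => GDRHelpers.integrable_of_bound hg B hB
  have hνInt : ∀ (F : 𝒴 × 𝒳 → ℝ), Measurable F → ∀ B : ℝ, (∀ q, |F q| ≤ B) → ∀ x,
      Integrable (fun y => F (y, x)) ν := by
    intro F hF B hB x
    exact GDRHelpers.integrable_of_bound
      ((hF.comp (measurable_id.prodMk measurable_const)).aestronglyMeasurable) B (fun y => hB _)
  -- inner integrals
  have hInnermeas : ∀ s t : ℝ,
      Measurable (fun x => ∫ y, Real.log (ptf t (y, x)) * ξsf s (y, x) ∂ν) :=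
    fun s t => (GDRHelpers.sm_param ν ((hlogpt t).mul (hξsmeas s))).measurable
  have hInnerabs : ∀ s t : ℝ, |s| < δ → |t| < δ → ∀ x,
      |∫ y, Real.log (ptf t (y, x)) * ξsf s (y, x) ∂ν| ≤ M * (2*C) * νc := by
    intro s t hs ht x
    apply hνint
    intro y
    obtain ⟨h1, h2⟩ := hpt_mem t ht (y, x)
    obtain ⟨h3, h4⟩ := hξs_mem s hs (y, x)
    rw [abs_mul]
    have h5 : |ξsf s (y, x)| ≤ 2*C := by rw [abs_le]; constructor <;> linarith
    exact mul_le_mul (hlogb _ h1 h2) h5 (abs_nonneg _) hM0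
  -- a.e. congruence between statement integrand and truncated integrand
  have hae : ∀ s t : ℝ,
      (fun ω => ind ω / πsf s (X ω) * Real.log (ptf t (Y ω, X ω))
        + (1 - ind ω / πsf s (X ω)) * ∫ y, Real.log (ptf t (y, X ω)) * ξsf s (y, X ω) ∂ν)
      =ᵐ[P]
      (fun ω =>
        ((if A ω = a then (1 : ℝ) else 0) / (π (X ω) + s * (πh (X ω) - π (X ω))))
          * Real.log (pstar (Y ω, X ω) + t * (p (Y ω, X ω) - pstar (Y ω, X ω)))
        + (1 - (if A ω = a then (1 : ℝ) else 0) / (π (X ω) + s * (πh (X ω) - π (X ω))))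
          * ∫ y, Real.log (pstar (y, X ω) + t * (p (y, X ω) - pstar (y, X ω)))
              * (ξ (y, X ω) + s * (ξh (y, X ω) - ξ (y, X ω))) ∂ν) := by
    intro s t
    filter_upwards [hπ'ae] with ω hω
    simp only [hπsf, hξsf, hptf, hind, hω]
  have hYX : Measurable (fun ω => (Y ω, X ω)) := hY.prodMk hX
  -- integrability of the three pieces
  have hIntA : ∀ s t : ℝ, |s| < δ → |t| < δ →
      Integrable (fun ω => ind ω / πsf s (X ω) * Real.log (ptf t (Y ω, X ω))) P := by
    intro s t hs ht
    apply hPInt _ (((hWmeas s).mul ((hlogpt t).comp hYX)).aestronglyMeasurable) ((1/(ε/2)) * M)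
    intro ω
    simp only [Pi.mul_apply, Pi.sub_apply, Pi.div_apply, Pi.neg_apply, Pi.add_apply, Function.comp_apply]
    rw [abs_mul]
    obtain ⟨h1, h2⟩ := hpt_mem t ht (Y ω, X ω)
    exact mul_le_mul (hWabs s hs ω) (hlogb _ h1 h2) (abs_nonneg _) (by positivity)
  have h1W : ∀ s : ℝ, |s| < δ → ∀ ω, |1 - ind ω / πsf s (X ω)| ≤ 1 + 1/(ε/2) := by
    intro s hs ω
    calc |1 - ind ω / πsf s (X ω)| ≤ |(1:ℝ)| + |ind ω / πsf s (X ω)| := abs_sub 1 _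
      _ ≤ 1 + 1/(ε/2) := by
          have := hWabs s hs ω
          rw [abs_one]
          linarith
  have hIntInner : ∀ s t : ℝ, |s| < δ → |t| < δ →
      Integrable (fun ω => (1 - ind ω / πsf s (X ω))
        * ∫ y, Real.log (ptf t (y, X ω)) * ξsf s (y, X ω) ∂ν) P := by
    intro s t hs ht
    apply hPInt _ (((measurable_const.sub (hWmeas s)).mul
      ((hInnermeas s t).comp hX)).aestronglyMeasurable) ((1 + 1/(ε/2)) * (M * (2*C) * νc))
    intro ω
    simp only [Pi.mul_apply, Pi.sub_apply, Pi.div_apply, Pi.neg_apply, Pi.add_apply, Function.comp_apply]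
    rw [abs_mul]
    apply mul_le_mul (h1W s hs ω) (hInnerabs s t hs ht (X ω)) (abs_nonneg _) (by positivity)
  have hIntBprod : ∀ s t : ℝ, |s| < δ → |t| < δ →
      Integrable (fun z : Ω × 𝒴 => (1 - ind z.1 / πsf s (X z.1))
        * (Real.log (ptf t (z.2, X z.1)) * ξsf s (z.2, X z.1))) (P.prod ν) := by
    intro s t hs ht
    apply hμInt _ (((measurable_const.sub ((hWmeas s).comp measurable_fst)).mul
      (((hlogpt t).comp hXq).mul ((hξsmeas s).comp hXq))).aestronglyMeasurable)
      ((1 + 1/(ε/2)) * (M * (2*C)))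
    intro z
    simp only [Pi.mul_apply, Pi.sub_apply, Pi.div_apply, Pi.neg_apply, Pi.add_apply, Function.comp_apply]
    rw [abs_mul]
    apply mul_le_mul (h1W s hs z.1) _ (abs_nonneg _) (by positivity)
    rw [abs_mul]
    obtain ⟨h1, h2⟩ := hpt_mem t ht (z.2, X z.1)
    obtain ⟨h3, h4⟩ := hξs_mem s hs (z.2, X z.1)
    have h5 : |ξsf s (z.2, X z.1)| ≤ 2*C := by rw [abs_le]; constructor <;> linarith
    exact mul_le_mul (hlogb _ h1 h2) h5 (abs_nonneg _) hM0
  -- well-definedness (with truncated π')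
  have hwd : ∀ s t : ℝ, |s| < δ → |t| < δ →
      Integrable (fun ω => ind ω / πsf s (X ω) * Real.log (ptf t (Y ω, X ω))
        + (1 - ind ω / πsf s (X ω))
          * ∫ y, Real.log (ptf t (y, X ω)) * ξsf s (y, X ω) ∂ν) P :=
    fun s t hs ht => (hIntA s t hs ht).add (hIntInner s t hs ht)
  -- splitting of the risk into the two pieces
  have hsplit : ∀ s t : ℝ, |s| < δ → |t| < δ →
      ∫ ω, (ind ω / πsf s (X ω) * Real.log (ptf t (Y ω, X ω))
        + (1 - ind ω / πsf s (X ω))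
          * ∫ y, Real.log (ptf t (y, X ω)) * ξsf s (y, X ω) ∂ν) ∂P
      = (∫ ω, ind ω / πsf s (X ω) * Real.log (ptf t (Y ω, X ω)) ∂P)
        + ∫ z, (1 - ind z.1 / πsf s (X z.1))
            * (Real.log (ptf t (z.2, X z.1)) * ξsf s (z.2, X z.1)) ∂(P.prod ν) := by
    intro s t hs ht
    rw [integral_add (hIntA s t hs ht) (hIntInner s t hs ht)]
    congr 1
    calc ∫ ω, (1 - ind ω / πsf s (X ω))
            * ∫ y, Real.log (ptf t (y, X ω)) * ξsf s (y, X ω) ∂ν ∂P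
        = ∫ ω, ∫ y, (1 - ind ω / πsf s (X ω))
            * (Real.log (ptf t (y, X ω)) * ξsf s (y, X ω)) ∂ν ∂P :=
          integral_congr_ae (Filter.Eventually.of_forall fun ω =>
            (integral_const_mul _ _).symm)
      _ = ∫ z, (1 - ind z.1 / πsf s (X z.1))
            * (Real.log (ptf t (z.2, X z.1)) * ξsf s (z.2, X z.1)) ∂(P.prod ν) :=
          integral_integral (hIntBprod s t hs ht)
  have hball : ∀ u : ℝ, u ∈ Metric.ball (0:ℝ) δ ↔ |u| < δ := fun u => by
    rw [Metric.mem_ball, Real.dist_eq, sub_zero]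
  have h0δ : |(0:ℝ)| < δ := by simpa using hδ
  have hppb : ∀ q, |p q - pstar q| ≤ C - c := by
    intro q
    obtain ⟨h1, h2⟩ := hpmem q; obtain ⟨h3, h4⟩ := hpstarmem q
    rw [abs_le]; constructor <;> linarith
  -- Instance A : derivative in t of the first piece
  have hderA : ∀ s : ℝ, |s| < δ →
      HasDerivAt (fun t => ∫ ω, ind ω / πsf s (X ω) * Real.log (ptf t (Y ω, X ω)) ∂P)
        (∫ ω, ind ω / πsf s (X ω) * r (Y ω, X ω) ∂P) 0 := by
    intro s hs
    have h := GDRHelpers.hasDerivAt_integral_const_bound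
      (fun t ω => ind ω / πsf s (X ω) * Real.log (ptf t (Y ω, X ω)))
      (fun t ω => ind ω / πsf s (X ω)
        * ((p (Y ω, X ω) - pstar (Y ω, X ω)) / ptf t (Y ω, X ω)))
      δ ((1/(ε/2)) * ((C - c)/(c/2))) hδ
      (fun t => ((hWmeas s).mul ((hlogpt t).comp hYX)).aestronglyMeasurable)
      (hIntA s 0 hs h0δ)
      (((hWmeas s).mul
        (((hpmeas.comp hYX).sub (hpstarmeas.comp hYX)).div
          ((hptmeas 0).comp hYX))).aestronglyMeasurable)
      ?_ ?_
    · have h' : HasDerivAt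
          (fun t => ∫ ω, ind ω / πsf s (X ω) * Real.log (ptf t (Y ω, X ω)) ∂P)
          (∫ ω, ind ω / πsf s (X ω)
            * ((p (Y ω, X ω) - pstar (Y ω, X ω)) / ptf 0 (Y ω, X ω)) ∂P) 0 := h
      have heq : (∫ ω, ind ω / πsf s (X ω)
            * ((p (Y ω, X ω) - pstar (Y ω, X ω)) / ptf 0 (Y ω, X ω)) ∂P)
          = ∫ ω, ind ω / πsf s (X ω) * r (Y ω, X ω) ∂P := by
        apply integral_congr_ae (Filter.Eventually.of_forall fun ω => ?_)
        rw [hptf, hrdef]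
        simp
      rwa [heq] at h'
    · intro ω t ht
      replace ht := (hball t).mp ht
      rw [abs_mul]
      apply mul_le_mul (hWabs s hs ω) _ (abs_nonneg _) (by positivity)
      exact GDRHelpers.abs_div_le (hppb _) (by positivity) (hpt_mem t ht _).1
    · intro ω t ht
      replace ht := (hball t).mp ht
      have h1 : HasDerivAt (fun u : ℝ => ptf u (Y ω, X ω))
          (p (Y ω, X ω) - pstar (Y ω, X ω)) t := by
        rw [hptf]; exact GDRHelpers.hasDerivAt_affine _ _ t
      have hne0 : ptf t (Y ω, X ω) ≠ 0 :=
        ne_of_gt (lt_of_lt_of_le (by positivity) (hpt_mem t ht _).1)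
      exact HasDerivAt.const_mul _ (h1.log hne0)
  -- Instance B : derivative in t of the second piece (on the product space)
  have hderB : ∀ s : ℝ, |s| < δ →
      HasDerivAt (fun t => ∫ z, (1 - ind z.1 / πsf s (X z.1))
          * (Real.log (ptf t (z.2, X z.1)) * ξsf s (z.2, X z.1)) ∂(P.prod ν))
        (∫ z, (1 - ind z.1 / πsf s (X z.1))
          * (r (z.2, X z.1) * ξsf s (z.2, X z.1)) ∂(P.prod ν)) 0 := by
    intro s hs
    have h := GDRHelpers.hasDerivAt_integral_const_bound
      (fun t (z : Ω × 𝒴) => (1 - ind z.1 / πsf s (X z.1))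
        * (Real.log (ptf t (z.2, X z.1)) * ξsf s (z.2, X z.1)))
      (fun t (z : Ω × 𝒴) => (1 - ind z.1 / πsf s (X z.1))
        * ((p (z.2, X z.1) - pstar (z.2, X z.1)) / ptf t (z.2, X z.1)
            * ξsf s (z.2, X z.1)))
      δ ((1 + 1/(ε/2)) * ((C - c)/(c/2) * (2*C))) hδ
      (fun t => ((measurable_const.sub ((hWmeas s).comp measurable_fst)).mul
        (((hlogpt t).comp hXq).mul ((hξsmeas s).comp hXq))).aestronglyMeasurable)
      (hIntBprod s 0 hs h0δ)
      (((measurable_const.sub ((hWmeas s).comp measurable_fst)).mul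
        ((((hpmeas.comp hXq).sub (hpstarmeas.comp hXq)).div
          ((hptmeas 0).comp hXq)).mul ((hξsmeas s).comp hXq))).aestronglyMeasurable)
      ?_ ?_
    · have h' : HasDerivAt
          (fun t => ∫ z, (1 - ind z.1 / πsf s (X z.1))
            * (Real.log (ptf t (z.2, X z.1)) * ξsf s (z.2, X z.1)) ∂(P.prod ν))
          (∫ z, (1 - ind z.1 / πsf s (X z.1))
            * ((p (z.2, X z.1) - pstar (z.2, X z.1)) / ptf 0 (z.2, X z.1)
                * ξsf s (z.2, X z.1)) ∂(P.prod ν)) 0 := h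
      have heq : (∫ z, (1 - ind z.1 / πsf s (X z.1))
            * ((p (z.2, X z.1) - pstar (z.2, X z.1)) / ptf 0 (z.2, X z.1)
                * ξsf s (z.2, X z.1)) ∂(P.prod ν))
          = ∫ z, (1 - ind z.1 / πsf s (X z.1))
              * (r (z.2, X z.1) * ξsf s (z.2, X z.1)) ∂(P.prod ν) := by
        apply integral_congr_ae (Filter.Eventually.of_forall fun z => ?_)
        rw [hptf, hrdef]
        simp
      rwa [heq] at h'
    · intro z t ht
      replace ht := (hball t).mp ht
      rw [abs_mul]
      apply mul_le_mul (h1W s hs z.1) _ (abs_nonneg _)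
        (by positivity)
      rw [abs_mul]
      have h5 : |ξsf s (z.2, X z.1)| ≤ 2*C := by
        obtain ⟨h3, h4⟩ := hξs_mem s hs (z.2, X z.1)
        rw [abs_le]; constructor <;> linarith
      apply mul_le_mul _ h5 (abs_nonneg _)
        (show (0:ℝ) ≤ (C - c)/(c/2) from div_nonneg (by linarith) (by positivity))
      exact GDRHelpers.abs_div_le (hppb _) (by positivity) (hpt_mem t ht _).1
    · intro z t ht
      replace ht := (hball t).mp ht
      have h1 : HasDerivAt (fun u : ℝ => ptf u (z.2, X z.1))
          (p (z.2, X z.1) - pstar (z.2, X z.1)) t := by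
        rw [hptf]; exact GDRHelpers.hasDerivAt_affine _ _ t
      have hne0 : ptf t (z.2, X z.1) ≠ 0 :=
        ne_of_gt (lt_of_lt_of_le (by positivity) (hpt_mem t ht _).1)
      exact HasDerivAt.const_mul _ ((h1.log hne0).mul_const _)
  -- more pointwise bounds
  have hξabs : ∀ q, |ξ q| ≤ C := by
    intro q; obtain ⟨h1, h2⟩ := hξmem q; rw [abs_le]; constructor <;> linarith
  have hξhξabs : ∀ q, |ξh q - ξ q| ≤ C := by
    intro q; obtain ⟨h1, h2⟩ := hξmem q; obtain ⟨h3, h4⟩ := hξhmem q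
    rw [abs_le]; constructor <;> linarith
  have hπhπ' : ∀ x, |πh x - π' x| ≤ 1 := by
    intro x
    obtain ⟨h1, h2⟩ := hπhmem x
    have h3 := hπ'lb x; have h4 := hπ'ub x
    rw [abs_le]; constructor <;> linarith
  have hπsq : ∀ s : ℝ, |s| < δ → ∀ x, (ε/2)^2 ≤ πsf s x ^ 2 := by
    intro s hs x
    exact pow_le_pow_left₀ (by positivity) (hπs_mem s hs x).1 2
  -- the auxiliary integrals I₁ and ψ
  obtain ⟨I₁, hI₁def⟩ : ∃ f : 𝒳 → ℝ, f = fun x => ∫ y, r (y, x) * ξ (y, x) ∂ν := ⟨_, rfl⟩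
  obtain ⟨ψ, hψdef⟩ : ∃ f : 𝒳 → ℝ, f = fun x => ∫ y, r (y, x) * (ξh (y, x) - ξ (y, x)) ∂ν :=
    ⟨_, rfl⟩
  have hI₁meas : Measurable I₁ := by
    rw [hI₁def]; exact (GDRHelpers.sm_param ν (hrmeas.mul hξmeas)).measurable
  have hψmeas : Measurable ψ := by
    rw [hψdef]; exact (GDRHelpers.sm_param ν (hrmeas.mul (hξhmeas.sub hξmeas))).measurable
  have hrξabs : ∀ q, |r q * ξ q| ≤ R * C := by
    intro q; rw [abs_mul]
    exact mul_le_mul (hrabs q) (hξabs q) (abs_nonneg _) hR0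
  have hrξhabs : ∀ q, |r q * (ξh q - ξ q)| ≤ R * C := by
    intro q; rw [abs_mul]
    exact mul_le_mul (hrabs q) (hξhξabs q) (abs_nonneg _) hR0
  have hI₁b : ∀ x, |I₁ x| ≤ R * C * νc := by
    intro x; rw [hI₁def]
    exact hνint _ _ (fun y => hrξabs (y, x))
  have hψb : ∀ x, |ψ x| ≤ R * C * νc := by
    intro x; rw [hψdef]
    exact hνint _ _ (fun y => hrξhabs (y, x))
  -- Instance C : derivative in s of the first piece of D
  have hderC : HasDerivAt (fun s => ∫ ω, ind ω / πsf s (X ω) * r (Y ω, X ω) ∂P)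
      (∫ ω, -(ind ω * (πh (X ω) - π' (X ω))) / πsf 0 (X ω) ^ 2 * r (Y ω, X ω) ∂P) 0 := by
    apply GDRHelpers.hasDerivAt_integral_const_bound
      (fun s ω => ind ω / πsf s (X ω) * r (Y ω, X ω))
      (fun s ω => -(ind ω * (πh (X ω) - π' (X ω))) / πsf s (X ω) ^ 2 * r (Y ω, X ω))
      δ (1/(ε/2)^2 * R) hδ
      (fun s => ((hWmeas s).mul (hrmeas.comp hYX)).aestronglyMeasurable)
      ?_
      (((hindmeas.mul ((hπhmeas.sub hπ'meas).comp hX)).neg.div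
        (((hπsmeas 0).comp hX).pow_const 2)).mul (hrmeas.comp hYX)).aestronglyMeasurable
      ?_ ?_
    · apply hPInt _ (((hWmeas 0).mul (hrmeas.comp hYX)).aestronglyMeasurable) (1/(ε/2) * R)
      intro ω
      simp only [Pi.mul_apply, Pi.sub_apply, Pi.div_apply, Pi.neg_apply, Pi.add_apply, Function.comp_apply]
      rw [abs_mul]
      exact mul_le_mul (hWabs 0 h0δ ω) (hrabs _) (abs_nonneg _) (by positivity)
    · intro ω s' hs'
      replace hs' := (hball s').mp hs'
      rw [abs_mul]
      apply mul_le_mul _ (hrabs _) (abs_nonneg _) (by positivity)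
      apply GDRHelpers.abs_div_le _ (by positivity) (hπsq s' hs' (X ω))
      rw [abs_neg, abs_mul]
      calc |ind ω| * |πh (X ω) - π' (X ω)| ≤ 1 * 1 :=
            mul_le_mul (by rw [abs_le]; constructor <;> [linarith [(hind01 ω).1];
              exact (hind01 ω).2]) (hπhπ' _) (abs_nonneg _) zero_le_one
        _ = 1 := one_mul 1
    · intro ω s' hs'
      replace hs' := (hball s').mp hs'
      have h1 : HasDerivAt (fun u : ℝ => πsf u (X ω)) (πh (X ω) - π' (X ω)) s' := by
        rw [hπsf]; exact GDRHelpers.hasDerivAt_affine _ _ s'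
      have hne0 : πsf s' (X ω) ≠ 0 :=
        ne_of_gt (lt_of_lt_of_le (by positivity) (hπs_mem s' hs' (X ω)).1)
      have h2 := ((hasDerivAt_const s' (ind ω)).div h1 hne0).mul_const (r (Y ω, X ω))
      exact GDRHelpers.hasDerivAt_congr_deriv h2 (by ring)
  -- Instance D : derivative in s of the second piece of D
  have hderD : HasDerivAt (fun s => ∫ z, (1 - ind z.1 / πsf s (X z.1))
        * (r (z.2, X z.1) * ξsf s (z.2, X z.1)) ∂(P.prod ν))
      (∫ z, (ind z.1 * (πh (X z.1) - π' (X z.1)) / πsf 0 (X z.1) ^ 2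
          * (r (z.2, X z.1) * ξsf 0 (z.2, X z.1))
        + (1 - ind z.1 / πsf 0 (X z.1))
          * (r (z.2, X z.1) * (ξh (z.2, X z.1) - ξ (z.2, X z.1)))) ∂(P.prod ν)) 0 := by
    apply GDRHelpers.hasDerivAt_integral_const_bound
      (fun s (z : Ω × 𝒴) => (1 - ind z.1 / πsf s (X z.1))
        * (r (z.2, X z.1) * ξsf s (z.2, X z.1)))
      (fun s (z : Ω × 𝒴) => ind z.1 * (πh (X z.1) - π' (X z.1)) / πsf s (X z.1) ^ 2
          * (r (z.2, X z.1) * ξsf s (z.2, X z.1))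
        + (1 - ind z.1 / πsf s (X z.1))
          * (r (z.2, X z.1) * (ξh (z.2, X z.1) - ξ (z.2, X z.1))))
      δ (1/(ε/2)^2 * (R * (2*C)) + (1 + 1/(ε/2)) * (R * C)) hδ
      (fun s => ((measurable_const.sub ((hWmeas s).comp measurable_fst)).mul
        ((hrmeas.comp hXq).mul ((hξsmeas s).comp hXq))).aestronglyMeasurable)
      ?_
      (Measurable.aestronglyMeasurable
        (((((hindmeas.comp measurable_fst).mul
          ((hπhmeas.sub hπ'meas).comp (hX.comp measurable_fst))).div
          (((hπsmeas 0).comp (hX.comp measurable_fst)).pow_const 2)).mul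
          ((hrmeas.comp hXq).mul ((hξsmeas 0).comp hXq))).add
        ((measurable_const.sub ((hWmeas 0).comp measurable_fst)).mul
          ((hrmeas.comp hXq).mul ((hξhmeas.sub hξmeas).comp hXq)))))
      ?_ ?_
    · apply hμInt _ (((measurable_const.sub ((hWmeas 0).comp measurable_fst)).mul
        ((hrmeas.comp hXq).mul ((hξsmeas 0).comp hXq))).aestronglyMeasurable)
        ((1 + 1/(ε/2)) * (R * (2*C)))
      intro z
      simp only [Pi.mul_apply, Pi.sub_apply, Pi.div_apply, Pi.neg_apply, Pi.add_apply, Function.comp_apply]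
      rw [abs_mul]
      apply mul_le_mul (h1W 0 h0δ z.1) _ (abs_nonneg _) (by positivity)
      rw [abs_mul]
      have h5 : |ξsf 0 (z.2, X z.1)| ≤ 2*C := by
        obtain ⟨h3, h4⟩ := hξs_mem 0 h0δ (z.2, X z.1)
        rw [abs_le]; constructor <;> linarith
      exact mul_le_mul (hrabs _) h5 (abs_nonneg _) hR0
    · intro z s' hs'
      replace hs' := (hball s').mp hs'
      apply le_trans (abs_add_le _ _)
      have hb1 : |ind z.1 * (πh (X z.1) - π' (X z.1)) / πsf s' (X z.1) ^ 2
          * (r (z.2, X z.1) * ξsf s' (z.2, X z.1))| ≤ 1/(ε/2)^2 * (R * (2*C)) := by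
        rw [abs_mul]
        apply mul_le_mul _ _ (abs_nonneg _) (by positivity)
        · apply GDRHelpers.abs_div_le _ (by positivity) (hπsq s' hs' (X z.1))
          rw [abs_mul]
          calc |ind z.1| * |πh (X z.1) - π' (X z.1)| ≤ 1 * 1 :=
                mul_le_mul (by rw [abs_le]; constructor <;> [linarith [(hind01 z.1).1];
                  exact (hind01 z.1).2]) (hπhπ' _) (abs_nonneg _) zero_le_one
            _ = 1 := one_mul 1
        · rw [abs_mul]
          have h5 : |ξsf s' (z.2, X z.1)| ≤ 2*C := by
            obtain ⟨h3, h4⟩ := hξs_mem s' hs' (z.2, X z.1)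
            rw [abs_le]; constructor <;> linarith
          exact mul_le_mul (hrabs _) h5 (abs_nonneg _) hR0
      have hb2 : |(1 - ind z.1 / πsf s' (X z.1))
          * (r (z.2, X z.1) * (ξh (z.2, X z.1) - ξ (z.2, X z.1)))| ≤ (1 + 1/(ε/2)) * (R * C) := by
        rw [abs_mul]
        exact mul_le_mul (h1W s' hs' z.1) (hrξhabs _) (abs_nonneg _) (by positivity)
      linarith
    · intro z s' hs'
      replace hs' := (hball s').mp hs'
      have h1 : HasDerivAt (fun u : ℝ => πsf u (X z.1)) (πh (X z.1) - π' (X z.1)) s' := by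
        rw [hπsf]; exact GDRHelpers.hasDerivAt_affine _ _ s'
      have hne0 : πsf s' (X z.1) ≠ 0 :=
        ne_of_gt (lt_of_lt_of_le (by positivity) (hπs_mem s' hs' (X z.1)).1)
      have hu : HasDerivAt (fun u => 1 - ind z.1 / πsf u (X z.1))
          (ind z.1 * (πh (X z.1) - π' (X z.1)) / πsf s' (X z.1) ^ 2) s' := by
        have h2 := (hasDerivAt_const s' (1:ℝ)).sub ((hasDerivAt_const s' (ind z.1)).div h1 hne0)
        exact GDRHelpers.hasDerivAt_congr_deriv h2 (by ring)
      have haf : HasDerivAt (fun u : ℝ => ξsf u (z.2, X z.1))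
          (ξh (z.2, X z.1) - ξ (z.2, X z.1)) s' := by
        rw [hξsf]; exact GDRHelpers.hasDerivAt_affine _ _ s'
      have hv : HasDerivAt (fun u => r (z.2, X z.1) * ξsf u (z.2, X z.1))
          (r (z.2, X z.1) * (ξh (z.2, X z.1) - ξ (z.2, X z.1))) s' :=
        HasDerivAt.const_mul _ haf
      exact GDRHelpers.hasDerivAt_congr_deriv (hu.mul hv) (by ring)
  -- φ and fbig
  obtain ⟨φ, hφdef⟩ : ∃ f : 𝒳 → ℝ, f = fun x => (πh x - π' x) / π' x ^ 2 := ⟨_, rfl⟩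
  obtain ⟨fbig, hfbigdef⟩ : ∃ f : 𝒴 × 𝒳 → ℝ,
      f = fun q => φ q.2 * I₁ q.2 - φ q.2 * r q - ψ q.2 / π' q.2 := ⟨_, rfl⟩
  have hφmeas : Measurable φ := by
    rw [hφdef]; exact (hπhmeas.sub hπ'meas).div (hπ'meas.pow_const 2)
  have hφb : ∀ x, |φ x| ≤ 1/ε^2 := by
    intro x
    simp only [hφdef]
    exact GDRHelpers.abs_div_le (hπhπ' x) (by positivity)
      (pow_le_pow_left₀ hε.le (hπ'lb x) 2)
  have hfbigmeas : Measurable fbig := by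
    rw [hfbigdef]
    exact (((hφmeas.comp measurable_snd).mul (hI₁meas.comp measurable_snd)).sub
      ((hφmeas.comp measurable_snd).mul hrmeas)).sub
      ((hψmeas.comp measurable_snd).div (hπ'meas.comp measurable_snd))
  have hfbigb : ∀ q, |fbig q| ≤ 1/ε^2 * (R*C*νc) + 1/ε^2 * R + R*C*νc/ε := by
    intro q
    simp only [hfbigdef]
    have h1 : |φ q.2 * I₁ q.2 - φ q.2 * r q - ψ q.2 / π' q.2|
        ≤ |φ q.2 * I₁ q.2 - φ q.2 * r q| + |ψ q.2 / π' q.2| := abs_sub _ _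
    have h2 : |φ q.2 * I₁ q.2 - φ q.2 * r q| ≤ |φ q.2 * I₁ q.2| + |φ q.2 * r q| := abs_sub _ _
    have h3 : |φ q.2 * I₁ q.2| ≤ 1/ε^2 * (R*C*νc) := by
      rw [abs_mul]
      exact mul_le_mul (hφb _) (hI₁b _) (abs_nonneg _) (by positivity)
    have h4 : |φ q.2 * r q| ≤ 1/ε^2 * R := by
      rw [abs_mul]
      exact mul_le_mul (hφb _) (hrabs _) (abs_nonneg _) (by positivity)
    have h5 : |ψ q.2 / π' q.2| ≤ R*C*νc/ε :=
      GDRHelpers.abs_div_le (hψb _) hε (hπ'lb _)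
    linarith
  -- one key integrability on the product space
  have hIntF'D0 : Integrable (fun z : Ω × 𝒴 =>
      ind z.1 * (πh (X z.1) - π' (X z.1)) / πsf 0 (X z.1) ^ 2
        * (r (z.2, X z.1) * ξsf 0 (z.2, X z.1))
      + (1 - ind z.1 / πsf 0 (X z.1))
        * (r (z.2, X z.1) * (ξh (z.2, X z.1) - ξ (z.2, X z.1)))) (P.prod ν) := by
    apply hμInt (fun z : Ω × 𝒴 =>
      ind z.1 * (πh (X z.1) - π' (X z.1)) / πsf 0 (X z.1) ^ 2
        * (r (z.2, X z.1) * ξsf 0 (z.2, X z.1))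
      + (1 - ind z.1 / πsf 0 (X z.1))
        * (r (z.2, X z.1) * (ξh (z.2, X z.1) - ξ (z.2, X z.1)))) (Measurable.aestronglyMeasurable
      (((((hindmeas.comp measurable_fst).mul
        ((hπhmeas.sub hπ'meas).comp (hX.comp measurable_fst))).div
        (((hπsmeas 0).comp (hX.comp measurable_fst)).pow_const 2)).mul
        ((hrmeas.comp hXq).mul ((hξsmeas 0).comp hXq))).add
      ((measurable_const.sub ((hWmeas 0).comp measurable_fst)).mul
        ((hrmeas.comp hXq).mul ((hξhmeas.sub hξmeas).comp hXq)))))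
      (1/(ε/2)^2 * (R * (2*C)) + (1 + 1/(ε/2)) * (R * C))
    intro z
    apply le_trans (abs_add_le _ _)
    have hb1 : |ind z.1 * (πh (X z.1) - π' (X z.1)) / πsf 0 (X z.1) ^ 2
        * (r (z.2, X z.1) * ξsf 0 (z.2, X z.1))| ≤ 1/(ε/2)^2 * (R * (2*C)) := by
      rw [abs_mul]
      apply mul_le_mul _ _ (abs_nonneg _) (by positivity)
      · apply GDRHelpers.abs_div_le _ (by positivity) (hπsq 0 h0δ (X z.1))
        rw [abs_mul]
        calc |ind z.1| * |πh (X z.1) - π' (X z.1)| ≤ 1 * 1 :=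
              mul_le_mul (by rw [abs_le]; constructor <;> [linarith [(hind01 z.1).1];
                exact (hind01 z.1).2]) (hπhπ' _) (abs_nonneg _) zero_le_one
          _ = 1 := one_mul 1
      · rw [abs_mul]
        have h5 : |ξsf 0 (z.2, X z.1)| ≤ 2*C := by
          obtain ⟨h3, h4⟩ := hξs_mem 0 h0δ (z.2, X z.1)
          rw [abs_le]; constructor <;> linarith
        exact mul_le_mul (hrabs _) h5 (abs_nonneg _) hR0
    have hb2 : |(1 - ind z.1 / πsf 0 (X z.1))
        * (r (z.2, X z.1) * (ξh (z.2, X z.1) - ξ (z.2, X z.1)))| ≤ (1 + 1/(ε/2)) * (R * C) := by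
      rw [abs_mul]
      exact mul_le_mul (h1W 0 h0δ z.1) (hrξhabs _) (abs_nonneg _) (by positivity)
    linarith
  -- remaining integrabilities over P
  have hIntE1 : Integrable (fun ω =>
      -(ind ω * (πh (X ω) - π' (X ω))) / πsf 0 (X ω) ^ 2 * r (Y ω, X ω)) P := by
    apply hPInt _ (((hindmeas.mul ((hπhmeas.sub hπ'meas).comp hX)).neg.div
      (((hπsmeas 0).comp hX).pow_const 2)).mul (hrmeas.comp hYX)).aestronglyMeasurable
      (1/(ε/2)^2 * R)
    intro ω
    simp only [Pi.mul_apply, Pi.sub_apply, Pi.div_apply, Pi.neg_apply, Pi.add_apply, Function.comp_apply]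
    rw [abs_mul]
    apply mul_le_mul _ (hrabs _) (abs_nonneg _) (by positivity)
    apply GDRHelpers.abs_div_le _ (by positivity) (hπsq 0 h0δ (X ω))
    rw [abs_neg, abs_mul]
    calc |ind ω| * |πh (X ω) - π' (X ω)| ≤ 1 * 1 :=
          mul_le_mul (by rw [abs_le]; constructor <;> [linarith [(hind01 ω).1];
            exact (hind01 ω).2]) (hπhπ' _) (abs_nonneg _) zero_le_one
      _ = 1 := one_mul 1
  have hIntE2' : Integrable (fun ω =>
      ind ω * (πh (X ω) - π' (X ω)) / πsf 0 (X ω) ^ 2 * I₁ (X ω)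
      + (1 - ind ω / πsf 0 (X ω)) * ψ (X ω)) P := by
    apply hPInt (fun ω =>
      ind ω * (πh (X ω) - π' (X ω)) / πsf 0 (X ω) ^ 2 * I₁ (X ω)
      + (1 - ind ω / πsf 0 (X ω)) * ψ (X ω)) ((((hindmeas.mul ((hπhmeas.sub hπ'meas).comp hX)).div
      (((hπsmeas 0).comp hX).pow_const 2)).mul (hI₁meas.comp hX)).add
      ((measurable_const.sub (hWmeas 0)).mul (hψmeas.comp hX))).aestronglyMeasurable
      (1/(ε/2)^2 * (R*C*νc) + (1 + 1/(ε/2)) * (R*C*νc))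
    intro ω
    apply le_trans (abs_add_le _ _)
    have hb1 : |ind ω * (πh (X ω) - π' (X ω)) / πsf 0 (X ω) ^ 2 * I₁ (X ω)|
        ≤ 1/(ε/2)^2 * (R*C*νc) := by
      rw [abs_mul]
      apply mul_le_mul _ (hI₁b _) (abs_nonneg _) (by positivity)
      apply GDRHelpers.abs_div_le _ (by positivity) (hπsq 0 h0δ (X ω))
      rw [abs_mul]
      calc |ind ω| * |πh (X ω) - π' (X ω)| ≤ 1 * 1 :=
            mul_le_mul (by rw [abs_le]; constructor <;> [linarith [(hind01 ω).1];
              exact (hind01 ω).2]) (hπhπ' _) (abs_nonneg _) zero_le_one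
        _ = 1 := one_mul 1
    have hb2 : |(1 - ind ω / πsf 0 (X ω)) * ψ (X ω)| ≤ (1 + 1/(ε/2)) * (R*C*νc) := by
      rw [abs_mul]
      exact mul_le_mul (h1W 0 h0δ ω) (hψb _) (abs_nonneg _) (by positivity)
    linarith
  have hIntψX : Integrable (fun ω => ψ (X ω)) P :=
    hPInt _ ((hψmeas.comp hX).aestronglyMeasurable) (R*C*νc) (fun ω => hψb (X ω))
  have hIntfbigYX : Integrable (fun ω => ind ω * fbig (Y ω, X ω)) P := by
    apply hPInt _ ((hindmeas.mul (hfbigmeas.comp hYX)).aestronglyMeasurable)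
      (1/ε^2 * (R*C*νc) + 1/ε^2 * R + R*C*νc/ε)
    intro ω
    simp only [Pi.mul_apply, Pi.sub_apply, Pi.div_apply, Pi.neg_apply, Pi.add_apply, Function.comp_apply]
    rw [abs_mul]
    calc |ind ω| * |fbig (Y ω, X ω)| ≤ 1 * (1/ε^2 * (R*C*νc) + 1/ε^2 * R + R*C*νc/ε) :=
          mul_le_mul (by rw [abs_le]; constructor <;> [linarith [(hind01 ω).1];
            exact (hind01 ω).2]) (hfbigb _) (abs_nonneg _) zero_le_one
      _ = _ := one_mul _
  -- the inner ν-integral of fbig against ξ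
  have hinner : ∀ x, (∫ y, fbig (y, x) * ξ (y, x) ∂ν) = -(ψ x / π' x) := by
    intro x
    have hia : Integrable (fun y => φ x * I₁ x * ξ (y, x)) ν :=
      (hνInt ξ hξmeas C hξabs x).const_mul _
    have hib : Integrable (fun y => φ x * (r (y, x) * ξ (y, x))) ν :=
      (hνInt _ (hrmeas.mul hξmeas) (R*C) hrξabs x).const_mul _
    have hic : Integrable (fun y => ψ x / π' x * ξ (y, x)) ν :=
      (hνInt ξ hξmeas C hξabs x).const_mul _
    calc ∫ y, fbig (y, x) * ξ (y, x) ∂ν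
        = ∫ y, (φ x * I₁ x * ξ (y, x) - φ x * (r (y, x) * ξ (y, x))
            - ψ x / π' x * ξ (y, x)) ∂ν :=
          integral_congr_ae (Filter.Eventually.of_forall fun y => by
            simp only [hfbigdef]; ring)
      _ = (∫ y, (φ x * I₁ x * ξ (y, x) - φ x * (r (y, x) * ξ (y, x))) ∂ν)
            - ∫ y, ψ x / π' x * ξ (y, x) ∂ν := integral_sub (hia.sub hib) hic
      _ = ((∫ y, φ x * I₁ x * ξ (y, x) ∂ν) - ∫ y, φ x * (r (y, x) * ξ (y, x)) ∂ν)
            - ∫ y, ψ x / π' x * ξ (y, x) ∂ν := by rw [integral_sub hia hib]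
      _ = -(ψ x / π' x) := by
          rw [integral_const_mul, integral_const_mul, integral_const_mul, hξnorm x]
          simp only [hI₁def]
          ring
  -- the density identity applied to fbig
  have hdens' : ∫ ω, ind ω * fbig (Y ω, X ω) ∂P
      = ∫ ω, π (X ω) * ∫ y, fbig (y, X ω) * ξ (y, X ω) ∂ν ∂P := by
    rw [hind]
    exact hξdens fbig hfbigmeas ⟨_, hfbigb⟩
  have hRHS : ∫ ω, π (X ω) * ∫ y, fbig (y, X ω) * ξ (y, X ω) ∂ν ∂P
      = - ∫ ω, ψ (X ω) ∂P := by
    rw [← integral_neg]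
    apply integral_congr_ae
    filter_upwards [hπ'ae] with ω hω
    rw [hinner (X ω), ← hω]
    have h0 : π' (X ω) ≠ 0 := ne_of_gt (hπ'pos (X ω))
    field_simp
  -- iterated form of the product integral
  have hE2 : (∫ z, (ind z.1 * (πh (X z.1) - π' (X z.1)) / πsf 0 (X z.1) ^ 2
          * (r (z.2, X z.1) * ξsf 0 (z.2, X z.1))
        + (1 - ind z.1 / πsf 0 (X z.1))
          * (r (z.2, X z.1) * (ξh (z.2, X z.1) - ξ (z.2, X z.1)))) ∂(P.prod ν))
      = ∫ ω, (ind ω * (πh (X ω) - π' (X ω)) / πsf 0 (X ω) ^ 2 * I₁ (X ω)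
          + (1 - ind ω / πsf 0 (X ω)) * ψ (X ω)) ∂P := by
    rw [integral_prod _ hIntF'D0]
    apply integral_congr_ae (Filter.Eventually.of_forall fun ω => ?_)
    have hia : Integrable (fun y => ind ω * (πh (X ω) - π' (X ω)) / πsf 0 (X ω) ^ 2
        * (r (y, X ω) * ξ (y, X ω))) ν :=
      (hνInt _ (hrmeas.mul hξmeas) (R*C) hrξabs (X ω)).const_mul _
    have hib : Integrable (fun y => (1 - ind ω / πsf 0 (X ω))
        * (r (y, X ω) * (ξh (y, X ω) - ξ (y, X ω)))) ν :=
      (hνInt _ (hrmeas.mul (hξhmeas.sub hξmeas)) (R*C) hrξhabs (X ω)).const_mul _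
    calc ∫ y, (ind ω * (πh (X ω) - π' (X ω)) / πsf 0 (X ω) ^ 2
            * (r (y, X ω) * ξsf 0 (y, X ω))
          + (1 - ind ω / πsf 0 (X ω))
            * (r (y, X ω) * (ξh (y, X ω) - ξ (y, X ω)))) ∂ν
        = ∫ y, (ind ω * (πh (X ω) - π' (X ω)) / πsf 0 (X ω) ^ 2
            * (r (y, X ω) * ξ (y, X ω))
          + (1 - ind ω / πsf 0 (X ω))
            * (r (y, X ω) * (ξh (y, X ω) - ξ (y, X ω)))) ∂ν :=
          integral_congr_ae (Filter.Eventually.of_forall fun y => by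
            simp only [hξsf]; ring)
      _ = ind ω * (πh (X ω) - π' (X ω)) / πsf 0 (X ω) ^ 2 * I₁ (X ω)
          + (1 - ind ω / πsf 0 (X ω)) * ψ (X ω) := by
          rw [integral_add hia hib, integral_const_mul, integral_const_mul]
          simp only [hI₁def, hψdef]
  -- the mixed derivative vanishes
  have hzero : (∫ ω, -(ind ω * (πh (X ω) - π' (X ω))) / πsf 0 (X ω) ^ 2 * r (Y ω, X ω) ∂P)
      + (∫ z, (ind z.1 * (πh (X z.1) - π' (X z.1)) / πsf 0 (X z.1) ^ 2
          * (r (z.2, X z.1) * ξsf 0 (z.2, X z.1))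
        + (1 - ind z.1 / πsf 0 (X z.1))
          * (r (z.2, X z.1) * (ξh (z.2, X z.1) - ξ (z.2, X z.1)))) ∂(P.prod ν)) = 0 := by
    rw [hE2]
    have hptw : ∀ ω, (-(ind ω * (πh (X ω) - π' (X ω))) / πsf 0 (X ω) ^ 2 * r (Y ω, X ω)
        + (ind ω * (πh (X ω) - π' (X ω)) / πsf 0 (X ω) ^ 2 * I₁ (X ω)
          + (1 - ind ω / πsf 0 (X ω)) * ψ (X ω)))
        = ind ω * fbig (Y ω, X ω) + ψ (X ω) := by
      intro ω
      have h0 : πsf 0 (X ω) = π' (X ω) := by simp [hπsf]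
      have hne : π' (X ω) ≠ 0 := ne_of_gt (hπ'pos _)
      rw [h0]
      simp only [hfbigdef, hφdef]
      field_simp
      ring
    calc (∫ ω, -(ind ω * (πh (X ω) - π' (X ω))) / πsf 0 (X ω) ^ 2 * r (Y ω, X ω) ∂P)
        + (∫ ω, (ind ω * (πh (X ω) - π' (X ω)) / πsf 0 (X ω) ^ 2 * I₁ (X ω)
            + (1 - ind ω / πsf 0 (X ω)) * ψ (X ω)) ∂P)
        = ∫ ω, (-(ind ω * (πh (X ω) - π' (X ω))) / πsf 0 (X ω) ^ 2 * r (Y ω, X ω)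
            + (ind ω * (πh (X ω) - π' (X ω)) / πsf 0 (X ω) ^ 2 * I₁ (X ω)
              + (1 - ind ω / πsf 0 (X ω)) * ψ (X ω))) ∂P :=
          (integral_add hIntE1 hIntE2').symm
      _ = ∫ ω, (ind ω * fbig (Y ω, X ω) + ψ (X ω)) ∂P :=
          integral_congr_ae (Filter.Eventually.of_forall hptw)
      _ = (∫ ω, ind ω * fbig (Y ω, X ω) ∂P) + ∫ ω, ψ (X ω) ∂P :=
          integral_add hIntfbigYX hIntψX
      _ = (- ∫ ω, ψ (X ω) ∂P) + ∫ ω, ψ (X ω) ∂P := by rw [hdens', hRHS]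
      _ = 0 := by ring
  -- final assembly
  refine ⟨δ, hδ, ?_, fun s => (∫ ω, ind ω / πsf s (X ω) * r (Y ω, X ω) ∂P)
    + ∫ z, (1 - ind z.1 / πsf s (X z.1))
        * (r (z.2, X z.1) * ξsf s (z.2, X z.1)) ∂(P.prod ν), ?_, ?_⟩
  · intro s t hs ht
    exact (hwd s t hs ht).congr (hae s t)
  · intro s hs
    have hsum := (hderA s hs).add (hderB s hs)
    have hev : (fun t : ℝ => ∫ ω,
        ((if A ω = a then (1 : ℝ) else 0) / (π (X ω) + s * (πh (X ω) - π (X ω))))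
          * Real.log (pstar (Y ω, X ω) + t * (p (Y ω, X ω) - pstar (Y ω, X ω)))
        + (1 - (if A ω = a then (1 : ℝ) else 0) / (π (X ω) + s * (πh (X ω) - π (X ω))))
          * ∫ y, Real.log (pstar (y, X ω) + t * (p (y, X ω) - pstar (y, X ω)))
              * (ξ (y, X ω) + s * (ξh (y, X ω) - ξ (y, X ω))) ∂ν ∂P)
        =ᶠ[nhds (0:ℝ)]
        (fun t => (∫ ω, ind ω / πsf s (X ω) * Real.log (ptf t (Y ω, X ω)) ∂P)
          + ∫ z, (1 - ind z.1 / πsf s (X z.1))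
              * (Real.log (ptf t (z.2, X z.1)) * ξsf s (z.2, X z.1)) ∂(P.prod ν)) := by
      filter_upwards [Metric.ball_mem_nhds (0:ℝ) hδ] with t ht
      rw [← hsplit s t hs ((hball t).mp ht)]
      exact (integral_congr_ae (hae s t)).symm
    exact hsum.congr_of_eventuallyEq hev
  · exact GDRHelpers.hasDerivAt_congr_deriv (hderC.add hderD) hzero
end

section
/- Neyman-orthogonality of the GDR risk for conditional GANs (with the optimal discriminator plugged in): let p*, p : 𝒴 × 𝒳 → [c, C] be measurable candidate generator densities (∫ p*(y|x) dν(y) = ∫ p(y|x) dν(y) = 1 for all x). For s, t near 0 define π_s := π_a + s(π̂ − π_a), ξ_s := ξ + s(ξ̂ − ξ), the perturbed pseudo-density ξ̃_s(X, A, y) := (𝟙{A = a}/π_s(X))(ξ(y|X) − ξ_s(y|X)) + ξ_s(y|X), the perturbed target p_t := p* + t(p − p*), and G(s, t) := E[∫ ( ξ̃_s(X, A, y) · log(ξ̃_s(X, A, y)/(ξ̃_s(X, A, y) + p_t(y|X))) + p_t(y|X) · log(p_t(y|X)/(ξ̃_s(X, A, y) + p_t(y|X))) ) dν(y)]. Then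 there is δ > 0 such that G is well defined for |s|, |t| < δ and the mixed pathwise derivative vanishes: (d/ds)|_{s=0} (d/dt)|_{t=0} G(s, t) = 0. -/
open MeasureTheory ProbabilityTheory

private lemma auxLog {L U x : ℝ} (hL : 0 < L) (h1 : L ≤ x) (h2 : x ≤ U) :
    |Real.log x| ≤ |Real.log L| + |Real.log U| := by
  have l1 : Real.log L ≤ Real.log x := Real.log_le_log hL h1
  have l2 : Real.log x ≤ Real.log U := Real.log_le_log (hL.trans_le h1) h2
  rw [abs_le]
  constructor
  · have := neg_abs_le (Real.log L); have := abs_nonneg (Real.log U); linarith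
  · have := le_abs_self (Real.log U); have := abs_nonneg (Real.log L); linarith

private lemma auxXLogX {L U x : ℝ} (hL : 0 < L) (h1 : L ≤ x) (h2 : x ≤ U) :
    |x * Real.log x| ≤ U * (|Real.log L| + |Real.log U|) := by
  rw [abs_mul]
  have h3 : |x| ≤ U := by rw [abs_of_pos (hL.trans_le h1)]; exact h2
  exact mul_le_mul h3 (auxLog hL h1 h2) (abs_nonneg _) (by linarith [abs_nonneg x, hL.trans_le h1])

private lemma auxPhiBound {L U a b : ℝ} (hL : 0 < L) (ha1 : L ≤ a) (ha2 : a ≤ U)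
    (hb1 : L ≤ b) (hb2 : b ≤ U) :
    |a * Real.log a + b * Real.log b - (a + b) * Real.log (a + b)|
      ≤ 3 * ((2*U) * (|Real.log L| + |Real.log (2*U)|)) := by
  have hU : 0 < U := hL.trans_le (ha1.trans ha2)
  have h1 : |a * Real.log a| ≤ (2*U) * (|Real.log L| + |Real.log (2*U)|) :=
    auxXLogX hL ha1 (by linarith)
  have h2 : |b * Real.log b| ≤ (2*U) * (|Real.log L| + |Real.log (2*U)|) :=
    auxXLogX hL hb1 (by linarith)
  have h3 : |(a+b) * Real.log (a+b)| ≤ (2*U) * (|Real.log L| + |Real.log (2*U)|) :=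
    auxXLogX hL (by linarith) (by linarith)
  calc |a * Real.log a + b * Real.log b - (a + b) * Real.log (a + b)|
      ≤ |a * Real.log a + b * Real.log b| + |(a+b) * Real.log (a+b)| := abs_sub _ _
    _ ≤ |a * Real.log a| + |b * Real.log b| + |(a+b) * Real.log (a+b)| := by
        have := abs_add_le (a * Real.log a) (b * Real.log b); linarith
    _ ≤ _ := by linarith

private lemma auxOrigBound {L U a b : ℝ} (hL : 0 < L) (ha1 : L ≤ a) (ha2 : a ≤ U)
    (hb1 : L ≤ b) (hb2 : b ≤ U) :
    |a * Real.log (a/(a+b)) + b * Real.log (b/(a+b))|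
      ≤ 3 * ((2*U) * (|Real.log L| + |Real.log (2*U)|)) := by
  have hab : 0 < a + b := by linarith
  have heq : a * Real.log (a/(a+b)) + b * Real.log (b/(a+b))
      = a * Real.log a + b * Real.log b - (a + b) * Real.log (a + b) := by
    rw [Real.log_div (by linarith) hab.ne', Real.log_div (by linarith) hab.ne']; ring
  rw [heq]; exact auxPhiBound hL ha1 ha2 hb1 hb2

private lemma auxEntropy {a b : ℝ} (ha : 0 < a) (hb : 0 < b) :
    a * Real.log (a/(a+b)) + b * Real.log (b/(a+b))
      = a * Real.log a + b * Real.log b - (a+b) * Real.log (a+b) := by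
  have hab : 0 < a + b := by linarith
  rw [Real.log_div ha.ne' hab.ne', Real.log_div hb.ne' hab.ne']; ring

private lemma auxDerivT (u v0 dv t₀ : ℝ) (hu : 0 < u) (hv : 0 < v0 + t₀ * dv) :
    HasDerivAt (fun t => u * Real.log u + (v0 + t*dv) * Real.log (v0 + t*dv)
      - (u + (v0 + t*dv)) * Real.log (u + (v0 + t*dv)))
      (dv * (Real.log (v0 + t₀*dv) - Real.log (u + (v0 + t₀*dv)))) t₀ := by
  have hv' : HasDerivAt (fun t : ℝ => v0 + t*dv) dv t₀ := by
    simpa using ((hasDerivAt_id t₀).mul_const dv).const_add v0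
  have h1 : HasDerivAt (fun t => (v0 + t*dv) * Real.log (v0 + t*dv))
      ((Real.log (v0 + t₀*dv) + 1) * dv) t₀ :=
    by have := (Real.hasDerivAt_mul_log hv.ne').comp t₀ hv'; exact this
  have hv2 : HasDerivAt (fun t : ℝ => u + (v0 + t*dv)) dv t₀ := hv'.const_add u
  have h2 : HasDerivAt (fun t => (u + (v0 + t*dv)) * Real.log (u + (v0 + t*dv)))
      ((Real.log (u + (v0 + t₀*dv)) + 1) * dv) t₀ :=
    (Real.hasDerivAt_mul_log (by positivity)).comp t₀ hv2
  have h := (h1.const_add (u * Real.log u)).sub h2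
  exact h.congr_deriv (by ring)

private lemma auxDerivS (iv xv dxi piv dpi pv dp s₀ : ℝ) (hd : piv + s₀*dpi ≠ 0)
    (hsum : (iv/(piv + s₀*dpi)) * (xv - (xv + s₀*dxi)) + (xv + s₀*dxi) + pv ≠ 0) :
    HasDerivAt (fun s => dp * (Real.log pv
        - Real.log ((iv/(piv + s*dpi)) * (xv - (xv + s*dxi)) + (xv + s*dxi) + pv)))
      (dp * (0 - (dxi - iv*dxi*piv/(piv + s₀*dpi)^2)
        / ((iv/(piv + s₀*dpi)) * (xv - (xv + s₀*dxi)) + (xv + s₀*dxi) + pv))) s₀ := by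
  have hlin : ∀ b k : ℝ, HasDerivAt (fun s : ℝ => b + s*k) k s₀ := fun b k => by
    simpa using ((hasDerivAt_id s₀).mul_const k).const_add b
  have hN : HasDerivAt (fun s : ℝ => iv * (xv - (xv + s*dxi))) (iv * (-dxi)) s₀ :=
    ((hlin xv dxi).const_sub xv).const_mul iv
  have hden : HasDerivAt (fun s : ℝ => piv + s*dpi) dpi s₀ := hlin piv dpi
  have hdiv := hN.div hden hd
  have hg : HasDerivAt (fun s : ℝ =>
      (iv/(piv + s*dpi)) * (xv - (xv + s*dxi)) + (xv + s*dxi) + pv)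
      (dxi - iv*dxi*piv/(piv + s₀*dpi)^2) s₀ := by
    have heq : (fun s : ℝ => (iv/(piv + s*dpi)) * (xv - (xv + s*dxi)) + (xv + s*dxi) + pv)
        = fun s : ℝ => iv * (xv - (xv + s*dxi)) / (piv + s*dpi) + ((xv + s*dxi) + pv) := by
      funext s; ring
    rw [heq]
    have h := hdiv.add ((hlin xv dxi).add_const pv)
    exact h.congr_deriv (by field_simp; ring)
  have hlog := hg.log hsum
  have h := (hlog.const_sub (Real.log pv)).const_mul dp
  exact h.congr_deriv (by ring)

private lemma auxClose {iv xv dxi piv dpi s c C eps : ℝ}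
    (hi : iv = 0 ∨ iv = 1) (heps : 0 < eps) (heps1 : eps ≤ 1) (hc : 0 < c)
    (hpi1 : eps ≤ piv) (hdpi : |dpi| ≤ 1) (hdxi : |dxi| ≤ C - c)
    (hs1 : |s| ≤ eps/2) (hs2 : |s| ≤ c*eps/(8*(C - c + 1))) :
    eps/2 ≤ piv + s*dpi ∧
    |(iv/(piv + s*dpi)) * (xv - (xv + s*dxi)) + (xv + s*dxi) - xv| ≤ c/2 := by
  have hK0 : 0 ≤ C - c := le_trans (abs_nonneg _) hdxi
  have hsdpi : |s*dpi| ≤ eps/2 := by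
    rw [abs_mul]
    calc |s| * |dpi| ≤ (eps/2) * 1 :=
          mul_le_mul hs1 hdpi (abs_nonneg _) (by linarith)
      _ = eps/2 := by ring
  have hd : eps/2 ≤ piv + s*dpi := by
    have := neg_abs_le (s*dpi); linarith
  have hdpos : 0 < piv + s*dpi := lt_of_lt_of_le (by linarith) hd
  refine ⟨hd, ?_⟩
  have hsd : |s*dxi| ≤ c*eps/8 := by
    rw [abs_mul]
    have h1 : |s| * |dxi| ≤ (c*eps/(8*(C - c + 1))) * (C - c) :=
      mul_le_mul hs2 hdxi (abs_nonneg _) (by positivity)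
    have h2 : (c*eps/(8*(C - c + 1))) * (C - c + 1) = c*eps/8 := by
      field_simp
    have h3 : (c*eps/(8*(C - c + 1))) * (C - c) ≤ (c*eps/(8*(C - c + 1))) * (C - c + 1) := by
      have : (0:ℝ) ≤ c*eps/(8*(C - c + 1)) := by positivity
      nlinarith
    linarith
  have hivd : |iv/(piv + s*dpi)| ≤ 2/eps := by
    have hnn : 0 ≤ iv/(piv + s*dpi) := by
      rcases hi with h | h <;> rw [h] <;> positivity
    rw [abs_of_nonneg hnn]
    rw [div_le_div_iff₀ hdpos heps]
    rcases hi with h | h <;> rw [h] <;> nlinarith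
  have heq : (iv/(piv + s*dpi)) * (xv - (xv + s*dxi)) + (xv + s*dxi) - xv
      = (iv/(piv + s*dpi)) * (-(s*dxi)) + s*dxi := by ring
  rw [heq]
  have h1 : |(iv/(piv + s*dpi)) * (-(s*dxi))| ≤ (2/eps) * (c*eps/8) := by
    rw [abs_mul, abs_neg]
    exact mul_le_mul hivd hsd (abs_nonneg _) (by positivity)
  have h2 : (2/eps) * (c*eps/8) = c/4 := by field_simp; ring
  have h3 : c*eps/8 ≤ c/8 := by nlinarith
  calc |(iv/(piv + s*dpi)) * (-(s*dxi)) + s*dxi|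
      ≤ |(iv/(piv + s*dpi)) * (-(s*dxi))| + |s*dxi| := abs_add_le _ _
    _ ≤ c/4 + c/8 := by rw [h2] at h1; linarith
    _ ≤ c/2 := by linarith

private lemma auxDerivSBound {iv xv dxi piv dpi pv dp s c C eps : ℝ}
    (hi : iv = 0 ∨ iv = 1) (heps : 0 < eps) (hc : 0 < c)
    (hpiv : 0 ≤ piv) (hpi2 : piv ≤ 1) (hdxi : |dxi| ≤ C - c)
    (hdp : |dp| ≤ C - c) (hpv : c ≤ pv)
    (hxi : c/2 ≤ (iv/(piv + s*dpi)) * (xv - (xv + s*dxi)) + (xv + s*dxi))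
    (hd : eps/2 ≤ piv + s*dpi) :
    |dp * (0 - (dxi - iv*dxi*piv/(piv + s*dpi)^2)
      / ((iv/(piv + s*dpi)) * (xv - (xv + s*dxi)) + (xv + s*dxi) + pv))|
      ≤ (C - c) * (((C - c) + 4*(C - c)/eps^2) / c) := by
  have hK0 : 0 ≤ C - c := le_trans (abs_nonneg _) hdxi
  have hdpos : 0 < piv + s*dpi := lt_of_lt_of_le (by linarith) hd
  have hd2 : eps^2/4 ≤ (piv + s*dpi)^2 := by nlinarith
  have hiv1 : |iv| ≤ 1 := by rcases hi with h | h <;> rw [h] <;> norm_num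
  have hnum2 : |iv*dxi*piv/(piv + s*dpi)^2| ≤ 4*(C - c)/eps^2 := by
    rw [abs_div]
    have h1 : |iv*dxi*piv| ≤ C - c := by
      rw [abs_mul, abs_mul]
      calc |iv| * |dxi| * |piv| ≤ 1 * (C - c) * 1 := by
            apply mul_le_mul (mul_le_mul hiv1 hdxi (abs_nonneg _) (by norm_num)) _
              (abs_nonneg _) (by nlinarith)
            rw [abs_of_nonneg hpiv]; exact hpi2
        _ = C - c := by ring
    have h2 : eps^2/4 ≤ |(piv + s*dpi)^2| := by
      rw [abs_of_nonneg (sq_nonneg _)]; exact hd2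
    calc |iv*dxi*piv| / |(piv + s*dpi)^2| ≤ (C - c) / (eps^2/4) :=
          div_le_div₀ hK0 h1 (by positivity) h2
      _ = 4*(C - c)/eps^2 := by field_simp
  have hnum : |dxi - iv*dxi*piv/(piv + s*dpi)^2| ≤ (C - c) + 4*(C - c)/eps^2 := by
    calc |dxi - iv*dxi*piv/(piv + s*dpi)^2|
        ≤ |dxi| + |iv*dxi*piv/(piv + s*dpi)^2| := abs_sub _ _
      _ ≤ _ := by linarith
  have hden : c ≤ |(iv/(piv + s*dpi)) * (xv - (xv + s*dxi)) + (xv + s*dxi) + pv| := by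
    rw [abs_of_nonneg (by linarith)]; linarith
  rw [abs_mul, zero_sub, abs_neg, abs_div]
  apply mul_le_mul hdp _ (by positivity) hK0
  exact div_le_div₀ (by positivity) hnum hc hden
/-- Neyman-orthogonality of the GDR risk for conditional GANs (with the optimal
discriminator plugged in): with perturbed nuisances `π_s := π_a + s(π̂ − π_a)`,
`ξ_s := ξ + s(ξ̂ − ξ)`, perturbed pseudo-density
`ξ̃_s(X, A, y) := (𝟙{A = a}/π_s(X))(ξ(y|X) − ξ_s(y|X)) + ξ_s(y|X)`, and perturbed target
`p_t := p* + t(p − p*)`, the risk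
`G(s, t) := E[∫ (ξ̃_s log(ξ̃_s/(ξ̃_s + p_t)) + p_t log(p_t/(ξ̃_s + p_t))) dν]`
is well defined for `|s|, |t| < δ` (some δ > 0) and the mixed pathwise derivative vanishes:
`(d/ds)|₀ (d/dt)|₀ G(s, t) = 0`. -/
theorem gdr_neyman_orthogonality_cgan
    {Ω : Type*} [MeasurableSpace Ω]
    (P : Measure Ω) [IsProbabilityMeasure P]
    {𝒳 : Type*} [MeasurableSpace 𝒳] [StandardBorelSpace 𝒳]
    {𝒴 : Type*} [MeasurableSpace 𝒴] [StandardBorelSpace 𝒴]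
    (X : Ω → 𝒳) (hX : Measurable X)
    (A : Ω → Bool) (hA : Measurable A)
    (Y : Ω → 𝒴) (hY : Measurable Y)
    (a : Bool)
    -- propensity score: σ(X)-measurable version of E[𝟙{A = a} | σ(X)]
    (π : 𝒳 → ℝ) (hπmeas : Measurable π)
    (hπver : P[fun ω => (if A ω = a then (1 : ℝ) else 0) |
        MeasurableSpace.comap X inferInstance] =ᵐ[P] fun ω => π (X ω))
    -- strong overlap
    (ε : ℝ) (hε : 0 < ε)
    (hoverlap : ∀ᵐ ω ∂P, ε ≤ π (X ω) ∧ π (X ω) ≤ 1 - ε)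
    -- density setup
    (ν : Measure 𝒴) [IsFiniteMeasure ν]
    (c C : ℝ) (hc : 0 < c) (hcC : c ≤ C)
    (ξ : 𝒴 × 𝒳 → ℝ) (hξmeas : Measurable ξ)
    (hξmem : ∀ q, ξ q ∈ Set.Icc c C)
    (hξnorm : ∀ x, ∫ y, ξ (y, x) ∂ν = 1)
    -- ξ is the conditional outcome density
    (hξdens : ∀ f : 𝒴 × 𝒳 → ℝ, Measurable f → (∃ B : ℝ, ∀ q, |f q| ≤ B) →
      ∫ ω, (if A ω = a then (1 : ℝ) else 0) * f (Y ω, X ω) ∂P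
        = ∫ ω, π (X ω) * ∫ y, f (y, X ω) * ξ (y, X ω) ∂ν ∂P)
    -- nuisance estimates
    (πh : 𝒳 → ℝ) (hπhmeas : Measurable πh) (hπhmem : ∀ x, πh x ∈ Set.Icc ε 1)
    (ξh : 𝒴 × 𝒳 → ℝ) (hξhmeas : Measurable ξh)
    (hξhmem : ∀ q, ξh q ∈ Set.Icc c C)
    (hξhnorm : ∀ x, ∫ y, ξh (y, x) ∂ν = 1)
    -- candidate generator densities of the target model class
    (pstar p : 𝒴 × 𝒳 → ℝ)
    (hpstarmeas : Measurable pstar) (hpstarmem : ∀ q, pstar q ∈ Set.Icc c C)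
    (hpstarnorm : ∀ x, ∫ y, pstar (y, x) ∂ν = 1)
    (hpmeas : Measurable p) (hpmem : ∀ q, p q ∈ Set.Icc c C)
    (hpnorm : ∀ x, ∫ y, p (y, x) ∂ν = 1) :
    -- perturbed pseudo-density ξ̃_s and perturbed target p_t
    ∀ (ξt : ℝ → Ω → 𝒴 → ℝ) (pt : ℝ → Ω → 𝒴 → ℝ),
      (∀ s ω y, ξt s ω y =
        ((if A ω = a then (1 : ℝ) else 0) / (π (X ω) + s * (πh (X ω) - π (X ω))))
          * (ξ (y, X ω) - (ξ (y, X ω) + s * (ξh (y, X ω) - ξ (y, X ω))))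
        + (ξ (y, X ω) + s * (ξh (y, X ω) - ξ (y, X ω)))) →
      (∀ t ω y, pt t ω y = pstar (y, X ω) + t * (p (y, X ω) - pstar (y, X ω))) →
      ∃ δ > (0 : ℝ),
        -- G is well defined for |s|, |t| < δ
        (∀ s t : ℝ, |s| < δ → |t| < δ →
          Integrable (fun ω => ∫ y,
            ξt s ω y * Real.log (ξt s ω y / (ξt s ω y + pt t ω y))
            + pt t ω y * Real.log (pt t ω y / (ξt s ω y + pt t ω y)) ∂ν) P)
        ∧
        ∃ D : ℝ → ℝ,
          (∀ s : ℝ, |s| < δ →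
            HasDerivAt (fun t : ℝ => ∫ ω, ∫ y,
              ξt s ω y * Real.log (ξt s ω y / (ξt s ω y + pt t ω y))
              + pt t ω y * Real.log (pt t ω y / (ξt s ω y + pt t ω y)) ∂ν ∂P) (D s) 0)
          ∧ HasDerivAt D 0 0 := by
  intro ξt pt hξt hpt
  -- basic constants
  obtain ⟨ω₀, hω₁, hω₂⟩ := hoverlap.exists
  have hε1 : ε ≤ 1 := by linarith
  set δ : ℝ := min (ε/2) (c*ε/(8*(C - c + 1))) with hδdef
  have hδpos : 0 < δ := lt_min (by positivity) (div_pos (by positivity) (by linarith))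
  have hδs : ∀ s : ℝ, |s| < δ → |s| ≤ ε/2 ∧ |s| ≤ c*ε/(8*(C - c + 1)) :=
    fun s hs => ⟨le_trans hs.le (min_le_left _ _), le_trans hs.le (min_le_right _ _)⟩
  have hii : ∀ ω, (if A ω = a then (1:ℝ) else 0) = 0 ∨ (if A ω = a then (1:ℝ) else 0) = 1 :=
    fun ω => by by_cases h : A ω = a <;> simp [h]
  have hdpi1 : ∀ ω, ε ≤ π (X ω) → π (X ω) ≤ 1 - ε → |πh (X ω) - π (X ω)| ≤ 1 := by
    intro ω h1 h2
    rw [abs_le]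
    constructor
    · linarith [(hπhmem (X ω)).1]
    · linarith [(hπhmem (X ω)).2]
  have hdxiB : ∀ q : 𝒴 × 𝒳, |ξh q - ξ q| ≤ C - c := fun q => abs_le.2
    ⟨by linarith [(hξhmem q).1, (hξmem q).2], by linarith [(hξhmem q).2, (hξmem q).1]⟩
  have hdppB : ∀ q : 𝒴 × 𝒳, |p q - pstar q| ≤ C - c := fun q => abs_le.2
    ⟨by linarith [(hpmem q).1, (hpstarmem q).2], by linarith [(hpmem q).2, (hpstarmem q).1]⟩
  -- pointwise bounds on the perturbed pseudo-density
  have hXiB : ∀ s : ℝ, |s| < δ → ∀ ω, ε ≤ π (X ω) → π (X ω) ≤ 1 - ε → ∀ y,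
      (ε/2 ≤ π (X ω) + s * (πh (X ω) - π (X ω))) ∧
      c/2 ≤ ξt s ω y ∧ ξt s ω y ≤ C + c/2 := by
    intro s hs ω h1 h2 y
    obtain ⟨hs1, hs2⟩ := hδs s hs
    have hcl := auxClose (xv := ξ (y, X ω)) (hii ω) hε hε1 hc h1 (hdpi1 ω h1 h2)
      (hdxiB (y, X ω)) hs1 hs2
    refine ⟨hcl.1, ?_⟩
    have hab := abs_le.1 hcl.2
    rw [hξt]
    constructor
    · linarith [(hξmem (y, X ω)).1, hab.1]
    · linarith [(hξmem (y, X ω)).2, hab.2]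
  -- pointwise bounds on the perturbed target
  have hPtB : ∀ t : ℝ, |t| < δ → ∀ ω y, c/2 ≤ pt t ω y ∧ pt t ω y ≤ C + c/2 := by
    intro t ht ω y
    obtain ⟨hs1, hs2⟩ := hδs t ht
    have hcl := (auxClose (iv := 0) (xv := pstar (y, X ω)) (dxi := p (y, X ω) - pstar (y, X ω))
      (piv := ε) (dpi := 0) (Or.inl rfl) hε hε1 hc le_rfl (by norm_num)
      (hdppB (y, X ω)) hs1 hs2).2
    simp only [zero_div, zero_mul, zero_add] at hcl
    have hab := abs_le.1 hcl
    rw [hpt]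
    constructor
    · linarith [(hpstarmem (y, X ω)).1, hab.1]
    · linarith [(hpstarmem (y, X ω)).2, hab.2]
  -- good set on the product space
  have hSμ : ∀ᵐ z ∂(P.prod ν), ε ≤ π (X z.1) ∧ π (X z.1) ≤ 1 - ε :=
    Measure.quasiMeasurePreserving_fst.tendsto_ae.eventually hoverlap
  -- measurability
  have hι : Measurable (fun ω => if A ω = a then (1:ℝ) else 0) :=
    Measurable.ite (hA (measurableSet_singleton a)) measurable_const measurable_const
  have hι2 : Measurable (fun z : Ω × 𝒴 => if A z.1 = a then (1:ℝ) else 0) :=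
    hι.comp measurable_fst
  have hm : Measurable (fun z : Ω × 𝒴 => (z.2, X z.1)) :=
    measurable_snd.prodMk (hX.comp measurable_fst)
  have hπ2 : Measurable (fun z : Ω × 𝒴 => π (X z.1)) := (hπmeas.comp hX).comp measurable_fst
  have hπh2 : Measurable (fun z : Ω × 𝒴 => πh (X z.1)) := (hπhmeas.comp hX).comp measurable_fst
  have hξ2 : Measurable (fun z : Ω × 𝒴 => ξ (z.2, X z.1)) := hξmeas.comp hm
  have hξh2 : Measurable (fun z : Ω × 𝒴 => ξh (z.2, X z.1)) := hξhmeas.comp hm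
  have hps2 : Measurable (fun z : Ω × 𝒴 => pstar (z.2, X z.1)) := hpstarmeas.comp hm
  have hp2 : Measurable (fun z : Ω × 𝒴 => p (z.2, X z.1)) := hpmeas.comp hm
  have hΞm : ∀ s : ℝ, Measurable (fun z : Ω × 𝒴 => ξt s z.1 z.2) := by
    intro s
    have heq : (fun z : Ω × 𝒴 => ξt s z.1 z.2) = fun z : Ω × 𝒴 =>
        ((if A z.1 = a then (1:ℝ) else 0) / (π (X z.1) + s * (πh (X z.1) - π (X z.1))))
          * (ξ (z.2, X z.1) - (ξ (z.2, X z.1) + s * (ξh (z.2, X z.1) - ξ (z.2, X z.1))))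
        + (ξ (z.2, X z.1) + s * (ξh (z.2, X z.1) - ξ (z.2, X z.1))) := by
      funext z; exact hξt s z.1 z.2
    rw [heq]
    exact ((hι2.div (hπ2.add ((hπh2.sub hπ2).const_mul s))).mul
      (hξ2.sub (hξ2.add ((hξh2.sub hξ2).const_mul s)))).add
      (hξ2.add ((hξh2.sub hξ2).const_mul s))
  have hPm : ∀ t : ℝ, Measurable (fun z : Ω × 𝒴 => pt t z.1 z.2) := by
    intro t
    have heq : (fun z : Ω × 𝒴 => pt t z.1 z.2) = fun z : Ω × 𝒴 =>
        pstar (z.2, X z.1) + t * (p (z.2, X z.1) - pstar (z.2, X z.1)) := by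
      funext z; exact hpt t z.1 z.2
    rw [heq]
    exact hps2.add ((hp2.sub hps2).const_mul t)
  refine ⟨δ, hδpos, ?_, ?_⟩
  · -- well-definedness (integrability) of G
    intro s t hs ht
    have hmeasF : Measurable (fun z : Ω × 𝒴 =>
        ξt s z.1 z.2 * Real.log (ξt s z.1 z.2 / (ξt s z.1 z.2 + pt t z.1 z.2))
        + pt t z.1 z.2 * Real.log (pt t z.1 z.2 / (ξt s z.1 z.2 + pt t z.1 z.2))) :=
      ((hΞm s).mul (Real.measurable_log.comp ((hΞm s).div ((hΞm s).add (hPm t))))).add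
        ((hPm t).mul (Real.measurable_log.comp ((hPm t).div ((hΞm s).add (hPm t)))))
    apply Integrable.mono' (integrable_const
      ((3 * ((2*(C + c/2)) * (|Real.log (c/2)| + |Real.log (2*(C + c/2))|)))
        * (ν Set.univ).toReal))
    · exact (hmeasF.stronglyMeasurable.integral_prod_right').aestronglyMeasurable
    · filter_upwards [hoverlap] with ω hω
      apply norm_integral_le_of_norm_le_const
      filter_upwards with y
      rw [Real.norm_eq_abs]
      exact auxOrigBound (by positivity) (hXiB s hs ω hω.1 hω.2 y).2.1
        (hXiB s hs ω hω.1 hω.2 y).2.2 (hPtB t ht ω y).1 (hPtB t ht ω y).2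
  · -- existence of the (mixed) derivative
    have hc2 : (0:ℝ) < c/2 := by positivity
    have hPhiMeas : ∀ s t : ℝ, Measurable (fun z : Ω × 𝒴 =>
        ξt s z.1 z.2 * Real.log (ξt s z.1 z.2) + pt t z.1 z.2 * Real.log (pt t z.1 z.2)
        - (ξt s z.1 z.2 + pt t z.1 z.2) * Real.log (ξt s z.1 z.2 + pt t z.1 z.2)) := by
      intro s t
      exact (((hΞm s).mul (Real.measurable_log.comp (hΞm s))).add
        ((hPm t).mul (Real.measurable_log.comp (hPm t)))).sub
        (((hΞm s).add (hPm t)).mul (Real.measurable_log.comp ((hΞm s).add (hPm t))))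
    have hIntPhi : ∀ s t : ℝ, |s| < δ → |t| < δ →
        Integrable (fun z : Ω × 𝒴 =>
          ξt s z.1 z.2 * Real.log (ξt s z.1 z.2) + pt t z.1 z.2 * Real.log (pt t z.1 z.2)
          - (ξt s z.1 z.2 + pt t z.1 z.2) * Real.log (ξt s z.1 z.2 + pt t z.1 z.2))
          (P.prod ν) := by
      intro s t hs ht
      apply Integrable.mono' (integrable_const
        (3 * ((2*(C + c/2)) * (|Real.log (c/2)| + |Real.log (2*(C + c/2))|))))
      · exact (hPhiMeas s t).aestronglyMeasurable
      · filter_upwards [hSμ] with z hz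
        rw [Real.norm_eq_abs]
        exact auxPhiBound hc2 (hXiB s hs z.1 hz.1 hz.2 z.2).2.1 (hXiB s hs z.1 hz.1 hz.2 z.2).2.2
          (hPtB t ht z.1 z.2).1 (hPtB t ht z.1 z.2).2
    have hGeq : ∀ s t : ℝ, |s| < δ → |t| < δ →
        (∫ ω, ∫ y, ξt s ω y * Real.log (ξt s ω y / (ξt s ω y + pt t ω y))
          + pt t ω y * Real.log (pt t ω y / (ξt s ω y + pt t ω y)) ∂ν ∂P)
        = ∫ z : Ω × 𝒴, (ξt s z.1 z.2 * Real.log (ξt s z.1 z.2)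
            + pt t z.1 z.2 * Real.log (pt t z.1 z.2)
            - (ξt s z.1 z.2 + pt t z.1 z.2) * Real.log (ξt s z.1 z.2 + pt t z.1 z.2))
            ∂(P.prod ν) := by
      intro s t hs ht
      rw [integral_prod _ (hIntPhi s t hs ht)]
      apply integral_congr_ae
      filter_upwards [hoverlap] with ω hω
      apply integral_congr_ae
      filter_upwards with y
      exact auxEntropy (lt_of_lt_of_le hc2 (hXiB s hs ω hω.1 hω.2 y).2.1)
        (lt_of_lt_of_le hc2 (hPtB t ht ω y).1)
    refine ⟨fun s => ∫ z : Ω × 𝒴, (p (z.2, X z.1) - pstar (z.2, X z.1)) *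
        (Real.log (pstar (z.2, X z.1)) - Real.log (ξt s z.1 z.2 + pstar (z.2, X z.1)))
        ∂(P.prod ν), ?_, ?_⟩
    · -- the t-derivative at 0
      intro s hs
      have key := hasDerivAt_integral_of_dominated_loc_of_deriv_le (μ := P.prod ν)
        (F := fun t (z : Ω × 𝒴) => ξt s z.1 z.2 * Real.log (ξt s z.1 z.2)
            + pt t z.1 z.2 * Real.log (pt t z.1 z.2)
            - (ξt s z.1 z.2 + pt t z.1 z.2) * Real.log (ξt s z.1 z.2 + pt t z.1 z.2))
        (F' := fun t (z : Ω × 𝒴) => (p (z.2, X z.1) - pstar (z.2, X z.1)) *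
            (Real.log (pt t z.1 z.2) - Real.log (ξt s z.1 z.2 + pt t z.1 z.2)))
        (x₀ := (0:ℝ))
        (bound := fun _ => (C - c) * (2 * (|Real.log (c/2)| + |Real.log (2*(C + c/2))|)))
        (Metric.ball_mem_nhds (0:ℝ) hδpos)
        (Filter.Eventually.of_forall fun t => (hPhiMeas s t).aestronglyMeasurable)
        (hIntPhi s 0 hs (by simpa using hδpos))
        (((hp2.sub hps2).mul ((Real.measurable_log.comp (hPm 0)).sub
          (Real.measurable_log.comp ((hΞm s).add (hPm 0))))).aestronglyMeasurable)
        ?_ (integrable_const _) ?_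
      · obtain ⟨-, hkey⟩ := key
        have hD0 : (∫ z : Ω × 𝒴, (p (z.2, X z.1) - pstar (z.2, X z.1)) *
            (Real.log (pt 0 z.1 z.2) - Real.log (ξt s z.1 z.2 + pt 0 z.1 z.2)) ∂(P.prod ν))
            = ∫ z : Ω × 𝒴, (p (z.2, X z.1) - pstar (z.2, X z.1)) *
            (Real.log (pstar (z.2, X z.1)) - Real.log (ξt s z.1 z.2 + pstar (z.2, X z.1)))
            ∂(P.prod ν) := by
          apply integral_congr_ae
          filter_upwards with z
          simp [hpt]
        rw [hD0] at hkey
        apply hkey.congr_of_eventuallyEq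
        filter_upwards [Metric.ball_mem_nhds (0:ℝ) hδpos] with t ht
        have htδ : |t| < δ := by rwa [Metric.mem_ball, Real.dist_eq, sub_zero] at ht
        exact hGeq s t hs htδ
      · -- bound on the t-derivative
        filter_upwards [hSμ] with z hz
        intro t ht
        have htδ : |t| < δ := by rwa [Metric.mem_ball, Real.dist_eq, sub_zero] at ht
        rw [Real.norm_eq_abs, abs_mul]
        have h1 : |p (z.2, X z.1) - pstar (z.2, X z.1)| ≤ C - c := hdppB _
        have hCc : (0:ℝ) ≤ C + c/2 := by linarith
        have hlog1 : |Real.log (pt t z.1 z.2)|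
            ≤ |Real.log (c/2)| + |Real.log (2*(C + c/2))| :=
          auxLog hc2 (hPtB t htδ z.1 z.2).1 (le_trans (hPtB t htδ z.1 z.2).2 (by linarith))
        have hlog2 : |Real.log (ξt s z.1 z.2 + pt t z.1 z.2)|
            ≤ |Real.log (c/2)| + |Real.log (2*(C + c/2))| :=
          auxLog hc2
            (by linarith [(hXiB s hs z.1 hz.1 hz.2 z.2).2.1, (hPtB t htδ z.1 z.2).1])
            (by linarith [(hXiB s hs z.1 hz.1 hz.2 z.2).2.2, (hPtB t htδ z.1 z.2).2])
        have h2 : |Real.log (pt t z.1 z.2) - Real.log (ξt s z.1 z.2 + pt t z.1 z.2)|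
            ≤ 2 * (|Real.log (c/2)| + |Real.log (2*(C + c/2))|) :=
          le_trans (abs_sub _ _) (by linarith)
        exact mul_le_mul h1 h2 (abs_nonneg _) (by linarith)
      · -- pointwise differentiability in t
        filter_upwards [hSμ] with z hz
        intro t ht
        have htδ : |t| < δ := by rwa [Metric.mem_ball, Real.dist_eq, sub_zero] at ht
        have hu : 0 < ξt s z.1 z.2 :=
          lt_of_lt_of_le hc2 (hXiB s hs z.1 hz.1 hz.2 z.2).2.1
        have hv : 0 < pstar (z.2, X z.1) + t * (p (z.2, X z.1) - pstar (z.2, X z.1)) := by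
          have h := (hPtB t htδ z.1 z.2).1
          rw [hpt] at h
          linarith
        simp only [hpt]
        exact auxDerivT _ _ _ t hu hv
    · -- the s-derivative of D at 0 vanishes
      have hc2 : (0:ℝ) < c/2 := by positivity
      have h0δ : |(0:ℝ)| < δ := by simpa using hδpos
      have hF2meas : ∀ s : ℝ, Measurable (fun z : Ω × 𝒴 =>
          (p (z.2, X z.1) - pstar (z.2, X z.1)) *
          (Real.log (pstar (z.2, X z.1)) - Real.log (ξt s z.1 z.2 + pstar (z.2, X z.1)))) :=
        fun s => (hp2.sub hps2).mul ((Real.measurable_log.comp hps2).sub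
          (Real.measurable_log.comp ((hΞm s).add hps2)))
      have hF2'meas : ∀ s : ℝ, Measurable (fun z : Ω × 𝒴 =>
          (p (z.2, X z.1) - pstar (z.2, X z.1)) *
          (0 - ((ξh (z.2, X z.1) - ξ (z.2, X z.1))
              - (if A z.1 = a then (1:ℝ) else 0) * (ξh (z.2, X z.1) - ξ (z.2, X z.1)) * π (X z.1)
                / (π (X z.1) + s * (πh (X z.1) - π (X z.1)))^2)
            / (ξt s z.1 z.2 + pstar (z.2, X z.1)))) := by
        intro s
        exact (hp2.sub hps2).mul (measurable_const.sub
          (((hξh2.sub hξ2).sub (((hι2.mul (hξh2.sub hξ2)).mul hπ2).div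
            ((hπ2.add ((hπh2.sub hπ2).const_mul s)).pow_const 2))).div ((hΞm s).add hps2)))
      have hF2int : ∀ s : ℝ, |s| < δ → Integrable (fun z : Ω × 𝒴 =>
          (p (z.2, X z.1) - pstar (z.2, X z.1)) *
          (Real.log (pstar (z.2, X z.1)) - Real.log (ξt s z.1 z.2 + pstar (z.2, X z.1))))
          (P.prod ν) := by
        intro s hs
        apply Integrable.mono' (integrable_const
          ((C - c) * (2 * (|Real.log (c/2)| + |Real.log (2*(C + c/2))|))))
        · exact (hF2meas s).aestronglyMeasurable
        · filter_upwards [hSμ] with z hz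
          rw [Real.norm_eq_abs, abs_mul]
          have h1 : |p (z.2, X z.1) - pstar (z.2, X z.1)| ≤ C - c := hdppB _
          have hlog1 : |Real.log (pstar (z.2, X z.1))|
              ≤ |Real.log (c/2)| + |Real.log (2*(C + c/2))| :=
            auxLog hc2 (by linarith [(hpstarmem (z.2, X z.1)).1])
              (by linarith [(hpstarmem (z.2, X z.1)).2])
          have hlog2 : |Real.log (ξt s z.1 z.2 + pstar (z.2, X z.1))|
              ≤ |Real.log (c/2)| + |Real.log (2*(C + c/2))| :=
            auxLog hc2
              (by linarith [(hXiB s hs z.1 hz.1 hz.2 z.2).2.1, (hpstarmem (z.2, X z.1)).1])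
              (by linarith [(hXiB s hs z.1 hz.1 hz.2 z.2).2.2, (hpstarmem (z.2, X z.1)).2])
          have h2 : |Real.log (pstar (z.2, X z.1)) - Real.log (ξt s z.1 z.2 + pstar (z.2, X z.1))|
              ≤ 2 * (|Real.log (c/2)| + |Real.log (2*(C + c/2))|) :=
            le_trans (abs_sub _ _) (by linarith)
          exact mul_le_mul h1 h2 (abs_nonneg _) (by linarith)
      have key2 := hasDerivAt_integral_of_dominated_loc_of_deriv_le (μ := P.prod ν)
        (F := fun s (z : Ω × 𝒴) => (p (z.2, X z.1) - pstar (z.2, X z.1)) *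
            (Real.log (pstar (z.2, X z.1)) - Real.log (ξt s z.1 z.2 + pstar (z.2, X z.1))))
        (F' := fun s (z : Ω × 𝒴) => (p (z.2, X z.1) - pstar (z.2, X z.1)) *
            (0 - ((ξh (z.2, X z.1) - ξ (z.2, X z.1))
                - (if A z.1 = a then (1:ℝ) else 0) * (ξh (z.2, X z.1) - ξ (z.2, X z.1)) * π (X z.1)
                  / (π (X z.1) + s * (πh (X z.1) - π (X z.1)))^2)
              / (ξt s z.1 z.2 + pstar (z.2, X z.1))))
        (x₀ := (0:ℝ))
        (bound := fun _ => (C - c) * (((C - c) + 4*(C - c)/ε^2) / c))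
        (Metric.ball_mem_nhds (0:ℝ) hδpos)
        (Filter.Eventually.of_forall fun s => (hF2meas s).aestronglyMeasurable)
        (hF2int 0 h0δ)
        ((hF2'meas 0).aestronglyMeasurable)
        ?_ (integrable_const _) ?_
      · obtain ⟨hint2, hkey2⟩ := key2
        -- The derivative value vanishes.
        -- inner kernel bound
        have hqB : ∀ q : 𝒴 × 𝒳, |(p q - pstar q) * (ξh q - ξ q) / (ξ q + pstar q)|
            ≤ (C - c) * (C - c) / (c + c) := by
          intro q
          rw [abs_div, abs_mul]
          refine div_le_div₀ (mul_nonneg (by linarith) (by linarith))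
            (mul_le_mul (hdppB q) (hdxiB q) (abs_nonneg _) (by linarith)) (by linarith)
            (le_trans (by linarith [(hξmem q).1, (hpstarmem q).1]) (le_abs_self _))
        have hqmeas : Measurable (fun q : 𝒴 × 𝒳 =>
            (p q - pstar q) * (ξh q - ξ q) / (ξ q + pstar q)) :=
          ((hpmeas.sub hpstarmeas).mul (hξhmeas.sub hξmeas)).div (hξmeas.add hpstarmeas)
        have hgm : Measurable (fun x : 𝒳 =>
            ∫ y, (p (y, x) - pstar (y, x)) * (ξh (y, x) - ξ (y, x))
              / (ξ (y, x) + pstar (y, x)) ∂ν) :=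
          hqmeas.stronglyMeasurable.integral_prod_left'.measurable
        have hgB : ∀ x : 𝒳, |∫ y, (p (y, x) - pstar (y, x)) * (ξh (y, x) - ξ (y, x))
            / (ξ (y, x) + pstar (y, x)) ∂ν| ≤ (C - c) * (C - c) / (c + c) * (ν Set.univ).toReal := by
          intro x
          rw [← Real.norm_eq_abs]
          apply norm_integral_le_of_norm_le_const
          filter_upwards with y
          rw [Real.norm_eq_abs]
          exact hqB (y, x)
        have hgπB : ∀ x : 𝒳, |(∫ y, (p (y, x) - pstar (y, x)) * (ξh (y, x) - ξ (y, x))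
            / (ξ (y, x) + pstar (y, x)) ∂ν) / max (π x) ε|
            ≤ (C - c) * (C - c) / (c + c) * (ν Set.univ).toReal / ε := by
          intro x
          rw [abs_div]
          exact div_le_div₀ (mul_nonneg (div_nonneg (mul_nonneg (by linarith) (by linarith))
            (by linarith)) ENNReal.toReal_nonneg) (hgB x) hε
            (le_trans (le_max_right _ _) (le_abs_self _))
        -- the density identity from hξdens
        have hkey3 := hξdens (fun q : 𝒴 × 𝒳 =>
            (∫ y, (p (y, q.2) - pstar (y, q.2)) * (ξh (y, q.2) - ξ (y, q.2))
              / (ξ (y, q.2) + pstar (y, q.2)) ∂ν) / max (π q.2) ε)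
          ((hgm.comp measurable_snd).div ((hπmeas.max measurable_const).comp measurable_snd))
          ⟨(C - c) * (C - c) / (c + c) * (ν Set.univ).toReal / ε, fun q => hgπB q.2⟩
        have hLHS : (∫ ω, (if A ω = a then (1:ℝ) else 0) *
            ((∫ y, (p (y, X ω) - pstar (y, X ω)) * (ξh (y, X ω) - ξ (y, X ω))
              / (ξ (y, X ω) + pstar (y, X ω)) ∂ν) / max (π (X ω)) ε) ∂P)
            = ∫ ω, π (X ω) * ∫ y, ((∫ y', (p (y', X ω) - pstar (y', X ω))
                * (ξh (y', X ω) - ξ (y', X ω)) / (ξ (y', X ω) + pstar (y', X ω)) ∂ν)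
                / max (π (X ω)) ε) * ξ (y, X ω) ∂ν ∂P := hkey3
        have hRHS : (∫ ω, π (X ω) * ∫ y, ((∫ y', (p (y', X ω) - pstar (y', X ω))
              * (ξh (y', X ω) - ξ (y', X ω)) / (ξ (y', X ω) + pstar (y', X ω)) ∂ν)
              / max (π (X ω)) ε) * ξ (y, X ω) ∂ν ∂P)
            = ∫ ω, (∫ y, (p (y, X ω) - pstar (y, X ω)) * (ξh (y, X ω) - ξ (y, X ω))
                / (ξ (y, X ω) + pstar (y, X ω)) ∂ν) ∂P := by
          apply integral_congr_ae
          filter_upwards [hoverlap] with ω hω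
          rw [integral_const_mul, hξnorm (X ω), max_eq_left hω.1, mul_one]
          have hπne : π (X ω) ≠ 0 := ne_of_gt (lt_of_lt_of_le hε hω.1)
          field_simp
        have hfinal := hLHS.trans hRHS
        -- integrability of the pieces over P
        have hIi : Integrable (fun ω => (if A ω = a then (1:ℝ) else 0) *
            ((∫ y, (p (y, X ω) - pstar (y, X ω)) * (ξh (y, X ω) - ξ (y, X ω))
              / (ξ (y, X ω) + pstar (y, X ω)) ∂ν) / max (π (X ω)) ε)) P := by
          apply Integrable.mono' (integrable_const
            ((C - c) * (C - c) / (c + c) * (ν Set.univ).toReal / ε))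
          · exact (hι.mul ((hgm.comp hX).div
              ((hπmeas.max measurable_const).comp hX))).aestronglyMeasurable
          · filter_upwards with ω
            rw [Real.norm_eq_abs, abs_mul]
            have h1 : |if A ω = a then (1:ℝ) else 0| ≤ 1 := by
              rcases hii ω with h | h <;> rw [h] <;> norm_num
            calc |if A ω = a then (1:ℝ) else 0| * _ ≤ 1 *
                ((C - c) * (C - c) / (c + c) * (ν Set.univ).toReal / ε) :=
                  mul_le_mul h1 (hgπB (X ω)) (abs_nonneg _) one_pos.le
              _ = _ := one_mul _
        have hIg : Integrable (fun ω => ∫ y, (p (y, X ω) - pstar (y, X ω))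
            * (ξh (y, X ω) - ξ (y, X ω)) / (ξ (y, X ω) + pstar (y, X ω)) ∂ν) P := by
          apply Integrable.mono' (integrable_const
            ((C - c) * (C - c) / (c + c) * (ν Set.univ).toReal))
          · exact (hgm.comp hX).aestronglyMeasurable
          · filter_upwards with ω
            rw [Real.norm_eq_abs]
            exact hgB (X ω)
        -- compute the product integral as an Ω-integral
        have hstep1 : (∫ z : Ω × 𝒴, (p (z.2, X z.1) - pstar (z.2, X z.1)) *
            (0 - ((ξh (z.2, X z.1) - ξ (z.2, X z.1))
                - (if A z.1 = a then (1:ℝ) else 0) * (ξh (z.2, X z.1) - ξ (z.2, X z.1)) * π (X z.1)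
                  / (π (X z.1) + 0 * (πh (X z.1) - π (X z.1)))^2)
              / (ξt 0 z.1 z.2 + pstar (z.2, X z.1))) ∂(P.prod ν))
            = ∫ ω, ((if A ω = a then (1:ℝ) else 0) / π (X ω) - 1) *
                ∫ y, (p (y, X ω) - pstar (y, X ω)) * (ξh (y, X ω) - ξ (y, X ω))
                  / (ξ (y, X ω) + pstar (y, X ω)) ∂ν ∂P := by
          rw [integral_prod _ hint2]
          apply integral_congr_ae
          filter_upwards [hoverlap] with ω hω
          have hπpos : 0 < π (X ω) := lt_of_lt_of_le hε hω.1
          have hptw : ∀ y : 𝒴, (p (y, X ω) - pstar (y, X ω)) *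
              (0 - ((ξh (y, X ω) - ξ (y, X ω))
                  - (if A ω = a then (1:ℝ) else 0) * (ξh (y, X ω) - ξ (y, X ω)) * π (X ω)
                    / (π (X ω) + 0 * (πh (X ω) - π (X ω)))^2)
                / (ξt 0 ω y + pstar (y, X ω)))
              = ((if A ω = a then (1:ℝ) else 0) / π (X ω) - 1) *
                ((p (y, X ω) - pstar (y, X ω)) * (ξh (y, X ω) - ξ (y, X ω))
                  / (ξ (y, X ω) + pstar (y, X ω))) := by
            intro y
            have hξt0 : ξt 0 ω y = ξ (y, X ω) := by rw [hξt]; ring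
            rw [hξt0]
            have hne : ξ (y, X ω) + pstar (y, X ω) ≠ 0 :=
              ne_of_gt (by linarith [(hξmem (y, X ω)).1, (hpstarmem (y, X ω)).1])
            have hπne : π (X ω) ≠ 0 := hπpos.ne'
            simp only [zero_mul, add_zero]
            rcases hii ω with h | h <;> rw [h] <;> field_simp <;> ring
          calc (∫ y, (p (y, X ω) - pstar (y, X ω)) *
              (0 - ((ξh (y, X ω) - ξ (y, X ω))
                  - (if A ω = a then (1:ℝ) else 0) * (ξh (y, X ω) - ξ (y, X ω)) * π (X ω)
                    / (π (X ω) + 0 * (πh (X ω) - π (X ω)))^2)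
                / (ξt 0 ω y + pstar (y, X ω))) ∂ν)
              = ∫ y, ((if A ω = a then (1:ℝ) else 0) / π (X ω) - 1) *
                ((p (y, X ω) - pstar (y, X ω)) * (ξh (y, X ω) - ξ (y, X ω))
                  / (ξ (y, X ω) + pstar (y, X ω))) ∂ν :=
                integral_congr_ae (Filter.Eventually.of_forall hptw)
            _ = ((if A ω = a then (1:ℝ) else 0) / π (X ω) - 1) *
                ∫ y, (p (y, X ω) - pstar (y, X ω)) * (ξh (y, X ω) - ξ (y, X ω))
                  / (ξ (y, X ω) + pstar (y, X ω)) ∂ν := integral_const_mul _ _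
        -- assemble: the integral is zero
        have hzero : (∫ z : Ω × 𝒴, (p (z.2, X z.1) - pstar (z.2, X z.1)) *
            (0 - ((ξh (z.2, X z.1) - ξ (z.2, X z.1))
                - (if A z.1 = a then (1:ℝ) else 0) * (ξh (z.2, X z.1) - ξ (z.2, X z.1)) * π (X z.1)
                  / (π (X z.1) + 0 * (πh (X z.1) - π (X z.1)))^2)
              / (ξt 0 z.1 z.2 + pstar (z.2, X z.1))) ∂(P.prod ν)) = 0 := by
          rw [hstep1]
          have hsplit : ∀ᵐ ω ∂P, ((if A ω = a then (1:ℝ) else 0) / π (X ω) - 1) *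
              (∫ y, (p (y, X ω) - pstar (y, X ω)) * (ξh (y, X ω) - ξ (y, X ω))
                / (ξ (y, X ω) + pstar (y, X ω)) ∂ν)
              = (if A ω = a then (1:ℝ) else 0) *
                ((∫ y, (p (y, X ω) - pstar (y, X ω)) * (ξh (y, X ω) - ξ (y, X ω))
                  / (ξ (y, X ω) + pstar (y, X ω)) ∂ν) / max (π (X ω)) ε)
                - ∫ y, (p (y, X ω) - pstar (y, X ω)) * (ξh (y, X ω) - ξ (y, X ω))
                  / (ξ (y, X ω) + pstar (y, X ω)) ∂ν := by
            filter_upwards [hoverlap] with ω hω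
            rw [max_eq_left hω.1]
            ring
          rw [integral_congr_ae hsplit, integral_sub hIi hIg, hfinal, sub_self]
        rw [hzero] at hkey2
        exact hkey2
      · -- bound on the s-derivative
        filter_upwards [hSμ] with z hz
        intro s hsball
        have hsδ : |s| < δ := by rwa [Metric.mem_ball, Real.dist_eq, sub_zero] at hsball
        rw [Real.norm_eq_abs, hξt]
        have hxi : c/2 ≤ ((if A z.1 = a then (1:ℝ) else 0)
            / (π (X z.1) + s * (πh (X z.1) - π (X z.1))))
            * (ξ (z.2, X z.1) - (ξ (z.2, X z.1) + s * (ξh (z.2, X z.1) - ξ (z.2, X z.1))))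
            + (ξ (z.2, X z.1) + s * (ξh (z.2, X z.1) - ξ (z.2, X z.1))) := by
          have h := (hXiB s hsδ z.1 hz.1 hz.2 z.2).2.1
          rwa [hξt] at h
        exact auxDerivSBound (hii z.1) hε hc (le_trans hε.le hz.1) (by linarith [hz.2])
          (hdxiB _) (hdppB _) (hpstarmem _).1 hxi (hXiB s hsδ z.1 hz.1 hz.2 z.2).1
      · -- pointwise differentiability in s
        filter_upwards [hSμ] with z hz
        intro s hsball
        have hsδ : |s| < δ := by rwa [Metric.mem_ball, Real.dist_eq, sub_zero] at hsball
        have hd : π (X z.1) + s * (πh (X z.1) - π (X z.1)) ≠ 0 :=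
          ne_of_gt (lt_of_lt_of_le (by positivity) (hXiB s hsδ z.1 hz.1 hz.2 z.2).1)
        have hsum0 : ((if A z.1 = a then (1:ℝ) else 0)
            / (π (X z.1) + s * (πh (X z.1) - π (X z.1))))
            * (ξ (z.2, X z.1) - (ξ (z.2, X z.1) + s * (ξh (z.2, X z.1) - ξ (z.2, X z.1))))
            + (ξ (z.2, X z.1) + s * (ξh (z.2, X z.1) - ξ (z.2, X z.1)))
            + pstar (z.2, X z.1) ≠ 0 := by
          have h := (hXiB s hsδ z.1 hz.1 hz.2 z.2).2.1
          rw [hξt] at h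
          exact ne_of_gt (by linarith [(hpstarmem (z.2, X z.1)).1])
        simp only [hξt]
        exact auxDerivS _ _ _ _ _ _ _ s hd hsum0
end
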